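/- arXiv:2503.18493 — 4 statements merged into one kernel-verified Lean document; each statement's English description precedes it below -/
import Mathlib

section
/- Let λ ≥ 1, m ≥ 0, and t ≥ 1 be integers. Then for every integer n ≥ 0, the generalized overcubic partition function satisfies a̅_{2^λ m + t}(n) ≡ a̅_t(n) (mod 2^{λ+1}). -/
/-- The infinite product `(q^h; q^h)_∞ = ∏_{k ≥ 0} (1 - q^{h(k+1)})` as a formal power
series over `R`.  Since the factor `1 - q^{h(k+1)}` only affects coefficients of
degree `≥ k + 1`, the coefficient of `qⁿ` is that of the finite truncated product
over `k < n + 1`. -/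
noncomputable def qPochInf (R : Type*) [CommRing R] (h : ℕ) : PowerSeries R :=
  PowerSeries.mk fun n =>
    PowerSeries.coeff (R := R) n
      (∏ k ∈ Finset.range (n + 1), (1 - PowerSeries.X ^ (h * (k + 1))))

/-- `abar` is the generalized overcubic partition family: for every `c ≥ 1`,
`∑_{n≥0} a̅_c(n) qⁿ = f₄^(c-1) / (f₁² f₂^(2c-3))`, stated multiplied out (both sides
multiplied by `f₁² f₂^(2c-3) · f₂³ = f₁² f₂^(2c) / f₂³`, i.e. as
`(∑ a̅_c(n) qⁿ) · f₁² · f₂^(2c) = f₄^(c-1) · f₂³`) so as to avoid the negative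
exponent `2c - 3 = -1` occurring when `c = 1`; this is equivalent since the `fₕ`
are units in the ring of formal power series. -/
def IsGenOvercubic (abar : ℕ → ℕ → ℕ) : Prop :=
  ∀ c : ℕ, 1 ≤ c →
    (PowerSeries.mk fun n => (abar c n : ℤ)) * qPochInf ℤ 1 ^ 2 * qPochInf ℤ 2 ^ (2 * c) =
      qPochInf ℤ 4 ^ (c - 1) * qPochInf ℤ 2 ^ 3

open PowerSeries Finset

section Aux

variable {R : Type*} [CommRing R] {S : Type*} [CommRing S]

/-- stability of coefficients of truncated products -/
lemma coeff_prod_stable (h : ℕ) (hh : 1 ≤ h) {n N : ℕ} (hn : n < N) :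
    PowerSeries.coeff (R := R) n (∏ k ∈ Finset.range N, (1 - PowerSeries.X ^ (h * (k + 1)))) =
    PowerSeries.coeff (R := R) n (∏ k ∈ Finset.range (n + 1), (1 - PowerSeries.X ^ (h * (k + 1)))) := by
  induction N with
  | zero => omega
  | succ N ih =>
    rcases Nat.lt_or_ge n N with hN | hN
    · have hbig : ¬ (h * (N + 1) ≤ n) := by
        have : N + 1 ≤ h * (N + 1) := Nat.le_mul_of_pos_left _ hh
        omega
      rw [Finset.prod_range_succ, mul_sub, mul_one, map_sub, coeff_mul_X_pow',
        if_neg hbig, sub_zero, ih hN]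
    · have : N = n := by omega
      subst this; rfl

lemma coeff_qPochInf (h : ℕ) (hh : 1 ≤ h) {n N : ℕ} (hn : n < N) :
    PowerSeries.coeff (R := R) n (qPochInf R h) =
    PowerSeries.coeff (R := R) n (∏ k ∈ Finset.range N, (1 - PowerSeries.X ^ (h * (k + 1)))) := by
  rw [qPochInf, coeff_mk, coeff_prod_stable h hh hn]

lemma map_qPochInf (φ : R →+* S) (h : ℕ) :
    PowerSeries.map φ (qPochInf R h) = qPochInf S h := by
  ext n
  rw [coeff_map, qPochInf, qPochInf, coeff_mk, coeff_mk, ← coeff_map]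
  congr 1
  rw [map_prod]
  refine Finset.prod_congr rfl fun k _ => ?_
  rw [map_sub, map_one, map_pow, PowerSeries.map_X]

lemma constantCoeff_qPochInf (h : ℕ) (hh : 1 ≤ h) :
    PowerSeries.constantCoeff (R := R) (qPochInf R h) = 1 := by
  rw [← PowerSeries.coeff_zero_eq_constantCoeff, qPochInf, coeff_mk]
  rw [Finset.prod_range_one]
  simp [PowerSeries.coeff_zero_eq_constantCoeff, zero_pow (by omega : h * 1 ≠ 0),
    zero_pow (by omega : h ≠ 0)]

lemma isUnit_qPochInf (h : ℕ) (hh : 1 ≤ h) : IsUnit (qPochInf R h) := by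
  rw [PowerSeries.isUnit_iff_constantCoeff, constantCoeff_qPochInf h hh]
  exact isUnit_one

lemma two_eq_zero_psZMod2 : (2 : PowerSeries (ZMod 2)) = 0 := by
  have h := map_ofNat (PowerSeries.C (R := ZMod 2)) 2
  rw [← h, show ((OfNat.ofNat 2 : ZMod 2)) = 0 by decide, map_zero]

/-- Frobenius: `f₂² = f₄` over `ZMod 2`. -/
lemma qPochInf_two_sq : (qPochInf (ZMod 2) 2) ^ 2 = qPochInf (ZMod 2) 4 := by
  ext n
  set P : PowerSeries (ZMod 2) :=
    ∏ k ∈ Finset.range (n + 1), (1 - PowerSeries.X ^ (2 * (k + 1))) with hP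
  have hcoeff : ∀ i ≤ n, PowerSeries.coeff (R := ZMod 2) i (qPochInf (ZMod 2) 2) =
      PowerSeries.coeff (R := ZMod 2) i P := fun i hi =>
    coeff_qPochInf 2 (by norm_num) (by omega)
  have h1 : PowerSeries.coeff (R := ZMod 2) n ((qPochInf (ZMod 2) 2) ^ 2) =
      PowerSeries.coeff (R := ZMod 2) n (P ^ 2) := by
    rw [sq, sq, PowerSeries.coeff_mul, PowerSeries.coeff_mul]
    refine Finset.sum_congr rfl fun p hp => ?_
    have hmem := Finset.HasAntidiagonal.mem_antidiagonal.mp hp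
    rw [hcoeff p.1 (by omega), hcoeff p.2 (by omega)]
  have h2 : P ^ 2 = ∏ k ∈ Finset.range (n + 1), (1 - PowerSeries.X ^ (4 * (k + 1))) := by
    rw [hP, ← Finset.prod_pow]
    refine Finset.prod_congr rfl fun k _ => ?_
    have key : (1 - PowerSeries.X ^ (2 * (k + 1))) ^ 2 =
        1 - (PowerSeries.X : PowerSeries (ZMod 2)) ^ (4 * (k + 1)) := by
      have hx : ((PowerSeries.X : PowerSeries (ZMod 2)) ^ (2 * (k + 1))) ^ 2 =
          (PowerSeries.X : PowerSeries (ZMod 2)) ^ (4 * (k + 1)) := by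
        rw [← pow_mul]; ring_nf
      linear_combination (PowerSeries.X ^ (4 * (k + 1)) -
        PowerSeries.X ^ (2 * (k + 1)) : PowerSeries (ZMod 2)) * two_eq_zero_psZMod2 +
        (1 : PowerSeries (ZMod 2)) * hx
    rw [key]
  rw [h1, h2, coeff_qPochInf 4 (by norm_num) (Nat.lt_succ_self n)]

/-- every coefficient of `f₂² - f₄` over `ℤ` is even -/
lemma two_dvd_qPochInf_int :
    ∃ D : PowerSeries ℤ, qPochInf ℤ 2 ^ 2 - qPochInf ℤ 4 = 2 * D := by
  set f := qPochInf ℤ 2 ^ 2 - qPochInf ℤ 4 with hf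
  have hdvd : ∀ n, (2 : ℤ) ∣ PowerSeries.coeff (R := ℤ) n f := by
    intro n
    have hmap : PowerSeries.map (Int.castRingHom (ZMod 2)) f = 0 := by
      rw [hf, map_sub, map_pow, map_qPochInf, map_qPochInf, qPochInf_two_sq, sub_self]
    have := congrArg (PowerSeries.coeff (R := ZMod 2) n) hmap
    rw [PowerSeries.coeff_map, map_zero] at this
    exact (ZMod.intCast_zmod_eq_zero_iff_dvd _ 2).mp this
  refine ⟨PowerSeries.mk fun n => PowerSeries.coeff (R := ℤ) n f / 2, ?_⟩
  ext n
  have h2C : (2 : PowerSeries ℤ) = PowerSeries.C (R := ℤ) 2 := (map_ofNat (PowerSeries.C (R := ℤ)) 2).symm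
  rw [h2C, PowerSeries.coeff_C_mul, coeff_mk, Int.mul_ediv_cancel' (hdvd n)]

/-- lifting-the-exponent style lemma -/
lemma pow_two_pow_dvd {a b d : R} (hab : a - b = 2 * d) (k : ℕ) :
    (2 : R) ^ (k + 1) ∣ a ^ (2 ^ k) - b ^ (2 ^ k) := by
  induction k with
  | zero => simpa using ⟨d, by linear_combination hab⟩
  | succ k ih =>
    have hsq : a ^ (2 ^ (k + 1)) - b ^ (2 ^ (k + 1)) =
        (a ^ (2 ^ k) - b ^ (2 ^ k)) * (a ^ (2 ^ k) + b ^ (2 ^ k)) := by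
      rw [pow_succ, pow_mul, pow_mul]; ring
    have hsum : (2 : R) ∣ a ^ (2 ^ k) + b ^ (2 ^ k) := by
      have h1 : (2 : R) ∣ a ^ (2 ^ k) - b ^ (2 ^ k) := by
        have := sub_dvd_pow_sub_pow a b (2 ^ k)
        exact dvd_trans ⟨d, hab⟩ this
      obtain ⟨e, he⟩ := h1
      exact ⟨e + b ^ (2 ^ k), by linear_combination he⟩
    rw [hsq, pow_succ]
    exact mul_dvd_mul ih hsum

end Aux

/-- For integers `λ ≥ 1`, `m ≥ 0`, `t ≥ 1` and every `n ≥ 0`,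
`a̅_{2^λ m + t}(n) ≡ a̅_t(n) (mod 2^(λ+1))`. -/
theorem overcubic_congr_two_pow (abar : ℕ → ℕ → ℕ) (habar : IsGenOvercubic abar)
    (lam m t : ℕ) (hlam : 1 ≤ lam) (ht : 1 ≤ t) (n : ℕ) :
    abar (2 ^ lam * m + t) n ≡ abar t n [MOD 2 ^ (lam + 1)] := by
  set N := 2 ^ (lam + 1) with hN
  set c := 2 ^ lam * m + t with hc
  -- the congruence in ℤ-power series
  obtain ⟨D, hD⟩ := two_dvd_qPochInf_int
  have hkey_int : (2 : PowerSeries ℤ) ^ (lam + 1) ∣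
      qPochInf ℤ 4 ^ (2 ^ lam) - qPochInf ℤ 2 ^ (2 ^ (lam + 1)) := by
    have := pow_two_pow_dvd (a := qPochInf ℤ 4) (b := qPochInf ℤ 2 ^ 2) (d := -D)
      (by linear_combination -hD) lam
    have hrw : (qPochInf ℤ 2 ^ 2) ^ (2 ^ lam) = qPochInf ℤ 2 ^ (2 ^ (lam + 1)) := by
      rw [← pow_mul, ← pow_succ']
    rwa [hrw] at this
  -- move to ZMod N
  let ψ : ℤ →+* ZMod N := Int.castRingHom (ZMod N)
  have hψN : (2 : PowerSeries (ZMod N)) ^ (lam + 1) = 0 := by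
    have h2C : (2 : PowerSeries (ZMod N)) = PowerSeries.C (R := ZMod N) 2 :=
      (map_ofNat (PowerSeries.C (R := ZMod N)) 2).symm
    rw [h2C, ← map_pow, show ((2 : ZMod N) ^ (lam + 1)) = 0 by
      have := ZMod.natCast_self N
      rw [hN] at this ⊢
      push_cast at this
      exact_mod_cast this, map_zero]
  have hkey : qPochInf (ZMod N) 4 ^ (2 ^ lam) = qPochInf (ZMod N) 2 ^ (2 ^ (lam + 1)) := by
    obtain ⟨E, hE⟩ := hkey_int
    have := congrArg (PowerSeries.map ψ) hE
    rw [map_sub, map_mul, map_pow, map_pow, map_pow, map_qPochInf, map_qPochInf] at this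
    have h2 : PowerSeries.map ψ 2 = 2 := map_ofNat (PowerSeries.map ψ) 2
    rw [h2, hψN, zero_mul, sub_eq_zero] at this
    exact this
  -- map both generating-function identities
  have hmap_abar : ∀ u : ℕ, PowerSeries.map ψ (PowerSeries.mk fun j => (abar u j : ℤ)) =
      PowerSeries.mk fun j => ((abar u j : ZMod N)) := by
    intro u
    ext j
    rw [PowerSeries.coeff_map, coeff_mk, coeff_mk]
    exact map_natCast ψ _
  have hmapped : ∀ u : ℕ, 1 ≤ u →
      (PowerSeries.mk fun j => ((abar u j : ZMod N))) * qPochInf (ZMod N) 1 ^ 2 *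
        qPochInf (ZMod N) 2 ^ (2 * u) =
      qPochInf (ZMod N) 4 ^ (u - 1) * qPochInf (ZMod N) 2 ^ 3 := by
    intro u hu
    have := congrArg (PowerSeries.map ψ) (habar u hu)
    rw [map_mul, map_mul, map_mul, map_pow, map_pow, map_pow, map_pow,
      map_qPochInf, map_qPochInf, map_qPochInf, hmap_abar] at this
    exact this
  have hc1 : 1 ≤ c := by omega
  have eqc := hmapped c hc1
  have eqt := hmapped t ht
  -- rewrite RHS of eqc
  have hcm1 : c - 1 = (t - 1) + 2 ^ lam * m := by omega
  have h2c : 2 * c = 2 * t + 2 ^ (lam + 1) * m := by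
    rw [hc, pow_succ]; ring
  have hrhs : qPochInf (ZMod N) 4 ^ (c - 1) * qPochInf (ZMod N) 2 ^ 3 =
      qPochInf (ZMod N) 4 ^ (t - 1) * qPochInf (ZMod N) 2 ^ 3 *
        qPochInf (ZMod N) 2 ^ (2 ^ (lam + 1) * m) := by
    rw [hcm1, pow_add, pow_mul, hkey, ← pow_mul]
    ring
  rw [hrhs, ← eqt] at eqc
  have heq : (PowerSeries.mk fun j => ((abar c j : ZMod N))) *
      (qPochInf (ZMod N) 1 ^ 2 * qPochInf (ZMod N) 2 ^ (2 * c)) =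
      (PowerSeries.mk fun j => ((abar t j : ZMod N))) *
      (qPochInf (ZMod N) 1 ^ 2 * qPochInf (ZMod N) 2 ^ (2 * c)) := by
    calc (PowerSeries.mk fun j => ((abar c j : ZMod N))) *
        (qPochInf (ZMod N) 1 ^ 2 * qPochInf (ZMod N) 2 ^ (2 * c))
        = (PowerSeries.mk fun j => ((abar c j : ZMod N))) * qPochInf (ZMod N) 1 ^ 2 *
          qPochInf (ZMod N) 2 ^ (2 * c) := by ring
      _ = (PowerSeries.mk fun j => ((abar t j : ZMod N))) * qPochInf (ZMod N) 1 ^ 2 *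
          qPochInf (ZMod N) 2 ^ (2 * t) * qPochInf (ZMod N) 2 ^ (2 ^ (lam + 1) * m) := eqc
      _ = (PowerSeries.mk fun j => ((abar t j : ZMod N))) *
          (qPochInf (ZMod N) 1 ^ 2 * (qPochInf (ZMod N) 2 ^ (2 * t) *
            qPochInf (ZMod N) 2 ^ (2 ^ (lam + 1) * m))) := by ring
      _ = (PowerSeries.mk fun j => ((abar t j : ZMod N))) *
          (qPochInf (ZMod N) 1 ^ 2 * qPochInf (ZMod N) 2 ^ (2 * c)) := by
            rw [← pow_add, ← h2c]
  have hunit : IsUnit (qPochInf (ZMod N) 1 ^ 2 * qPochInf (ZMod N) 2 ^ (2 * c)) :=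
    ((isUnit_qPochInf 1 le_rfl).pow 2).mul ((isUnit_qPochInf 2 one_le_two).pow (2 * c))
  have hfinal : (PowerSeries.mk fun j => ((abar c j : ZMod N))) =
      (PowerSeries.mk fun j => ((abar t j : ZMod N))) :=
    hunit.mul_left_cancel (by rw [mul_comm, heq, mul_comm])
  have := congrArg (PowerSeries.coeff (R := ZMod N) n) hfinal
  rw [coeff_mk, coeff_mk] at this
  exact (ZMod.natCast_eq_natCast_iff _ _ _).mp this
end

section
/- Let p ≥ 5 be a prime such that the Legendre symbol (−8/p) = −1, and let r be an integer with 1 ≤ r ≤ p−1. Then for all integers m ≥ 0, α ≥ 0 and n ≥ 0, the generalized overcubic partition function satisfies a̅_{2m+2}(8·p^{2α+1}(pn + r) + 3·p^{2α+2}) ≡ 0 (mod 8). -/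
noncomputable section
open PowerSeries Finset

abbrev PS := PowerSeries ℤ

/-- congruence mod X^d -/
def ModX (d : ℕ) (f g : PS) : Prop := (X : PS) ^ d ∣ (f - g)

namespace ModX
lemma refl (d : ℕ) (f : PS) : ModX d f f := by rw [ModX, sub_self]; exact dvd_zero _
lemma symm {d f g} (hfg : ModX d f g) : ModX d g f := by
  rw [ModX, ← neg_sub f g]; exact dvd_neg.mpr hfg
lemma trans {d f g h} (h1 : ModX d f g) (h2 : ModX d g h) : ModX d f h := by
  have := dvd_add h1 h2; simpa [ModX] using this
lemma add {d f g f' g'} (h1 : ModX d f g) (h2 : ModX d f' g') : ModX d (f + f') (g + g') := by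
  have := dvd_add h1 h2
  simpa [ModX, sub_add_sub_comm] using this
lemma mul {d f g f' g'} (h1 : ModX d f g) (h2 : ModX d f' g') : ModX d (f * f') (g * g') := by
  have : f * f' - g * g' = f * (f' - g') + (f - g) * g' := by ring
  rw [ModX, this]
  exact dvd_add (Dvd.dvd.mul_left h2 f) (Dvd.dvd.mul_right h1 g')
lemma pow {d f g} (h1 : ModX d f g) (n : ℕ) : ModX d (f ^ n) (g ^ n) := by
  induction n with
  | zero => simpa using refl d 1
  | succ k ih => rw [pow_succ, pow_succ]; exact ih.mul h1
lemma coeff_eq {d f g} (h1 : ModX d f g) {i : ℕ} (hi : i < d) :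
    PowerSeries.coeff (R := ℤ) i f = PowerSeries.coeff (R := ℤ) i g := by
  have := (PowerSeries.X_pow_dvd_iff.mp h1) i hi
  rw [map_sub, sub_eq_zero] at this; exact this
lemma of_le {d d' f g} (h1 : ModX d f g) (h2 : d' ≤ d) : ModX d' f g :=
  dvd_trans (pow_dvd_pow _ h2) h1
lemma one_sub_X_pow {d e : ℕ} (h : d ≤ e) : ModX d (1 - X ^ e) 1 := by
  have : (1 - (X:PS) ^ e) - 1 = -(X^e) := by ring
  rw [ModX, this]
  exact (pow_dvd_pow _ h).neg_right
lemma prod_one {d : ℕ} {ι : Type*} (s : Finset ι) (f : ι → PS)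
    (h : ∀ i ∈ s, ModX d (f i) 1) : ModX d (∏ i ∈ s, f i) 1 := by
  induction s using Finset.cons_induction with
  | empty => simpa using refl d 1
  | cons a s ha ih =>
      rw [Finset.prod_cons]
      have := (h a (Finset.mem_cons_self a s)).mul
        (ih (fun i hi => h i (Finset.mem_cons_of_mem hi)))
      simpa using this
lemma sum {d : ℕ} {ι : Type*} (s : Finset ι) (f g : ι → PS)
    (h : ∀ i ∈ s, ModX d (f i) (g i)) :
    ModX d (∑ i ∈ s, f i) (∑ i ∈ s, g i) := by
  induction s using Finset.cons_induction with
  | empty => simpa using refl d 0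
  | cons a s ha ih =>
      rw [Finset.sum_cons, Finset.sum_cons]
      exact (h a (Finset.mem_cons_self a s)).add
        (ih (fun i hi => h i (Finset.mem_cons_of_mem hi)))
end ModX

/-- partial products -/
def PP (g N : ℕ) : PS := ∏ k ∈ Finset.range N, (1 - X ^ (g * (k + 1)))

lemma constantCoeff_PP (g N : ℕ) (hg : 1 ≤ g) : constantCoeff (R := ℤ) (PP g N) = 1 := by
  rw [PP, map_prod]
  apply Finset.prod_eq_one
  intro k _
  have hne : g * (k+1) ≠ 0 := by positivity
  simp [map_sub, map_pow, PowerSeries.constantCoeff_X, zero_pow hne]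

lemma PP_ne_zero (g N : ℕ) (hg : 1 ≤ g) : PP g N ≠ 0 := by
  intro h
  have := constantCoeff_PP g N hg
  rw [h] at this; simp at this

lemma modX_PP_extend (g : ℕ) (hg : 1 ≤ g) {N M : ℕ} (h : N ≤ M) :
    ModX (N + 1) (PP g M) (PP g N) := by
  have hsplit : PP g M = PP g N * ∏ k ∈ Finset.Ico N M, (1 - (X:PS) ^ (g * (k + 1))) := by
    rw [PP, PP, Finset.range_eq_Ico, Finset.range_eq_Ico]
    exact (Finset.prod_Ico_consecutive (fun k => (1 - (X:PS) ^ (g * (k + 1)))) (Nat.zero_le N) h).symm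
  rw [hsplit]
  have htail : ModX (N+1) (∏ k ∈ Finset.Ico N M, (1 - (X:PS) ^ (g * (k + 1)))) 1 := by
    apply ModX.prod_one
    intro k hk
    apply ModX.one_sub_X_pow
    have hk' := (Finset.mem_Ico.mp hk).1
    calc N + 1 ≤ k + 1 := by omega
    _ ≤ g * (k+1) := Nat.le_mul_of_pos_left _ hg
  simpa using (ModX.refl (N+1) (PP g N)).mul htail

lemma coeff_qPochInf_s7 (g : ℕ) (hg : 1 ≤ g) (n N : ℕ) (h : n < N) :
    PowerSeries.coeff (R := ℤ) n (qPochInf ℤ g) = PowerSeries.coeff (R := ℤ) n (PP g N) := by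
  have h0 : PowerSeries.coeff (R := ℤ) n (qPochInf ℤ g) = PowerSeries.coeff (R := ℤ) n (PP g (n+1)) := by
    simp [qPochInf, PP]
  rw [h0]
  exact ((modX_PP_extend g hg (show n + 1 ≤ N by omega)).coeff_eq (by omega)).symm

lemma modX_qPochInf (g : ℕ) (hg : 1 ≤ g) (N : ℕ) :
    ModX N (qPochInf ℤ g) (PP g N) := by
  rw [ModX, PowerSeries.X_pow_dvd_iff]
  intro i hi
  rw [map_sub, sub_eq_zero]
  exact coeff_qPochInf_s7 g hg i N hi

lemma constantCoeff_qPochInf_s7 (g : ℕ) (hg : 1 ≤ g) : constantCoeff (R := ℤ) (qPochInf ℤ g) = 1 := by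
  have := coeff_qPochInf_s7 g hg 0 1 (by omega)
  rw [← PowerSeries.coeff_zero_eq_constantCoeff, this,
    PowerSeries.coeff_zero_eq_constantCoeff, constantCoeff_PP g 1 hg]

lemma qPochInf_ne_zero (g : ℕ) (hg : 1 ≤ g) : qPochInf ℤ g ≠ 0 := by
  intro h
  have := constantCoeff_qPochInf_s7 g hg
  rw [h] at this; simp at this

def qb (h : ℕ) : ℕ → ℤ → PS
  | 0, k => if k = 0 then 1 else 0
  | (m+1), k => qb h m (k-1) + X ^ (2 * (h:ℤ) * k).toNat * qb h m k

lemma qb_zero (h : ℕ) (k : ℤ) : qb h 0 k = if k = 0 then 1 else 0 := rfl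
lemma qb_succ (h : ℕ) (m : ℕ) (k : ℤ) :
    qb h (m+1) k = qb h m (k-1) + X ^ (2 * (h:ℤ) * k).toNat * qb h m k := rfl

lemma qb_neg (h : ℕ) : ∀ (m : ℕ) (k : ℤ), k < 0 → qb h m k = 0 := by
  intro m
  induction m with
  | zero => intro k hk; rw [qb_zero, if_neg (by omega)]
  | succ m ih =>
      intro k hk
      rw [qb_succ, ih _ (by omega), ih _ hk, mul_zero, add_zero]

lemma qb_gt (h : ℕ) : ∀ (m : ℕ) (k : ℤ), (m:ℤ) < k → qb h m k = 0 := by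
  intro m
  induction m with
  | zero => intro k hk; rw [qb_zero, if_neg (by omega)]
  | succ m ih =>
      intro k hk
      rw [qb_succ, ih _ (by push_cast; omega), ih _ (by push_cast; omega), mul_zero, add_zero]

lemma qb_diag (h : ℕ) : ∀ m : ℕ, qb h m (m : ℤ) = 1 := by
  intro m
  induction m with
  | zero => rw [Int.natCast_zero, qb_zero, if_pos rfl]
  | succ m ih =>
      rw [show ((m+1 : ℕ) : ℤ) = (m:ℤ)+1 by push_cast; ring, qb_succ,
        show ((m:ℤ)+1-1 : ℤ) = (m:ℤ) by ring, ih,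
        qb_gt h m ((m:ℤ)+1) (by omega), mul_zero, add_zero]

lemma qb_zero_left (h : ℕ) : ∀ m : ℕ, qb h m 0 = 1 := by
  intro m
  induction m with
  | zero => rw [qb_zero, if_pos rfl]
  | succ m ih =>
      rw [qb_succ, qb_neg h m _ (by omega), ih]
      simp
  
lemma pascal2 (h : ℕ) : ∀ (m : ℕ) (k : ℤ),
    qb h (m+1) k = qb h m k + X ^ (2 * (h:ℤ) * ((m:ℤ) + 1 - k)).toNat * qb h m (k-1) := by
  intro m
  induction m with
  | zero =>
      intro k
      rcases eq_or_ne k 0 with rfl | h0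
      · simp [qb_succ, qb_zero, qb_neg h 0 (-1) (by omega)]
      rcases eq_or_ne k 1 with rfl | h1
      · norm_num [qb_succ, qb_zero]
      · simp only [qb_succ, qb_zero]
        rw [if_neg h0, if_neg (show ¬ k - 1 = 0 by omega)]
        simp
  | succ m ih =>
      intro k
      have e1 : ((m+1:ℕ):ℤ) + 1 - k = (m:ℤ) + 2 - k := by push_cast; ring
      have e2 : (m:ℤ) + 1 - (k-1) = (m:ℤ) + 2 - k := by ring
      calc qb h (m+1+1) k
          = (qb h m (k-1) + X ^ (2*(h:ℤ)*((m:ℤ)+2-k)).toNat * qb h m (k-1-1))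
            + X ^ (2*(h:ℤ)*k).toNat *
              (qb h m k + X ^ (2*(h:ℤ)*((m:ℤ)+1-k)).toNat * qb h m (k-1)) := by
            rw [qb_succ h (m+1) k, ih (k-1), ih k, e2]
        _ = (qb h m (k-1) + X ^ (2*(h:ℤ)*k).toNat * qb h m k)
            + X ^ (2*(h:ℤ)*((m:ℤ)+2-k)).toNat *
              (qb h m (k-1-1) + X ^ (2*(h:ℤ)*(k-1)).toNat * qb h m (k-1)) := by
            have key : (X:PS) ^ (2*(h:ℤ)*k).toNat * (X ^ (2*(h:ℤ)*((m:ℤ)+1-k)).toNat * qb h m (k-1))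
                = X ^ (2*(h:ℤ)*((m:ℤ)+2-k)).toNat * (X ^ (2*(h:ℤ)*(k-1)).toNat * qb h m (k-1)) := by
              rcases le_or_gt k 0 with hk | hk
              · rw [qb_neg h m (k-1) (by omega), mul_zero, mul_zero, mul_zero, mul_zero]
              rcases le_or_gt k ((m:ℤ)+1) with hk2 | hk2
              · rw [← mul_assoc, ← mul_assoc, ← pow_add, ← pow_add]
                congr 2
                obtain ⟨k', rfl⟩ : ∃ k' : ℕ, k = (k' : ℤ) := ⟨k.toNat, (Int.toNat_of_nonneg (by omega)).symm⟩
                have c1 : (2*(h:ℤ)*(k':ℤ)).toNat = 2*h*k' := by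
                  rw [show 2*(h:ℤ)*(k':ℤ) = ((2*h*k' : ℕ) : ℤ) by push_cast; ring, Int.toNat_natCast]
                have hk1 : 1 ≤ k' := by omega
                have hkm : k' ≤ m + 1 := by omega
                have c2 : (2*(h:ℤ)*((m:ℤ)+1-(k':ℤ))).toNat = 2*h*(m+1-k') := by
                  rw [show 2*(h:ℤ)*((m:ℤ)+1-(k':ℤ)) = ((2*h*(m+1-k') : ℕ) : ℤ) by push_cast [hkm]; ring, Int.toNat_natCast]
                have c3 : (2*(h:ℤ)*((m:ℤ)+2-(k':ℤ))).toNat = 2*h*(m+2-k') := by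
                  rw [show 2*(h:ℤ)*((m:ℤ)+2-(k':ℤ)) = ((2*h*(m+2-k') : ℕ) : ℤ) by push_cast [show k' ≤ m+2 by omega]; ring, Int.toNat_natCast]
                have c4 : (2*(h:ℤ)*((k':ℤ)-1)).toNat = 2*h*(k'-1) := by
                  rw [show 2*(h:ℤ)*((k':ℤ)-1) = ((2*h*(k'-1) : ℕ) : ℤ) by push_cast [hk1]; ring, Int.toNat_natCast]
                rw [c1, c2, c3, c4, ← Nat.mul_add, ← Nat.mul_add,
                  show k' + (m+1-k') = m+1 by omega, show m+2-k' + (k'-1) = m+1 by omega]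
              · rw [qb_gt h m (k-1) (by omega), mul_zero, mul_zero, mul_zero, mul_zero]
            linear_combination key
        _ = qb h (m+1) k + X ^ (2*(h:ℤ)*(((m+1:ℕ):ℤ)+1-k)).toNat * qb h (m+1) (k-1) := by
            rw [qb_succ h m k, qb_succ h m (k-1), e1]

lemma toNat_mul_eq (h : ℕ) (a : ℤ) (ha : 0 ≤ a) :
    (2 * (h:ℤ) * a).toNat = 2 * h * a.toNat := by
  obtain ⟨a', rfl⟩ : ∃ a' : ℕ, a = (a' : ℤ) := ⟨a.toNat, (Int.toNat_of_nonneg ha).symm⟩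
  rw [show 2 * (h:ℤ) * (a' : ℤ) = ((2*h*a' : ℕ) : ℤ) by push_cast; ring, Int.toNat_natCast,
    Int.toNat_natCast]

lemma star (h n : ℕ) (j : ℤ) (hj1 : -((n:ℤ)+1) ≤ j) (hj2 : j ≤ (n:ℤ)+1) :
    qb h (2*n+2) ((n:ℤ)+1+j) =
      (1 + X ^ (2*h*(2*n+1))) * qb h (2*n) ((n:ℤ)+j)
      + X ^ ((2*(h:ℤ)*((n:ℤ)+1-j)).toNat) * qb h (2*n) ((n:ℤ)+j-1)
      + X ^ ((2*(h:ℤ)*((n:ℤ)+1+j)).toNat) * qb h (2*n) ((n:ℤ)+j+1) := by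
  have hp := pascal2 h (2*n+1) ((n:ℤ)+1+j)
  rw [show ((2*n+1:ℕ):ℤ) + 1 - ((n:ℤ)+1+j) = (n:ℤ)+1-j by push_cast; ring] at hp
  rw [hp, qb_succ h (2*n) ((n:ℤ)+1+j), qb_succ h (2*n) ((n:ℤ)+1+j-1)]
  rw [show (n:ℤ)+1+j-1 = (n:ℤ)+j by ring, show (n:ℤ)+j-1 = (n:ℤ)+j-1 by ring]
  rcases eq_or_lt_of_le hj1 with heq | hlt
  · -- j = -(n+1)
    rw [← heq]
    rw [show (n:ℤ) + (-((n:ℤ)+1)) = -1 by ring, show (n:ℤ)+1+(-((n:ℤ)+1)) = 0 by ring,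
      show (-1 : ℤ) + 1 = 0 by ring]
    simp only [qb_neg h (2*n) (-1) (by omega), qb_zero_left]
    ring
  · -- j ≥ -n
    have key : (X:PS) ^ ((2*(h:ℤ)*((n:ℤ)+1-j)).toNat) * (X ^ ((2*(h:ℤ)*((n:ℤ)+j)).toNat) * qb h (2*n) ((n:ℤ)+j))
        = X ^ (2*h*(2*n+1)) * qb h (2*n) ((n:ℤ)+j) := by
      rw [← mul_assoc, ← pow_add]
      congr 2
      rw [toNat_mul_eq h _ (by omega), toNat_mul_eq h _ (by omega), ← Nat.mul_add]
      congr 1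
      have e1 : (((n:ℤ)+1-j).toNat : ℤ) = (n:ℤ)+1-j := Int.toNat_of_nonneg (by omega)
      have e2 : (((n:ℤ)+j).toNat : ℤ) = (n:ℤ)+j := Int.toNat_of_nonneg (by omega)
      omega
    rw [show (n:ℤ)+1+j = (n:ℤ)+j+1 by ring]
    linear_combination key

def csign (j : ℤ) : ℤ := if Even j then 1 else -1

lemma csign_add_one (j : ℤ) : csign (j+1) = - csign j := by
  by_cases hj : Even j <;> simp [csign, Int.even_add_one, hj]

lemma csign_sub_one (j : ℤ) : csign (j-1) = - csign j := by
  by_cases hj : Even j <;> simp [csign, Int.even_sub_one, hj]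

def Ssum (h n : ℕ) : PS :=
  ∑ j ∈ Finset.Icc (-(n:ℤ)) (n:ℤ),
    PowerSeries.C (R := ℤ) (csign j) * X ^ (h * (j^2).toNat) * qb h (2*n) ((n:ℤ)+j)

lemma Ssum_zero (h : ℕ) : Ssum h 0 = 1 := by
  simp [Ssum, csign, qb_zero_left]

lemma Ssum_succ (h n : ℕ) :
    Ssum h (n+1) = (1 - X ^ (h*(2*n+1)))^2 * Ssum h n := by
  have hIcc : Finset.Icc (-((n:ℕ):ℤ)-1) ((n:ℕ)+1) = Finset.Icc (-((n+1:ℕ):ℤ)) ((n+1:ℕ):ℤ) := by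
    congr 1 <;> push_cast <;> ring
  have step1 : Ssum h (n+1) =
      ∑ j ∈ Finset.Icc (-(n:ℤ)-1) ((n:ℤ)+1),
        PowerSeries.C (R := ℤ) (csign j) * X ^ (h * (j^2).toNat) *
          ((1 + X ^ (2*h*(2*n+1))) * qb h (2*n) ((n:ℤ)+j)
           + X ^ ((2*(h:ℤ)*((n:ℤ)+1-j)).toNat) * qb h (2*n) ((n:ℤ)+j-1)
           + X ^ ((2*(h:ℤ)*((n:ℤ)+1+j)).toNat) * qb h (2*n) ((n:ℤ)+j+1)) := by
    rw [Ssum, show 2*(n+1) = 2*n+2 by ring, ← hIcc]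
    apply Finset.sum_congr rfl
    intro j hj
    rw [Finset.mem_Icc] at hj
    rw [show ((n+1:ℕ):ℤ) + j = (n:ℤ)+1+j by push_cast; ring,
      star h n j (by omega) (by omega)]
  have toNat_mul_eq : ∀ (a : ℤ), 0 ≤ a → (2 * (h:ℤ) * a).toNat = 2 * h * a.toNat := by
    intro a ha
    obtain ⟨a', rfl⟩ : ∃ a' : ℕ, a = (a' : ℤ) := ⟨a.toNat, (Int.toNat_of_nonneg ha).symm⟩
    rw [show 2 * (h:ℤ) * (a' : ℤ) = ((2*h*a' : ℕ) : ℤ) by push_cast; ring, Int.toNat_natCast,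
      Int.toNat_natCast]
  set E : ℕ := h*(2*n+1) with hE
  set I := Finset.Icc (-(n:ℤ)-1) ((n:ℤ)+1) with hI
  set J := Finset.Icc (-(n:ℤ)) ((n:ℤ)) with hJ
  have hJI : J ⊆ I := by
    rw [hI, hJ]; apply Finset.Icc_subset_Icc <;> omega
  set s : ℤ → PS := fun j => PowerSeries.C (R := ℤ) (csign j) * X ^ (h * (j^2).toNat) * qb h (2*n) ((n:ℤ)+j)
    with hs
  have hsj : ∀ j : ℤ, s j = PowerSeries.C (R := ℤ) (csign j) * X ^ (h * (j^2).toNat) * qb h (2*n) ((n:ℤ)+j) :=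
    fun j => rfl
  have hSsum : Ssum h n = ∑ j ∈ J, s j := rfl
  have hsum : ∑ j ∈ I, s j = Ssum h n := by
    rw [hSsum]
    apply (Finset.sum_subset hJI _).symm
    intro j hj hj'
    rw [hI, Finset.mem_Icc] at hj
    rw [hJ, Finset.mem_Icc] at hj'
    have hj2 : j = (n:ℤ)+1 ∨ j = -(n:ℤ)-1 := by omega
    rw [hsj]
    rcases hj2 with rfl | rfl
    · rw [qb_gt h (2*n) _ (by push_cast; omega), mul_zero]
    · rw [qb_neg h (2*n) _ (by omega), mul_zero]
  have claimA : ∑ j ∈ I, PowerSeries.C (R := ℤ) (csign j) * X ^ (h * (j^2).toNat) *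
      ((1 + X ^ (2*h*(2*n+1))) * qb h (2*n) ((n:ℤ)+j)) = (1 + X ^ (2*h*(2*n+1))) * Ssum h n := by
    rw [← hsum, Finset.mul_sum]
    apply Finset.sum_congr rfl
    intro j _
    rw [hsj]; ring
  have claimB : ∑ j ∈ I, PowerSeries.C (R := ℤ) (csign j) * X ^ (h * (j^2).toNat) *
      (X ^ ((2*(h:ℤ)*((n:ℤ)+1-j)).toNat) * qb h (2*n) ((n:ℤ)+j-1))
      = - (X ^ E * Ssum h n) := by
    have hmap : I = (Finset.Icc (-(n:ℤ)-2) ((n:ℤ))).map (addRightEmbedding 1) := by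
      rw [Finset.map_add_right_Icc, hI]; congr 1 <;> ring
    rw [hmap, Finset.sum_map]
    simp only [addRightEmbedding_apply]
    have hJK : J ⊆ Finset.Icc (-(n:ℤ)-2) ((n:ℤ)) := by
      rw [hJ]; apply Finset.Icc_subset_Icc <;> omega
    rw [← Finset.sum_subset hJK]
    · rw [hsum.symm.trans hsum]  -- no-op to keep structure
      have : ∀ i ∈ J, PowerSeries.C (R := ℤ) (csign (i+1)) * X ^ (h * ((i+1)^2).toNat) *
          (X ^ ((2*(h:ℤ)*((n:ℤ)+1-(i+1))).toNat) * qb h (2*n) ((n:ℤ)+(i+1)-1))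
          = - (X ^ E * s i) := by
        intro i hi
        rw [hJ, Finset.mem_Icc] at hi
        rw [csign_add_one, map_neg, show (n:ℤ)+1-(i+1) = (n:ℤ)-i by ring,
          show (n:ℤ)+(i+1)-1 = (n:ℤ)+i by ring, hsj]
        rw [toNat_mul_eq _ (by omega)]
        set a := ((i+1)^2).toNat with ha'
        set b := ((n:ℤ)-i).toNat with hb'
        set c := (i^2).toNat with hc'
        have ha : (a:ℤ) = (i+1)^2 := Int.toNat_of_nonneg (sq_nonneg _)
        have hb : (b:ℤ) = (n:ℤ)-i := Int.toNat_of_nonneg (by omega)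
        have hc : (c:ℤ) = i^2 := Int.toNat_of_nonneg (sq_nonneg _)
        have key : (a:ℤ) + 2*(b:ℤ) = 2*(n:ℤ)+1 + (c:ℤ) := by rw [ha, hb, hc]; ring
        have keyNat : a + 2*b = 2*n+1+c := by exact_mod_cast key
        have expEq : h*a + 2*h*b = E + h*c := by
          rw [hE, show h*a + 2*h*b = h*(a+2*b) by ring, keyNat]; ring
        calc -PowerSeries.C (R := ℤ) (csign i) * X ^ (h*a) * (X ^ (2*h*b) * qb h (2*n) ((n:ℤ)+i))
            = -(X ^ (h*a + 2*h*b) * (PowerSeries.C (R := ℤ) (csign i) * qb h (2*n) ((n:ℤ)+i))) := by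
              rw [pow_add]; ring
          _ = -(X ^ (E + h*c) * (PowerSeries.C (R := ℤ) (csign i) * qb h (2*n) ((n:ℤ)+i))) := by rw [expEq]
          _ = - (X ^ E * (PowerSeries.C (R := ℤ) (csign i) * X ^ (h * c) * qb h (2*n) ((n:ℤ)+i))) := by
              rw [pow_add]; ring
      rw [Finset.sum_congr rfl this, Finset.sum_neg_distrib, ← Finset.mul_sum, ← hSsum]
    · intro i hi hi'
      rw [Finset.mem_Icc] at hi
      rw [hJ, Finset.mem_Icc] at hi'
      have hi2 : i = -(n:ℤ)-1 ∨ i = -(n:ℤ)-2 := by omega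
      rcases hi2 with rfl | rfl
      · rw [show (n:ℤ)+(-(n:ℤ)-1+1)-1 = -1 by ring, qb_neg h (2*n) _ (by omega), mul_zero, mul_zero]
      · rw [show (n:ℤ)+(-(n:ℤ)-2+1)-1 = -2 by ring, qb_neg h (2*n) _ (by omega), mul_zero, mul_zero]
  have claimC : ∑ j ∈ I, PowerSeries.C (R := ℤ) (csign j) * X ^ (h * (j^2).toNat) *
      (X ^ ((2*(h:ℤ)*((n:ℤ)+1+j)).toNat) * qb h (2*n) ((n:ℤ)+j+1))
      = - (X ^ E * Ssum h n) := by
    have hmap : I = (Finset.Icc (-(n:ℤ)) ((n:ℤ)+2)).map (addRightEmbedding (-1)) := by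
      rw [Finset.map_add_right_Icc, hI]; congr 1 <;> ring
    rw [hmap, Finset.sum_map]
    simp only [addRightEmbedding_apply]
    have hJK : J ⊆ Finset.Icc (-(n:ℤ)) ((n:ℤ)+2) := by
      rw [hJ]; apply Finset.Icc_subset_Icc <;> omega
    rw [← Finset.sum_subset hJK]
    · have : ∀ i ∈ J, PowerSeries.C (R := ℤ) (csign (i+(-1))) * X ^ (h * ((i+(-1))^2).toNat) *
          (X ^ ((2*(h:ℤ)*((n:ℤ)+1+(i+(-1)))).toNat) * qb h (2*n) ((n:ℤ)+(i+(-1))+1))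
          = - (X ^ E * s i) := by
        intro i hi
        rw [hJ, Finset.mem_Icc] at hi
        rw [show i + (-1:ℤ) = i - 1 by ring, csign_sub_one, map_neg,
          show (n:ℤ)+1+(i-1) = (n:ℤ)+i by ring,
          show (n:ℤ)+(i-1)+1 = (n:ℤ)+i by ring, hsj]
        rw [toNat_mul_eq _ (by omega)]
        set a := ((i-1)^2).toNat with ha'
        set b := ((n:ℤ)+i).toNat with hb'
        set c := (i^2).toNat with hc'
        have ha : (a:ℤ) = (i-1)^2 := Int.toNat_of_nonneg (sq_nonneg _)
        have hb : (b:ℤ) = (n:ℤ)+i := Int.toNat_of_nonneg (by omega)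
        have hc : (c:ℤ) = i^2 := Int.toNat_of_nonneg (sq_nonneg _)
        have key : (a:ℤ) + 2*(b:ℤ) = 2*(n:ℤ)+1 + (c:ℤ) := by rw [ha, hb, hc]; ring
        have keyNat : a + 2*b = 2*n+1+c := by exact_mod_cast key
        have expEq : h*a + 2*h*b = E + h*c := by
          rw [hE, show h*a + 2*h*b = h*(a+2*b) by ring, keyNat]; ring
        calc -PowerSeries.C (R := ℤ) (csign i) * X ^ (h*a) * (X ^ (2*h*b) * qb h (2*n) ((n:ℤ)+i))
            = -(X ^ (h*a + 2*h*b) * (PowerSeries.C (R := ℤ) (csign i) * qb h (2*n) ((n:ℤ)+i))) := by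
              rw [pow_add]; ring
          _ = -(X ^ (E + h*c) * (PowerSeries.C (R := ℤ) (csign i) * qb h (2*n) ((n:ℤ)+i))) := by rw [expEq]
          _ = - (X ^ E * (PowerSeries.C (R := ℤ) (csign i) * X ^ (h * c) * qb h (2*n) ((n:ℤ)+i))) := by
              rw [pow_add]; ring
      rw [Finset.sum_congr rfl this, Finset.sum_neg_distrib, ← Finset.mul_sum, ← hSsum]
    · intro i hi hi'
      rw [Finset.mem_Icc] at hi
      rw [hJ, Finset.mem_Icc] at hi'
      have hi2 : i = (n:ℤ)+1 ∨ i = (n:ℤ)+2 := by omega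
      rcases hi2 with rfl | rfl
      · rw [show (n:ℤ)+((n:ℤ)+1+(-1))+1 = 2*(n:ℤ)+1 by ring,
          qb_gt h (2*n) _ (by push_cast; omega), mul_zero, mul_zero]
      · rw [show (n:ℤ)+((n:ℤ)+2+(-1))+1 = 2*(n:ℤ)+2 by ring,
          qb_gt h (2*n) _ (by push_cast; omega), mul_zero, mul_zero]
  rw [step1]
  have split : ∀ j ∈ I, PowerSeries.C (R := ℤ) (csign j) * X ^ (h * (j^2).toNat) *
        ((1 + X ^ (2*h*(2*n+1))) * qb h (2*n) ((n:ℤ)+j)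
         + X ^ ((2*(h:ℤ)*((n:ℤ)+1-j)).toNat) * qb h (2*n) ((n:ℤ)+j-1)
         + X ^ ((2*(h:ℤ)*((n:ℤ)+1+j)).toNat) * qb h (2*n) ((n:ℤ)+j+1))
      = PowerSeries.C (R := ℤ) (csign j) * X ^ (h * (j^2).toNat) *
        ((1 + X ^ (2*h*(2*n+1))) * qb h (2*n) ((n:ℤ)+j))
        + PowerSeries.C (R := ℤ) (csign j) * X ^ (h * (j^2).toNat) *
          (X ^ ((2*(h:ℤ)*((n:ℤ)+1-j)).toNat) * qb h (2*n) ((n:ℤ)+j-1))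
        + PowerSeries.C (R := ℤ) (csign j) * X ^ (h * (j^2).toNat) *
          (X ^ ((2*(h:ℤ)*((n:ℤ)+1+j)).toNat) * qb h (2*n) ((n:ℤ)+j+1)) := by
    intro j _; ring
  rw [Finset.sum_congr rfl split, Finset.sum_add_distrib, Finset.sum_add_distrib,
    claimA, claimB, claimC]
  rw [show 2*h*(2*n+1) = E*2 by rw [hE]; ring, pow_mul]
  ring


lemma PP_def (g N : ℕ) : PP g N = ∏ k ∈ Finset.range N, (1 - (X:PS) ^ (g * (k + 1))) := rfl
lemma ModX.dvd {d : ℕ} {f g : PS} (h1 : ModX d f g) : (X:PS)^d ∣ (f - g) := h1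
lemma ModX.of_dvd {d : ℕ} {f g : PS} (h1 : (X:PS)^d ∣ (f - g)) : ModX d f g := h1
lemma Ssum_def (h n : ℕ) : Ssum h n =
  ∑ j ∈ Finset.Icc (-(n:ℤ)) (n:ℤ),
    PowerSeries.C (R := ℤ) (csign j) * X ^ (h * (j^2).toNat) * qb h (2*n) ((n:ℤ)+j) := rfl

-- new material --------------------------------------------------------------

def Podd (h t : ℕ) : PS := ∏ k ∈ Finset.range t, (1 - X ^ (h*(2*k+1)))

lemma gauss_finite (h : ℕ) : ∀ n : ℕ, Ssum h n = Podd h n ^ 2 := by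
  intro n
  induction n with
  | zero => rw [Ssum_zero, Podd]; simp
  | succ n ih =>
      rw [Ssum_succ, ih]
      simp only [Podd, Finset.prod_range_succ]
      ring

lemma PP_split_parity (h : ℕ) : ∀ t : ℕ, PP h (2*t) = Podd h t * PP (2*h) t := by
  intro t
  induction t with
  | zero => simp [PP_def, Podd]
  | succ t ih =>
      have e1 : PP h ((2*t+1)+1) = PP h (2*t+1) * (1 - X ^ (h*((2*t+1)+1))) := by
        rw [PP_def, Finset.prod_range_succ, ← PP_def]
      have e2 : PP h ((2*t)+1) = PP h (2*t) * (1 - X ^ (h*(2*t+1))) := by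
        rw [PP_def, Finset.prod_range_succ, ← PP_def]
      have e3 : Podd h (t+1) = Podd h t * (1 - X ^ (h*(2*t+1))) := by
        rw [Podd, Finset.prod_range_succ, ← Podd]
      have e4 : PP (2*h) (t+1) = PP (2*h) t * (1 - X ^ (2*h*(t+1))) := by
        rw [PP_def, Finset.prod_range_succ, ← PP_def]
      rw [show 2*(t+1) = (2*t+1)+1 by ring, e1, show 2*t+1 = (2*t)+1 from rfl, e2, ih, e3, e4,
        show h*((2*t)+1+1) = 2*h*(t+1) by ring]
      ring

lemma qbProd (h : ℕ) : ∀ (m k : ℕ), k ≤ m →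
    qb h m (k:ℤ) * PP (2*h) k * PP (2*h) (m-k) = PP (2*h) m := by
  intro m
  induction m with
  | zero =>
      intro k hk
      interval_cases k
      rw [show ((0:ℕ):ℤ) = 0 from rfl, qb_zero_left]
      simp [PP_def]
  | succ m ih =>
      intro k hk
      have PP_succ : ∀ (g t : ℕ), PP g (t+1) = PP g t * (1 - (X:PS) ^ (g*(t+1))) := by
        intro g t; rw [PP_def, Finset.prod_range_succ, ← PP_def]
      rcases Nat.eq_zero_or_pos k with rfl | hk1
      · rw [show ((0:ℕ):ℤ) = 0 from rfl, qb_zero_left]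
        simp [PP_def]
      rcases eq_or_lt_of_le hk with rfl | hklt
      · rw [qb_diag, Nat.sub_self]
        have h0 : PP (2*h) 0 = 1 := by simp [PP_def]
        rw [h0]; ring
      obtain ⟨k', rfl⟩ : ∃ k', k = k'+1 := ⟨k-1, by omega⟩
      have hkm : k' + 1 ≤ m := by omega
      have hc1 : ((k'+1:ℕ):ℤ) = (k':ℤ)+1 := by push_cast; ring
      have hc2 : (2*(h:ℤ)*((k':ℤ)+1)).toNat = 2*h*(k'+1) := by
        rw [show (k':ℤ)+1 = ((k'+1:ℕ):ℤ) by push_cast; ring, toNat_mul_eq h _ (by positivity),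
          Int.toNat_natCast]
      have ih1 := ih k' (by omega)
      have ih2 := ih (k'+1) hkm
      rw [show m - (k'+1) = m-k'-1 by omega] at ih2
      rw [hc1, qb_succ, show (k':ℤ)+1-1 = (k':ℤ) by ring, hc2,
        show m + 1 - (k'+1) = m-k' by omega]
      calc (qb h m (k':ℤ) + X ^ (2*h*(k'+1)) * qb h m ((k':ℤ)+1)) * PP (2*h) (k'+1) * PP (2*h) (m-k')
          = (qb h m (k':ℤ) * PP (2*h) k' * PP (2*h) (m-k')) * (1 - X ^ (2*h*(k'+1)))
            + X ^ (2*h*(k'+1)) * (1 - X ^ (2*h*(m-k'))) *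
              (qb h m ((k':ℤ)+1) * PP (2*h) (k'+1) * PP (2*h) (m-k'-1)) := by
            rw [PP_succ (2*h) k', show m-k' = (m-k'-1)+1 by omega, PP_succ (2*h) (m-k'-1),
              show (m-k'-1)+1 = m-k' by omega]
            ring
        _ = PP (2*h) m * (1 - X ^ (2*h*(k'+1))) + X ^ (2*h*(k'+1)) * (1 - X ^ (2*h*(m-k'))) * PP (2*h) m := by
            rw [ih1, ← hc1, ih2]
        _ = PP (2*h) m * (1 - X ^ (2*h*(k'+1)) * X ^ (2*h*(m-k'))) := by ring
        _ = PP (2*h) (m+1) := by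
            rw [← pow_add, show 2*h*(k'+1) + 2*h*(m-k') = 2*h*(m+1) by
              rw [← Nat.mul_add]; congr 1; omega, PP_succ]

lemma sq_toNat (j : ℤ) : (j^2).toNat = j.natAbs^2 := by
  rw [← Int.natAbs_sq, ← Nat.cast_pow, Int.toNat_natCast]

def thetaCoeff (h n : ℕ) : ℤ :=
  if n = 0 then 1
  else if h ∣ n ∧ Nat.sqrt (n / h) ^ 2 = n / h then 2 * (-1)^(Nat.sqrt (n/h)) else 0

def Theta (h : ℕ) : PS := PowerSeries.mk fun n => thetaCoeff h n

lemma csign_natCast (k : ℕ) : csign (k:ℤ) = (-1)^k := by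
  by_cases hk : Even k
  · rw [csign, if_pos (by exact_mod_cast hk), hk.neg_one_pow]
  · rw [csign, if_neg (by exact_mod_cast hk), (Nat.odd_iff.mpr (Nat.not_even_iff.mp hk)).neg_one_pow]

lemma csign_neg (j : ℤ) : csign (-j) = csign j := by simp [csign]

lemma coeff_theta_partial (h N : ℕ) (hh : 1 ≤ h) (i : ℕ) (hi : i < N) :
    PowerSeries.coeff (R := ℤ) i (∑ j ∈ Finset.Icc (-(N:ℤ)) (N:ℤ),
      PowerSeries.C (R := ℤ) (csign j) * X ^ (h * (j^2).toNat)) = thetaCoeff h i := by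
  rw [map_sum]
  have hterm : ∀ j : ℤ, PowerSeries.coeff (R := ℤ) i (PowerSeries.C (R := ℤ) (csign j) * X ^ (h*(j^2).toNat))
      = if i = h * (j^2).toNat then csign j else 0 := by
    intro j
    rw [PowerSeries.coeff_C_mul, PowerSeries.coeff_X_pow, mul_ite, mul_one, mul_zero]
  rw [Finset.sum_congr rfl (fun j _ => hterm j), ← Finset.sum_filter]
  rcases eq_or_ne i 0 with rfl | hi0
  · have hfilter : (Finset.Icc (-(N:ℤ)) (N:ℤ)).filter (fun j => 0 = h*(j^2).toNat) = {0} := by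
      ext j
      simp only [Finset.mem_filter, Finset.mem_Icc, Finset.mem_singleton]
      constructor
      · rintro ⟨⟨h1, h2⟩, h3⟩
        have : h * (j^2).toNat = 0 := h3.symm
        rcases Nat.mul_eq_zero.mp this with hc | hc
        · omega
        · rw [sq_toNat] at hc
          have := pow_eq_zero_iff (n := 2) (by omega) |>.mp hc
          omega
      · rintro rfl
        refine ⟨⟨by omega, by omega⟩, by norm_num⟩
    rw [hfilter, Finset.sum_singleton, thetaCoeff]
    simp [csign]
  · rw [thetaCoeff, if_neg hi0]
    by_cases hcond : h ∣ i ∧ Nat.sqrt (i/h) ^ 2 = i / h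
    · rw [if_pos hcond]
      set k := Nat.sqrt (i/h) with hk
      have hik : i = h * k^2 := by
        rw [hcond.2, Nat.mul_div_cancel' hcond.1]
      have hk1 : 1 ≤ k := by
        rcases Nat.eq_zero_or_pos k with hc | hc
        · rw [hc] at hik; simp at hik; omega
        · omega
      have hkN : (k:ℤ) ≤ (N:ℤ) := by
        have : k ≤ i := by calc k ≤ k^2 := by nlinarith
                                _ ≤ h*k^2 := Nat.le_mul_of_pos_left _ (by omega)
                                _ = i := hik.symm
        exact_mod_cast by omega
      have hfilter : (Finset.Icc (-(N:ℤ)) (N:ℤ)).filter (fun j => i = h*(j^2).toNat)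
          = {(k:ℤ), -(k:ℤ)} := by
        ext j
        simp only [Finset.mem_filter, Finset.mem_Icc, Finset.mem_insert, Finset.mem_singleton]
        constructor
        · rintro ⟨⟨h1, h2⟩, h3⟩
          rw [sq_toNat] at h3
          have hsq : k ^ 2 = j.natAbs ^ 2 :=
            Nat.eq_of_mul_eq_mul_left (by omega) (hik.symm.trans h3)
          have : j.natAbs = k := Nat.pow_left_injective (by norm_num) hsq.symm
          rcases Int.natAbs_eq j with he | he
          · left; rw [he, this]
          · right; rw [he, this]
        · rintro (rfl | rfl) <;>
            refine ⟨⟨by omega, by omega⟩, ?_⟩ <;>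
            rw [sq_toNat] <;> simp [hik]
      rw [hfilter, Finset.sum_pair (by
        intro hc
        have : (k:ℤ) = 0 := by omega
        omega), csign_neg, csign_natCast]
      ring
    · rw [if_neg hcond]
      have hfilter : (Finset.Icc (-(N:ℤ)) (N:ℤ)).filter (fun j => i = h*(j^2).toNat) = ∅ := by
        ext j
        simp only [Finset.mem_filter, Finset.mem_Icc, Finset.notMem_empty, iff_false, not_and]
        rintro ⟨h1, h2⟩ h3
        rw [sq_toNat] at h3
        apply hcond
        constructor
        · exact ⟨j.natAbs^2, h3⟩
        · have hsq : (j.natAbs^2).sqrt = j.natAbs := by rw [pow_two, Nat.sqrt_eq]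
          rw [h3, Nat.mul_div_cancel_left _ (by omega), hsq]
      rw [hfilter, Finset.sum_empty]

lemma modX_X_pow_mul {d : ℕ} {f g : PS} (e : ℕ) (h1 : ModX d f g) :
    ModX (e + d) (X ^ e * f) (X ^ e * g) := by
  apply ModX.of_dvd
  have : (X:PS) ^ e * f - X ^ e * g = X ^ e * (f - g) := by ring
  rw [this, pow_add]
  exact mul_dvd_mul_left _ h1.dvd

lemma modX_qb_PP (h N : ℕ) (hh : 1 ≤ h) (j : ℤ) (hj1 : -(N:ℤ) ≤ j) (hj2 : j ≤ (N:ℤ)) :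
    ModX (N - j.natAbs + 1) (qb h (2*N) ((N:ℤ)+j) * PP (2*h) N) 1 := by
  set t := N - j.natAbs with ht
  set D := N - j.natAbs + 1 with hD
  have h2h : 1 ≤ 2*h := by omega
  set k1 := ((N:ℤ)+j).toNat with hk1
  have hk1' : ((k1:ℕ):ℤ) = (N:ℤ)+j := Int.toNat_of_nonneg (by omega)
  have hk1N : k1 ≤ 2*N := by omega
  have hqb : qb h (2*N) ((N:ℤ)+j) = qb h (2*N) ((k1:ℕ):ℤ) := by rw [hk1']
  have hprod := qbProd h (2*N) k1 hk1N
  have htk1 : t ≤ k1 := by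
    rcases Int.natAbs_eq j with he | he <;> omega
  have htl1 : t ≤ 2*N - k1 := by
    rcases Int.natAbs_eq j with he | he <;> omega
  have ht2N : t ≤ 2*N := by omega
  have htN : t ≤ N := by omega
  have m1 : ModX D (PP (2*h) k1) (PP (2*h) t) := modX_PP_extend _ h2h htk1
  have m2 : ModX D (PP (2*h) (2*N - k1)) (PP (2*h) t) := modX_PP_extend _ h2h htl1
  have m3 : ModX D (PP (2*h) (2*N)) (PP (2*h) t) := modX_PP_extend _ h2h ht2N
  have m4 : ModX D (PP (2*h) N) (PP (2*h) t) := modX_PP_extend _ h2h htN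
  -- qb * P t * P t ≡ P t
  have key : ModX D (qb h (2*N) ((N:ℤ)+j) * PP (2*h) t * PP (2*h) t) (PP (2*h) t) := by
    have e1 : ModX D (qb h (2*N) ((N:ℤ)+j) * PP (2*h) t * PP (2*h) t)
        (qb h (2*N) ((N:ℤ)+j) * PP (2*h) k1 * PP (2*h) (2*N - k1)) :=
      ((ModX.refl D _).mul m1.symm).mul m2.symm
    rw [hqb] at e1 ⊢
    rw [hprod] at e1
    exact e1.trans m3
  -- cancel the unit P t
  have hunit : IsUnit (PP (2*h) t) := by
    rw [PowerSeries.isUnit_iff_constantCoeff, constantCoeff_PP _ _ h2h]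
    exact isUnit_one
  have hdvd : (X:PS)^D ∣ (qb h (2*N) ((N:ℤ)+j) * PP (2*h) t - 1) * PP (2*h) t := by
    have : (qb h (2*N) ((N:ℤ)+j) * PP (2*h) t - 1) * PP (2*h) t
        = qb h (2*N) ((N:ℤ)+j) * PP (2*h) t * PP (2*h) t - PP (2*h) t := by ring
    rw [this]
    exact key.dvd
  have hq1 : ModX D (qb h (2*N) ((N:ℤ)+j) * PP (2*h) t) 1 := by
    apply ModX.of_dvd
    exact (hunit.dvd_mul_right).mp hdvd
  have := ((ModX.refl D (qb h (2*N) ((N:ℤ)+j))).mul m4).trans hq1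
  exact this

lemma modX_Ssum_PP (h N : ℕ) (hh : 1 ≤ h) :
    ModX N (Ssum h N * PP (2*h) N)
      (∑ j ∈ Finset.Icc (-(N:ℤ)) (N:ℤ), PowerSeries.C (R := ℤ) (csign j) * X ^ (h * (j^2).toNat)) := by
  rw [Ssum_def, Finset.sum_mul]
  apply ModX.sum
  intro j hj
  rw [Finset.mem_Icc] at hj
  have key := modX_qb_PP h N hh j hj.1 hj.2
  have step := modX_X_pow_mul (h * (j^2).toNat) key
  have step2 := (ModX.refl _ (PowerSeries.C (R := ℤ) (csign j))).mul step
  have e1 : PowerSeries.C (R := ℤ) (csign j) * (X ^ (h * (j^2).toNat) *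
      (qb h (2*N) ((N:ℤ)+j) * PP (2*h) N))
      = PowerSeries.C (R := ℤ) (csign j) * X ^ (h * (j^2).toNat) * qb h (2*N) ((N:ℤ)+j) * PP (2*h) N := by
    ring
  have e2 : PowerSeries.C (R := ℤ) (csign j) * (X ^ (h * (j^2).toNat) * 1)
      = PowerSeries.C (R := ℤ) (csign j) * X ^ (h * (j^2).toNat) := by ring
  rw [e1, e2] at step2
  apply step2.of_le
  have : j.natAbs ≤ h * (j^2).toNat := by
    rw [sq_toNat]
    calc j.natAbs ≤ j.natAbs^2 := by nlinarith
      _ ≤ h * j.natAbs^2 := Nat.le_mul_of_pos_left _ (by omega)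
  omega

theorem gauss_identity (h : ℕ) (hh : 1 ≤ h) :
    (qPochInf ℤ) h ^ 2 = Theta h * (qPochInf ℤ) (2*h) := by
  ext d
  set N := d + 1 with hN
  have h2h : 1 ≤ 2*h := by omega
  have c1 : ModX N ((qPochInf ℤ) h) (PP h (2*N)) :=
    (modX_qPochInf h hh N).trans ((modX_PP_extend h hh (show N ≤ 2*N by omega)).of_le (by omega)).symm
  have c2 : ModX N ((qPochInf ℤ) h ^ 2) (Ssum h N * PP (2*h) N * PP (2*h) N) := by
    have := c1.pow 2
    have e : PP h (2*N) ^ 2 = Ssum h N * PP (2*h) N * PP (2*h) N := by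
      rw [PP_split_parity h N, gauss_finite h N]; ring
    rwa [e] at this
  have c4 := modX_Ssum_PP h N hh
  have c5 : ModX N (∑ j ∈ Finset.Icc (-(N:ℤ)) (N:ℤ),
      PowerSeries.C (R := ℤ) (csign j) * X ^ (h * (j^2).toNat)) (Theta h) := by
    apply ModX.of_dvd
    rw [PowerSeries.X_pow_dvd_iff]
    intro i hi
    rw [map_sub, sub_eq_zero, coeff_theta_partial h N hh i hi, Theta, PowerSeries.coeff_mk]
  have c6 : ModX N (Theta h * (qPochInf ℤ) (2*h)) (Theta h * PP (2*h) N) :=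
    (ModX.refl N (Theta h)).mul (modX_qPochInf (2*h) h2h N)
  have chain : ModX N ((qPochInf ℤ) h ^ 2) (Theta h * (qPochInf ℤ) (2*h)) := by
    refine c2.trans ?_
    refine ((c4.trans c5).mul (ModX.refl N (PP (2*h) N))).trans ?_
    exact c6.symm
  exact chain.coeff_eq (by omega)

abbrev R8 := ZMod 8
abbrev PSR := PowerSeries R8

lemma eight_eq_zero : (8 : PSR) = 0 := by
  have : ((8:ℕ) : PSR) = PowerSeries.C (R := R8) ((8:ℕ) : R8) := (map_natCast (C (R := R8)) 8).symm
  norm_num at this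
  rw [this, show (8:R8) = 0 from rfl, map_zero]

lemma pow_one_add_two (b : PSR) (s : ℕ) :
    (1 + 2*b)^s = 1 + 2*((s:ℕ):PSR)*b + 4*((s.choose 2 : ℕ):PSR)*b^2 := by
  induction s with
  | zero => simp
  | succ s ih =>
      rw [pow_succ, ih]
      have hch : ((s+1).choose 2 : ℕ) = s.choose 2 + s := by
        rw [Nat.choose_succ_succ]
        simp [Nat.choose_one_right]
        omega
      rw [hch]
      push_cast
      linear_combination (((s.choose 2 : ℕ):PSR))*b^3 * eight_eq_zero

lemma quart (b : PSR) : (1 + 2*b)^4 = 1 := by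
  rw [pow_one_add_two, show Nat.choose 4 2 = 6 from rfl]
  push_cast
  linear_combination (b + 3*b^2) * eight_eq_zero

lemma descent (p : ℕ) (hp : p.Prime) (hp5 : 5 ≤ p)
    (hleg : @legendreSym p ⟨hp⟩ (-8) = -1) :
    ∀ β : ℕ, ∀ K k l : ℕ, ¬ (p ∣ K) → k^2 + 2*l^2 ≠ p^(2*β+1) * K := by
  haveI : Fact p.Prime := ⟨hp⟩
  have hp2 : ((2:ℤ) : ZMod p) ≠ 0 := by
    intro h
    have := (ZMod.intCast_zmod_eq_zero_iff_dvd 2 p).mp h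
    have := Int.le_of_dvd (by norm_num) this
    omega
  have hm2 : ((-2:ℤ) : ZMod p) ≠ 0 := by
    intro h
    have := (ZMod.intCast_zmod_eq_zero_iff_dvd (-2) p).mp h
    have := Int.le_of_dvd (by norm_num) (dvd_neg.mp this)
    omega
  have hleg2 : legendreSym p (-2) = -1 := by
    have hmul : legendreSym p (-8) = legendreSym p (-2) * legendreSym p 2 ^ 2 := by
      rw [show (-8 : ℤ) = -2 * (2 * 2) by norm_num, legendreSym.mul, legendreSym.mul, sq]
    rw [legendreSym.sq_one p hp2, mul_one] at hmul
    rw [← hmul]; exact hleg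
  intro β
  induction β using Nat.strong_induction_on with
  | _ β ih =>
    intro K k l hK heq
    have hfield : ((k : ZMod p))^2 = -2 * (l : ZMod p)^2 := by
      have h0 : ((k^2 + 2*l^2 : ℕ) : ZMod p) = ((p^(2*β+1)*K : ℕ) : ZMod p) := by rw [heq]
      push_cast at h0
      rw [ZMod.natCast_self] at h0
      simp [zero_pow] at h0
      linear_combination h0
    have hl : (l : ZMod p) = 0 := by
      by_contra hl0
      have hsq : IsSquare ((-2 : ℤ) : ZMod p) := by
        refine ⟨(k : ZMod p) * ((l : ZMod p))⁻¹, ?_⟩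
        push_cast
        rw [show ((k:ZMod p) * (l:ZMod p)⁻¹) * ((k:ZMod p) * (l:ZMod p)⁻¹)
            = (k:ZMod p)^2 * ((l:ZMod p)⁻¹)^2 by ring, hfield]
        field_simp
      have := (legendreSym.eq_one_iff p hm2).mpr hsq
      rw [hleg2] at this
      norm_num at this
    have hkz : (k : ZMod p) = 0 := by
      have : ((k : ZMod p))^2 = 0 := by rw [hfield, hl]; ring
      exact pow_eq_zero_iff (by norm_num) |>.mp this
    obtain ⟨l', rfl⟩ := (ZMod.natCast_eq_zero_iff l p).mp hl
    obtain ⟨k', rfl⟩ := (ZMod.natCast_eq_zero_iff k p).mp hkz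
    have hpos : 0 < p := by omega
    have heq2 : p^2 * (k'^2 + 2*l'^2) = p^(2*β+1) * K := by
      rw [← heq]; ring
    rcases Nat.eq_zero_or_pos β with rfl | hβ
    · -- p^1 * K
      have : p * (p * (k'^2 + 2*l'^2)) = p * K := by
        rw [show p * (p * (k'^2 + 2*l'^2)) = p^2 * (k'^2 + 2*l'^2) by ring, heq2]
        norm_num
      have hK' : p * (k'^2 + 2*l'^2) = K := Nat.eq_of_mul_eq_mul_left hpos this
      exact hK ⟨_, hK'.symm⟩
    · obtain ⟨β', rfl⟩ : ∃ β', β = β' + 1 := ⟨β - 1, by omega⟩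
      have : p^2 * (k'^2 + 2*l'^2) = p^2 * (p^(2*β'+1) * K) := by
        rw [heq2]; ring
      have heq3 : k'^2 + 2*l'^2 = p^(2*β'+1) * K :=
        Nat.eq_of_mul_eq_mul_left (by positivity) this
      exact ih β' (by omega) K k' l' hK heq3


-- remaining glue

-- ===================== glue part A : Bser ==========================

def bcoeff (h n : ℕ) : ℤ :=
  if n = 0 then 0
  else if h ∣ n ∧ Nat.sqrt (n / h) ^ 2 = n / h then (-1)^(Nat.sqrt (n/h)) else 0

def Bser (h : ℕ) : PS := PowerSeries.mk fun n => bcoeff h n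

lemma theta_eq (h : ℕ) : Theta h = 1 + 2 * Bser h := by
  ext n
  rw [map_add, Theta, PowerSeries.coeff_mk, two_mul, map_add, Bser, PowerSeries.coeff_mk]
  rcases eq_or_ne n 0 with rfl | hn
  · simp [thetaCoeff, bcoeff]
  · rw [thetaCoeff, bcoeff, if_neg hn, if_neg hn, PowerSeries.coeff_one, if_neg hn]
    split_ifs <;> ring

lemma bcoeff_ne {h n : ℕ} (hne : bcoeff h n ≠ 0) : ∃ k, 1 ≤ k ∧ n = h * k^2 := by
  rw [bcoeff] at hne
  split_ifs at hne with h0 hc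
  · exact absurd rfl hne
  · refine ⟨Nat.sqrt (n/h), ?_, ?_⟩
    · by_contra hk
      have hk0 : Nat.sqrt (n/h) = 0 := by omega
      have h2 := hc.2
      rw [hk0] at h2
      norm_num at h2
      have h3 := Nat.mul_div_cancel' hc.1
      rw [← h2, mul_zero] at h3
      exact h0 h3.symm
    · have h3 := Nat.mul_div_cancel' hc.1
      rw [← hc.2] at h3
      exact h3.symm
  · exact absurd rfl hne

lemma Theta_ne_zero (h : ℕ) : Theta h ≠ 0 := by
  intro h0
  have : PowerSeries.coeff (R := ℤ) 0 (Theta h) = 0 := by rw [h0]; simp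
  rw [Theta, PowerSeries.coeff_mk, thetaCoeff] at this
  simp at this

-- ===================== glue part B : the functional equation ==========================

lemma abar_eq (abar : ℕ → ℕ → ℕ) (habar : IsGenOvercubic abar) (m : ℕ) :
    (PowerSeries.mk fun n => (abar (2*m+2) n : ℤ)) * Theta 1 * Theta 2 ^ (2*m+1) = 1 := by
  have h := habar (2*m+2) (by omega)
  rw [show (2*m+2) - 1 = 2*m+1 by omega] at h
  set A := (PowerSeries.mk fun n => (abar (2*m+2) n : ℤ)) with hA
  have g1 : qPochInf ℤ 1 ^2 = Theta 1 * qPochInf ℤ 2 := by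
    have := gauss_identity 1 (le_refl 1)
    rwa [show 2*1 = 2 from rfl] at this
  have g2 : qPochInf ℤ 2 ^2 = Theta 2 * qPochInf ℤ 4 := by
    have := gauss_identity 2 (by omega)
    rwa [show 2*2 = 4 from rfl] at this
  have key : (A * Theta 1 * Theta 2 ^ (2*m+1)) * (Theta 2 * (qPochInf ℤ 2 * qPochInf ℤ 4 ^ (2*m+2)))
      = 1 * (Theta 2 * (qPochInf ℤ 2 * qPochInf ℤ 4 ^ (2*m+2))) := by
    calc (A * Theta 1 * Theta 2 ^ (2*m+1)) * (Theta 2 * (qPochInf ℤ 2 * qPochInf ℤ 4 ^ (2*m+2)))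
        = A * (Theta 1 * qPochInf ℤ 2) * (Theta 2 * qPochInf ℤ 4)^(2*m+2) := by ring
      _ = A * qPochInf ℤ 1 ^2 * (qPochInf ℤ 2 ^2)^(2*m+2) := by rw [g1, g2]
      _ = A * qPochInf ℤ 1 ^2 * qPochInf ℤ 2 ^(2*(2*m+2)) := by rw [← pow_mul]
      _ = qPochInf ℤ 4 ^(2*m+1) * qPochInf ℤ 2 ^3 := h
      _ = (qPochInf ℤ 2 ^2) * qPochInf ℤ 2 * qPochInf ℤ 4 ^ (2*m+1) := by ring
      _ = (Theta 2 * qPochInf ℤ 4) * qPochInf ℤ 2 * qPochInf ℤ 4 ^(2*m+1) := by rw [g2]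
      _ = 1 * (Theta 2 * (qPochInf ℤ 2 * qPochInf ℤ 4 ^ (2*m+2))) := by ring
  have hnz : Theta 2 * (qPochInf ℤ 2 * qPochInf ℤ 4 ^ (2*m+2)) ≠ 0 :=
    mul_ne_zero (Theta_ne_zero 2)
      (mul_ne_zero (qPochInf_ne_zero 2 (by omega))
        (pow_ne_zero _ (qPochInf_ne_zero 4 (by omega))))
  exact mul_right_cancel₀ hnz key

-- ===================== glue part C : coefficient vanishing ==========================

section Vanish
variable {M : ℕ}

lemma mcast8 (hM8 : M % 8 = 3) : ((M:ℕ) : ZMod 8) = 3 := by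
  rw [← ZMod.natCast_mod, hM8]
  norm_num

lemma v1 (hM8 : M % 8 = 3) : PowerSeries.coeff (R := ℤ) M (Bser 1) = 0 := by
  rw [Bser, PowerSeries.coeff_mk]
  by_contra hne
  obtain ⟨k, hk1, hk2⟩ := bcoeff_ne hne
  rw [one_mul] at hk2
  have h2 : ((k:ZMod 8))^2 = 3 := by
    rw [← mcast8 hM8, hk2]; push_cast; ring
  exact (by decide : ∀ x : ZMod 8, x^2 ≠ 3) _ h2

lemma v2 (hModd : M % 2 = 1) : PowerSeries.coeff (R := ℤ) M (Bser 2) = 0 := by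
  rw [Bser, PowerSeries.coeff_mk]
  by_contra hne
  obtain ⟨k, hk1, hk2⟩ := bcoeff_ne hne
  have : M = 2 * k^2 := hk2
  set K := k^2
  omega

lemma v3 (hM8 : M % 8 = 3) : PowerSeries.coeff (R := ℤ) M (Bser 1 * Bser 1) = 0 := by
  rw [PowerSeries.coeff_mul]
  apply Finset.sum_eq_zero
  intro x hx
  rw [Finset.HasAntidiagonal.mem_antidiagonal] at hx
  simp only [Bser, PowerSeries.coeff_mk]
  by_contra hne
  obtain ⟨hne1, hne2⟩ := mul_ne_zero_iff.mp hne
  obtain ⟨k, _, hk⟩ := bcoeff_ne hne1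
  obtain ⟨l, _, hl⟩ := bcoeff_ne hne2
  rw [one_mul] at hk hl
  have h2 : ((k:ZMod 8))^2 + ((l:ZMod 8))^2 = 3 := by
    rw [← mcast8 hM8, ← hx, hk, hl]; push_cast; ring
  exact (by decide : ∀ x y : ZMod 8, x^2 + y^2 ≠ 3) _ _ h2

lemma v4 (hModd : M % 2 = 1) : PowerSeries.coeff (R := ℤ) M (Bser 2 * Bser 2) = 0 := by
  rw [PowerSeries.coeff_mul]
  apply Finset.sum_eq_zero
  intro x hx
  rw [Finset.HasAntidiagonal.mem_antidiagonal] at hx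
  simp only [Bser, PowerSeries.coeff_mk]
  by_contra hne
  obtain ⟨hne1, hne2⟩ := mul_ne_zero_iff.mp hne
  obtain ⟨k, _, hk⟩ := bcoeff_ne hne1
  obtain ⟨l, _, hl⟩ := bcoeff_ne hne2
  have : x.1 + x.2 = M := hx
  set K := k^2
  set L := l^2
  omega

lemma v5 (hnorep : ∀ k l : ℕ, k^2 + 2*l^2 ≠ M) :
    PowerSeries.coeff (R := ℤ) M (Bser 1 * Bser 2) = 0 := by
  rw [PowerSeries.coeff_mul]
  apply Finset.sum_eq_zero
  intro x hx
  rw [Finset.HasAntidiagonal.mem_antidiagonal] at hx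
  simp only [Bser, PowerSeries.coeff_mk]
  by_contra hne
  obtain ⟨hne1, hne2⟩ := mul_ne_zero_iff.mp hne
  obtain ⟨k, _, hk⟩ := bcoeff_ne hne1
  obtain ⟨l, _, hl⟩ := bcoeff_ne hne2
  rw [one_mul] at hk
  exact hnorep k l (by rw [← hk, ← hl]; exact hx)

end Vanish


/-- Let `p ≥ 5` be a prime with Legendre symbol `(-8/p) = -1` and `1 ≤ r ≤ p - 1`.
Then for all `m, α, n ≥ 0`,
`a̅_{2m+2}(8 p^(2α+1)(pn + r) + 3 p^(2α+2)) ≡ 0 (mod 8)`. -/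
theorem overcubic_even_vanish_three_mod_eight (abar : ℕ → ℕ → ℕ)
    (habar : IsGenOvercubic abar)
    (p : ℕ) (hp : p.Prime) (hp5 : 5 ≤ p) (hleg : @legendreSym p ⟨hp⟩ (-8) = -1)
    (r : ℕ) (hr1 : 1 ≤ r) (hr2 : r ≤ p - 1) (m α n : ℕ) :
    abar (2 * m + 2) (8 * p ^ (2 * α + 1) * (p * n + r) + 3 * p ^ (2 * α + 2)) ≡ 0 [MOD 8] := by
  haveI : Fact p.Prime := ⟨hp⟩
  set M : ℕ := 8 * p ^ (2 * α + 1) * (p * n + r) + 3 * p ^ (2 * α + 2) with hM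
  have hppos : 0 < p := by omega
  have hodd : p % 2 = 1 := Nat.odd_iff.mp (hp.odd_of_ne_two (by omega))
  have hp2mod : p^2 % 8 = 1 := by
    have h3 : p^2 % 8 = (p % 8)^2 % 8 := by rw [Nat.pow_mod]
    have h1 : p % 8 < 8 := Nat.mod_lt _ (by norm_num)
    have h2 : p % 8 % 2 = 1 := by omega
    set u := p % 8 with hu
    interval_cases u <;> norm_num at h3 h2 <;> omega
  have hpow8 : p^(2*α+2) % 8 = 1 := by
    have e : p^(2*α+2) = (p^2)^(α+1) := by ring
    rw [e, Nat.pow_mod, hp2mod, one_pow]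
    norm_num
  have hM8 : M % 8 = 3 := by
    have e : M = 8 * (p^(2*α+1) * (p*n+r)) + 3 * p^(2*α+2) := by rw [hM]; ring
    generalize hA : p^(2*α+1) * (p*n+r) = A at e
    generalize hB : p^(2*α+2) = B at e hpow8
    omega
  have hModd : M % 2 = 1 := by omega
  have hMne : M ≠ 0 := by omega
  have hK : ¬ p ∣ (8*(p*n+r) + 3*p) := by
    intro hdvd
    have h0 : ((8*(p*n+r) + 3*p : ℕ) : ZMod p) = 0 :=
      (ZMod.natCast_eq_zero_iff _ p).mpr hdvd
    push_cast [ZMod.natCast_self] at h0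
    have h8r : ((8*r : ℕ) : ZMod p) = 0 := by push_cast; linear_combination h0
    have hdvd8r : p ∣ 8*r := (ZMod.natCast_eq_zero_iff _ p).mp h8r
    rcases (Nat.Prime.dvd_mul hp).mp hdvd8r with h8 | hr
    · have hle := Nat.le_of_dvd (by norm_num) h8
      interval_cases p <;>
        first
          | omega
          | exact absurd hp (by norm_num)
    · have hle := Nat.le_of_dvd (by omega) hr
      omega
  have hnorep : ∀ k l : ℕ, k^2 + 2*l^2 ≠ M := by
    intro k l heqkl
    refine descent p hp hp5 hleg α (8*(p*n+r)+3*p) k l hK (heqkl.trans ?_)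
    rw [hM]; ring
  -- power series part
  have heq := abar_eq abar habar m
  rw [theta_eq 1, theta_eq 2] at heq
  set B1 : PSR := PowerSeries.map (Int.castRingHom R8) (Bser 1) with hB1
  set B2 : PSR := PowerSeries.map (Int.castRingHom R8) (Bser 2) with hB2
  set A8 : PSR := PowerSeries.map (Int.castRingHom R8)
    (PowerSeries.mk fun n => (abar (2*m+2) n : ℤ)) with hA8def
  have heq8 : A8 * (1 + 2*B1) * (1 + 2*B2)^(2*m+1) = 1 := by
    have h' := congrArg (PowerSeries.map (Int.castRingHom R8)) heq
    rw [map_mul, map_mul, map_pow, map_add, map_add, map_mul, map_mul, map_one] at h'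
    simp only [map_ofNat] at h'
    exact h'
  have hA8 : A8 = (1+2*B1)^3 * (1+2*B2)^(6*m+3) := by
    have key : ((1+2*B1) * (1+2*B2)^(2*m+1)) * ((1+2*B1)^3 * (1+2*B2)^(6*m+3)) = 1 := by
      have hb : (1+2*B1) * (1+2*B1)^3 = (1+2*B1)^4 := by
        rw [← pow_succ']
      have hb2 : (1+2*B2)^(2*m+1) * (1+2*B2)^(6*m+3) = ((1+2*B2)^4)^(2*m+1) := by
        rw [← pow_add, ← pow_mul]
        congr 1
        ring
      calc ((1+2*B1) * (1+2*B2)^(2*m+1)) * ((1+2*B1)^3 * (1+2*B2)^(6*m+3))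
          = ((1+2*B1) * (1+2*B1)^3) * ((1+2*B2)^(2*m+1) * (1+2*B2)^(6*m+3)) := by
            rw [mul_mul_mul_comm]
        _ = (1+2*B1)^4 * ((1+2*B2)^4)^(2*m+1) := by rw [hb, hb2]
        _ = 1 := by rw [quart, quart, one_pow, one_mul]
    calc A8 = A8 * (((1+2*B1) * (1+2*B2)^(2*m+1)) * ((1+2*B1)^3 * (1+2*B2)^(6*m+3))) := by
          rw [key, mul_one]
      _ = (A8 * (1+2*B1) * (1+2*B2)^(2*m+1)) * ((1+2*B1)^3 * (1+2*B2)^(6*m+3)) := by ring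
      _ = (1+2*B1)^3 * (1+2*B2)^(6*m+3) := by rw [heq8, one_mul]
  set s' : PSR := ((6*m+3 : ℕ) : PSR) with hs'
  set t' : PSR := (((6*m+3).choose 2 : ℕ) : PSR) with ht'
  have expand : A8 = 1 + 6*B1 + 2*s'*B2 + 12*(B1*B1) + 4*t'*(B2*B2) + 12*s'*(B1*B2) := by
    rw [hA8, pow_one_add_two B1 3, pow_one_add_two B2 (6*m+3), show Nat.choose 3 2 = 3 from rfl,
      ← hs', ← ht']
    push_cast
    linear_combination (3*t'*B1*B2^2 + 3*s'*B1^2*B2 + 6*t'*B1^2*B2^2) * eight_eq_zero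
  have hc1 : PowerSeries.coeff (R := R8) M B1 = 0 := by
    rw [hB1, PowerSeries.coeff_map, v1 hM8, map_zero]
  have hc2 : PowerSeries.coeff (R := R8) M B2 = 0 := by
    rw [hB2, PowerSeries.coeff_map, v2 hModd, map_zero]
  have hc11 : PowerSeries.coeff (R := R8) M (B1*B1) = 0 := by
    rw [hB1, ← map_mul, PowerSeries.coeff_map, v3 hM8, map_zero]
  have hc22 : PowerSeries.coeff (R := R8) M (B2*B2) = 0 := by
    rw [hB2, ← map_mul, PowerSeries.coeff_map, v4 hModd, map_zero]
  have hc12 : PowerSeries.coeff (R := R8) M (B1*B2) = 0 := by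
    rw [hB1, hB2, ← map_mul, PowerSeries.coeff_map, v5 hnorep, map_zero]
  have hfin : PowerSeries.coeff (R := R8) M A8 = 0 := by
    rw [expand, map_add, map_add, map_add, map_add, map_add]
    have T0 : PowerSeries.coeff (R := R8) M (1 : PSR) = 0 := by
      rw [PowerSeries.coeff_one, if_neg hMne]
    have T1 : PowerSeries.coeff (R := R8) M (6*B1) = 0 := by
      rw [show (6:PSR) = PowerSeries.C (R := R8) 6 from (map_ofNat (PowerSeries.C (R := R8)) 6).symm,
        PowerSeries.coeff_C_mul, hc1, mul_zero]
    have T2 : PowerSeries.coeff (R := R8) M (2*s'*B2) = 0 := by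
      rw [hs', show (2:PSR) = PowerSeries.C (R := R8) 2 from (map_ofNat (PowerSeries.C (R := R8)) 2).symm,
        show ((6*m+3:ℕ):PSR) = PowerSeries.C (R := R8) ((6*m+3:ℕ):R8) from
          (map_natCast (PowerSeries.C (R := R8)) _).symm,
        ← map_mul, PowerSeries.coeff_C_mul, hc2, mul_zero]
    have T3 : PowerSeries.coeff (R := R8) M (12*(B1*B1)) = 0 := by
      rw [show (12:PSR) = PowerSeries.C (R := R8) 12 from (map_ofNat (PowerSeries.C (R := R8)) 12).symm,
        PowerSeries.coeff_C_mul, hc11, mul_zero]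
    have T4 : PowerSeries.coeff (R := R8) M (4*t'*(B2*B2)) = 0 := by
      rw [ht', show (4:PSR) = PowerSeries.C (R := R8) 4 from (map_ofNat (PowerSeries.C (R := R8)) 4).symm,
        show (((6*m+3).choose 2:ℕ):PSR) = PowerSeries.C (R := R8) (((6*m+3).choose 2:ℕ):R8) from
          (map_natCast (PowerSeries.C (R := R8)) _).symm,
        ← map_mul, PowerSeries.coeff_C_mul, hc22, mul_zero]
    have T5 : PowerSeries.coeff (R := R8) M (12*s'*(B1*B2)) = 0 := by
      rw [hs', show (12:PSR) = PowerSeries.C (R := R8) 12 from (map_ofNat (PowerSeries.C (R := R8)) 12).symm,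
        show ((6*m+3:ℕ):PSR) = PowerSeries.C (R := R8) ((6*m+3:ℕ):R8) from
          (map_natCast (PowerSeries.C (R := R8)) _).symm,
        ← map_mul, PowerSeries.coeff_C_mul, hc12, mul_zero]
    rw [T0, T1, T2, T3, T4, T5]
    norm_num
  have hcast : ((abar (2*m+2) M : ℕ) : R8) = 0 := by
    have e : PowerSeries.coeff (R := R8) M A8 = ((abar (2*m+2) M : ℕ) : R8) := by
      rw [hA8def, PowerSeries.coeff_map, PowerSeries.coeff_mk]
      push_cast
      rfl
    rw [← e, hfin]
  have hdvd8 : (8:ℕ) ∣ abar (2*m+2) M := (ZMod.natCast_eq_zero_iff _ 8).mp hcast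
  exact (Nat.modEq_zero_iff_dvd).mpr hdvd8

end
end

section
/- For all integers m ≥ 0 and n ≥ 0, the generalized overcubic partition function satisfies a̅_{2m+2}(8n + 7) ≡ 0 (mod 8). -/
namespace OCaux

open PowerSeries Finset

variable {A : Type*} [CommRing A]

/-- congruence mod `X^M` -/
def Md (M : ℕ) (F G : PowerSeries A) : Prop := (X : PowerSeries A) ^ M ∣ F - G

theorem Md.refl {M : ℕ} (F : PowerSeries A) : Md M F F := by simp [Md]

theorem Md.symm {M : ℕ} {F G : PowerSeries A} (h : Md M F G) : Md M G F := by
  simpa [Md] using (dvd_neg.2 h)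

theorem Md.trans {M : ℕ} {F G H : PowerSeries A} (h1 : Md M F G) (h2 : Md M G H) :
    Md M F H := by
  have := dvd_add h1 h2
  simpa [Md] using this

theorem Md.add {M : ℕ} {F G F' G' : PowerSeries A} (h1 : Md M F F') (h2 : Md M G G') :
    Md M (F + G) (F' + G') := by
  have := dvd_add h1 h2
  simpa [Md, sub_add_sub_comm] using this

theorem Md.mul {M : ℕ} {F G F' G' : PowerSeries A} (h1 : Md M F F') (h2 : Md M G G') :
    Md M (F * G) (F' * G') := by
  have : F * G - F' * G' = F * (G - G') + (F - F') * G' := by ring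
  rw [Md, this]
  exact dvd_add (Dvd.dvd.mul_left h2 F) (Dvd.dvd.mul_right h1 G')

theorem Md.pow {M : ℕ} {F G : PowerSeries A} (h : Md M F G) (k : ℕ) :
    Md M (F ^ k) (G ^ k) := by
  induction k with
  | zero => simpa using Md.refl 1
  | succ k ih => rw [pow_succ, pow_succ]; exact ih.mul h

theorem Md.sum {M : ℕ} {s : Finset ℕ} {f g : ℕ → PowerSeries A}
    (h : ∀ i ∈ s, Md M (f i) (g i)) :
    Md M (∑ i ∈ s, f i) (∑ i ∈ s, g i) := by
  classical
  induction s using Finset.induction with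
  | empty => simpa using Md.refl 0
  | insert _ _ hni ih =>
      rw [Finset.sum_insert hni, Finset.sum_insert hni]
      exact (h _ (Finset.mem_insert_self _ _)).add
        (ih fun i hi => h i (Finset.mem_insert_of_mem hi))

theorem Md.of_dvd {M : ℕ} {F : PowerSeries A} (h : (X : PowerSeries A) ^ M ∣ F) :
    Md M F 0 := by unfold Md; simpa using h

theorem Md.coeff_eq {M : ℕ} {F G : PowerSeries A} (h : Md M F G) {j : ℕ} (hj : j < M) :
    coeff (R := A) j F = coeff (R := A) j G := by
  have h0 : coeff (R := A) j (F - G) = 0 := X_pow_dvd_iff.1 h j hj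
  rw [map_sub] at h0
  exact sub_eq_zero.1 h0

theorem Md.map {M : ℕ} {F G : PowerSeries A} (h : Md M F G)
    {B : Type*} [CommRing B] (f : A →+* B) :
    Md M (PowerSeries.map f F) (PowerSeries.map f G) := by
  obtain ⟨d, hd⟩ := h
  refine ⟨PowerSeries.map f d, ?_⟩
  have := congrArg (PowerSeries.map f) hd
  simpa [map_sub, map_mul, map_pow] using this



/-- finite q-Pochhammer-type product `∏_{k<n} (1 - u^(k+1))` -/
noncomputable def E (u : PowerSeries A) (n : ℕ) : PowerSeries A :=
  ∏ k ∈ range n, (1 - u ^ (k + 1))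

theorem E_zero (u : PowerSeries A) : E u 0 = 1 := rfl

theorem E_succ (u : PowerSeries A) (n : ℕ) : E u (n + 1) = E u n * (1 - u ^ (n + 1)) :=
  Finset.prod_range_succ _ _

theorem constantCoeff_E {u : PowerSeries A} (hu : constantCoeff (R := A) u = 0) (n : ℕ) :
    constantCoeff (R := A) (E u n) = 1 := by
  unfold E
  rw [map_prod]
  refine Finset.prod_eq_one fun k _ => ?_
  simp [map_sub, map_pow, hu]

theorem E_ne_zero {u : PowerSeries ℤ} (hu : constantCoeff (R := ℤ) u = 0) (n : ℕ) :
    E u n ≠ 0 := by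
  intro h
  have := constantCoeff_E hu n
  rw [h] at this
  simp at this

/-- products of factors `1 - u^(k+1)` with all exponents at least `M` are `≡ 1` -/
theorem prod_one_sub_md {u : PowerSeries A} (hu : (X : PowerSeries A) ∣ u)
    {M : ℕ} (s : Finset ℕ) (hs : ∀ k ∈ s, M ≤ k + 1) :
    Md M (∏ k ∈ s, (1 - u ^ (k + 1))) 1 := by
  classical
  induction s using Finset.induction with
  | empty => simpa using Md.refl 1
  | insert a s hni ih =>
      rw [Finset.prod_insert hni]
      have ha : (X : PowerSeries A) ^ M ∣ u ^ (a + 1) := by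
        calc (X : PowerSeries A) ^ M ∣ X ^ (a + 1) :=
              pow_dvd_pow _ (hs a (Finset.mem_insert_self _ _))
          _ ∣ u ^ (a + 1) := pow_dvd_pow_of_dvd hu _
      have h1 : Md M (1 - u ^ (a + 1)) 1 := by
        unfold Md
        simpa using dvd_neg.2 ha
      have h2 := ih fun k hk => hs k (Finset.mem_insert_of_mem hk)
      simpa using h1.mul h2

theorem E_split (u : PowerSeries A) {a b : ℕ} (hab : a ≤ b) :
    E u b = E u a * ∏ k ∈ Finset.Ico a b, (1 - u ^ (k + 1)) := by
  unfold E
  rw [Finset.range_eq_Ico, Finset.range_eq_Ico]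
  exact (Finset.prod_Ico_consecutive (fun k => 1 - u ^ (k + 1)) (Nat.zero_le a) hab).symm

theorem E_stab {u : PowerSeries A} (hu : (X : PowerSeries A) ∣ u) {M a b : ℕ}
    (hM : M ≤ a + 1) (hab : a ≤ b) : Md M (E u b) (E u a) := by
  rw [E_split u hab]
  have h1 : Md M (∏ k ∈ Finset.Ico a b, (1 - u ^ (k + 1))) 1 :=
    prod_one_sub_md hu _ fun k hk => le_trans hM (by
      have := (Finset.mem_Ico.1 hk).1; omega)
  simpa using ((Md.refl (E u a)).mul h1)

theorem E_X_pow (h : ℕ) (n : ℕ) :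
    E ((X : PowerSeries A) ^ h) n = ∏ k ∈ range n, (1 - (X : PowerSeries A) ^ (h * (k + 1))) := by
  unfold E
  refine Finset.prod_congr rfl fun k _ => ?_
  rw [pow_mul]

theorem coeff_qPochInf (h n : ℕ) :
    coeff (R := A) n (qPochInf A h) = coeff (R := A) n (E ((X : PowerSeries A) ^ h) (n + 1)) := by
  rw [E_X_pow]
  simp [qPochInf]

theorem qPochInf_md (h : ℕ) (hh : 1 ≤ h) {M j : ℕ} (hMj : M ≤ j + 1) :
    Md M (qPochInf A h) (E ((X : PowerSeries A) ^ h) j) := by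
  have hX : (X : PowerSeries A) ∣ X ^ h := dvd_pow_self _ (by omega)
  unfold Md
  rw [X_pow_dvd_iff]
  intro i hi
  rw [map_sub, sub_eq_zero, coeff_qPochInf]
  have h1 : Md (i+1) (E ((X : PowerSeries A) ^ h) (max (i+1) j)) (E ((X:PowerSeries A)^h) (i+1)) :=
    E_stab hX (by omega) (le_max_left _ _)
  have h2 : Md (i+1) (E ((X : PowerSeries A) ^ h) (max (i+1) j)) (E ((X:PowerSeries A)^h) j) :=
    E_stab hX (by omega) (le_max_right _ _)
  rw [← h1.coeff_eq (by omega), h2.coeff_eq (by omega)]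

theorem constantCoeff_X_pow_eq_zero {h : ℕ} (hh : 1 ≤ h) :
    constantCoeff (R := A) ((X : PowerSeries A) ^ h) = 0 := by
  rw [← coeff_zero_eq_constantCoeff_apply, coeff_X_pow]
  simp; omega

theorem constantCoeff_qPochInf (h : ℕ) (hh : 1 ≤ h) :
    constantCoeff (R := A) (qPochInf A h) = 1 := by
  rw [← coeff_zero_eq_constantCoeff_apply, coeff_qPochInf]
  rw [coeff_zero_eq_constantCoeff_apply, constantCoeff_E (constantCoeff_X_pow_eq_zero hh)]

section Bsec
open PowerSeries Finset

/-- inverse of a power series with constant coefficient 1 -/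
noncomputable def Iv (f : PowerSeries ℤ) : PowerSeries ℤ := PowerSeries.invOfUnit f 1

theorem mul_Iv {f : PowerSeries ℤ} (hf : constantCoeff (R := ℤ) f = 1) : f * Iv f = 1 :=
  PowerSeries.mul_invOfUnit f 1 (by rw [hf]; rfl)

theorem Iv_one : Iv (1 : PowerSeries ℤ) = 1 := by
  have h := mul_Iv (f := (1 : PowerSeries ℤ)) (by simp)
  rwa [one_mul] at h

variable (u : PowerSeries ℤ)

theorem constantCoeff_u_sq (hu : constantCoeff (R := ℤ) u = 0) : constantCoeff (R := ℤ) (u ^ 2) = 0 := by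
  rw [map_pow, hu]; ring

/-- Gaussian binomial-type series `[m choose r]` in base `u^2` -/
noncomputable def Bq (m r : ℕ) : PowerSeries ℤ :=
  if r ≤ m then E (u ^ 2) m * Iv (E (u ^ 2) r) * Iv (E (u ^ 2) (m - r)) else 0

theorem Bq_zero {m r : ℕ} (h : m < r) : Bq u m r = 0 := by
  unfold Bq
  rw [if_neg (by omega)]

variable (hu : constantCoeff (R := ℤ) u = 0)

theorem Bq_mul (hu : constantCoeff (R := ℤ) u = 0) {m r : ℕ} (h : r ≤ m) :
    Bq u m r * (E (u ^ 2) r * E (u ^ 2) (m - r)) = E (u ^ 2) m := by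
  unfold Bq
  rw [if_pos h]
  have h1 := mul_Iv (constantCoeff_E (constantCoeff_u_sq u hu) r)
  have h2 := mul_Iv (constantCoeff_E (constantCoeff_u_sq u hu) (m - r))
  calc E (u ^ 2) m * Iv (E (u ^ 2) r) * Iv (E (u ^ 2) (m - r)) * (E (u ^ 2) r * E (u ^ 2) (m - r))
      = E (u ^ 2) m * (E (u ^ 2) r * Iv (E (u ^ 2) r)) * (E (u ^ 2) (m - r) * Iv (E (u ^ 2) (m-r))) := by
        ring
    _ = E (u ^ 2) m := by rw [h1, h2]; ring

theorem Bq_self (hu : constantCoeff (R := ℤ) u = 0) (m : ℕ) : Bq u m m = 1 := by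
  unfold Bq
  rw [if_pos le_rfl]
  have h1 := mul_Iv (constantCoeff_E (constantCoeff_u_sq u hu) m)
  simp only [Nat.sub_self]
  rw [E_zero, Iv_one, mul_one]
  exact h1

theorem E_cancel (hu : constantCoeff (R := ℤ) u = 0) {j : ℕ} {x y : PowerSeries ℤ}
    (h : x * E (u ^ 2) j = y * E (u ^ 2) j) : x = y :=
  mul_right_cancel₀ (E_ne_zero (constantCoeff_u_sq u hu) j) h

end Bsec

section StarSec
open PowerSeries Finset
variable (u : PowerSeries ℤ)

theorem E_cancel2 (hu : constantCoeff (R := ℤ) u = 0) {i j : ℕ} {x y : PowerSeries ℤ}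
    (h : x * (E (u^2) i * E (u^2) j) = y * (E (u^2) i * E (u^2) j)) : x = y := by
  apply E_cancel u hu (j := i)
  apply E_cancel u hu (j := j)
  calc x * E (u^2) i * E (u^2) j = x * (E (u^2) i * E (u^2) j) := by ring
    _ = y * (E (u^2) i * E (u^2) j) := h
    _ = y * E (u^2) i * E (u^2) j := by ring

theorem E_succ' (v : PowerSeries ℤ) {a b : ℕ} (h : b = a + 1) :
    E v b = E v a * (1 - v ^ b) := by
  subst h; exact E_succ v a

theorem pow_split (v : PowerSeries ℤ) {a b c : ℕ} (h : a = b + c) :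
    v ^ a = v ^ b * v ^ c := by rw [h, pow_add]

/-- the Pascal-type three-term recurrence for the symmetric Gaussian binomials -/
theorem star (hu : constantCoeff (R := ℤ) u = 0) {n k : ℕ} (hk : k ≤ n) :
    Bq u (2*n+2) (n+k+2) =
      Bq u (2*n) (n+k+1) * (1 + (u^2)^(2*n+1))
      + (u^2)^(n-k) * Bq u (2*n) (n+k)
      + (u^2)^(n+k+2) * Bq u (2*n) (n+k+2) := by
  set Q := u^2 with hQ
  rcases eq_or_lt_of_le hk with rfl | hlt
  · -- k = n
    rw [show k+k+2 = 2*k+2 from by omega, show k+k+1 = 2*k+1 from by omega,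
      show k+k = 2*k from by omega, show k-k = 0 from by omega]
    rw [Bq_self u hu, Bq_zero u (show 2*k < 2*k+1 from by omega),
      Bq_zero u (show 2*k < 2*k+2 from by omega), Bq_self u hu]
    simp
  · -- k < n
    apply E_cancel2 u hu (i := n+k+2) (j := n-k)
    have hL : Bq u (2*n+2) (n+k+2) * (E Q (n+k+2) * E Q (n-k)) = E Q (2*n+2) := by
      have b := Bq_mul u hu (m := 2*n+2) (r := n+k+2) (by omega)
      rw [show 2*n+2 - (n+k+2) = n-k from by omega] at b
      exact b
    have e2n1 : E Q (2*n+1) = E Q (2*n) * (1 - Q^(2*n+1)) := E_succ' Q (by omega)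
    have e2n2 : E Q (2*n+2) = E Q (2*n+1) * (1 - Q^(2*n+2)) := E_succ' Q (by omega)
    have enk2 : E Q (n+k+2) = E Q (n+k+1) * (1 - Q^(n+k+2)) := E_succ' Q (by omega)
    have enk1 : E Q (n+k+1) = E Q (n+k) * (1 - Q^(n+k+1)) := E_succ' Q (by omega)
    have enmk : E Q (n-k) = E Q (n-k-1) * (1 - Q^(n-k)) := E_succ' Q (by omega)
    have hT1 : Bq u (2*n) (n+k+1) * (1 + Q^(2*n+1)) * (E Q (n+k+2) * E Q (n-k))
        = E Q (2*n) * ((1 + Q^(2*n+1)) * (1 - Q^(n+k+2)) * (1 - Q^(n-k))) := by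
      have b := Bq_mul u hu (m := 2*n) (r := n+k+1) (by omega)
      rw [show 2*n - (n+k+1) = n-k-1 from by omega] at b
      rw [enk2, enmk]
      linear_combination ((1 + Q^(2*n+1)) * (1 - Q^(n+k+2)) * (1 - Q^(n-k))) * b
    have hT2 : Q^(n-k) * Bq u (2*n) (n+k) * (E Q (n+k+2) * E Q (n-k))
        = E Q (2*n) * (Q^(n-k) * (1 - Q^(n+k+1)) * (1 - Q^(n+k+2))) := by
      have b := Bq_mul u hu (m := 2*n) (r := n+k) (by omega)
      rw [show 2*n - (n+k) = n-k from by omega] at b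
      rw [enk2, enk1]
      linear_combination (Q^(n-k) * (1 - Q^(n+k+1)) * (1 - Q^(n+k+2))) * b
    have hT3 : Q^(n+k+2) * Bq u (2*n) (n+k+2) * (E Q (n+k+2) * E Q (n-k))
        = E Q (2*n) * (Q^(n+k+2) * (1 - Q^(n-k-1)) * (1 - Q^(n-k))) := by
      rcases eq_or_lt_of_le (show k + 1 ≤ n from hlt) with hEq | hlt2
      · have hz : Bq u (2*n) (n+k+2) = 0 := Bq_zero u (by omega)
        have ht : (1 : PowerSeries ℤ) - Q^(n-k-1) = 0 := by
          rw [show n-k-1 = 0 from by omega, pow_zero]; ring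
        rw [hz, ht]; ring
      · have b := Bq_mul u hu (m := 2*n) (r := n+k+2) (by omega)
        rw [show 2*n - (n+k+2) = n-k-2 from by omega] at b
        have enmk1 : E Q (n-k-1) = E Q (n-k-2) * (1 - Q^(n-k-1)) := E_succ' Q (by omega)
        rw [enmk, enmk1]
        linear_combination (Q^(n+k+2) * (1 - Q^(n-k-1)) * (1 - Q^(n-k))) * b
    rw [hL, e2n2, e2n1, add_mul, add_mul, hT1, hT2, hT3]
    have ps1 : Q^(2*n+1) = Q^(n+k+1) * Q^(n-k-1) * Q^1 := by
      rw [pow_split Q (show 2*n+1 = ((n+k+1)+(n-k-1)) + 1 from by omega), pow_add]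
    have ps2 : Q^(2*n+2) = Q^(n+k+1) * Q^(n-k-1) * Q^2 := by
      rw [pow_split Q (show 2*n+2 = ((n+k+1)+(n-k-1)) + 2 from by omega), pow_add]
    have ps3 : Q^(n+k+2) = Q^(n+k+1) * Q^1 := by
      rw [pow_split Q (show n+k+2 = (n+k+1) + 1 from by omega)]
    have ps4 : Q^(n-k) = Q^(n-k-1) * Q^1 := by
      rw [pow_split Q (show n-k = (n-k-1) + 1 from by omega)]
    rw [ps1, ps2, ps3, ps4]
    ring

/-- the `k = 0` case of the recurrence -/
theorem star0 (hu : constantCoeff (R := ℤ) u = 0) (n : ℕ) :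
    Bq u (2*n+2) (n+1) =
      Bq u (2*n) n * (1 + (u^2)^(2*n+1)) + 2*(u^2)^(n+1) * Bq u (2*n) (n+1) := by
  set Q := u^2 with hQ
  rcases Nat.eq_zero_or_pos n with rfl | hn
  · rw [Bq_zero u (show 0 < 1 from by omega), Bq_self u hu]
    apply E_cancel2 u hu (i := 1) (j := 1)
    have hL : Bq u 2 1 * (E Q 1 * E Q 1) = E Q 2 := by
      have b := Bq_mul u hu (m := 2) (r := 1) (by omega)
      rw [show 2 - 1 = 1 from by omega] at b
      exact b
    rw [hL, E_succ' Q (show 2 = 1 + 1 from rfl), E_succ' Q (show 1 = 0 + 1 from rfl), E_zero]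
    have ps : Q^2 = Q^1*Q^1 := by rw [← pow_add]
    rw [ps]
    ring
  · apply E_cancel2 u hu (i := n+1) (j := n+1)
    have hL : Bq u (2*n+2) (n+1) * (E Q (n+1) * E Q (n+1)) = E Q (2*n+2) := by
      have b := Bq_mul u hu (m := 2*n+2) (r := n+1) (by omega)
      rw [show 2*n+2 - (n+1) = n+1 from by omega] at b
      exact b
    have e2n1 : E Q (2*n+1) = E Q (2*n) * (1 - Q^(2*n+1)) := E_succ' Q (by omega)
    have e2n2 : E Q (2*n+2) = E Q (2*n+1) * (1 - Q^(2*n+2)) := E_succ' Q (by omega)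
    have en1 : E Q (n+1) = E Q n * (1 - Q^(n+1)) := E_succ' Q (by omega)
    have en0 : E Q n = E Q (n-1) * (1 - Q^n) := E_succ' Q (by omega)
    have hT1 : Bq u (2*n) n * (1 + Q^(2*n+1)) * (E Q (n+1) * E Q (n+1))
        = E Q (2*n) * ((1 + Q^(2*n+1)) * (1 - Q^(n+1))^2) := by
      have b := Bq_mul u hu (m := 2*n) (r := n) (by omega)
      rw [show 2*n - n = n from by omega] at b
      rw [en1]
      linear_combination ((1 + Q^(2*n+1)) * (1 - Q^(n+1))^2) * b
    have hT2 : 2*Q^(n+1) * Bq u (2*n) (n+1) * (E Q (n+1) * E Q (n+1))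
        = E Q (2*n) * (2*Q^(n+1) * (1 - Q^n) * (1 - Q^(n+1))) := by
      have b := Bq_mul u hu (m := 2*n) (r := n+1) (by omega)
      rw [show 2*n - (n+1) = n-1 from by omega] at b
      rw [← hQ] at b
      rw [en1, en0] at b ⊢
      linear_combination (2*Q^(n+1) * (1 - Q^n) * (1 - Q^(n+1))) * b
    rw [hL, e2n2, e2n1, add_mul, hT1, hT2]
    have ps1 : Q^(2*n+1) = Q^n * Q^n * Q^1 := by
      rw [pow_split Q (show 2*n+1 = (n+n) + 1 from by omega), pow_add]
    have ps2 : Q^(2*n+2) = Q^n * Q^n * Q^2 := by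
      rw [pow_split Q (show 2*n+2 = (n+n) + 2 from by omega), pow_add]
    have ps3 : Q^(n+1) = Q^n * Q^1 := by
      rw [pow_split Q (show n+1 = n + 1 from rfl)]
    rw [ps1, ps2, ps3]
    ring

end StarSec

section SgSec
open PowerSeries Finset
variable (u : PowerSeries ℤ)

theorem pow_congr (v : PowerSeries ℤ) {a b : ℕ} (h : a = b) : v ^ a = v ^ b := by rw [h]

/-- the (folded) theta-like partial sum associated with the finite JTP -/
noncomputable def Sg (n : ℕ) : PowerSeries ℤ :=
  Bq u (2*n) n + ∑ k ∈ range n, (-1:PowerSeries ℤ)^(k+1) * 2 * u^((k+1)^2) * Bq u (2*n) (n+k+1)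

/-- unit-weight version -/
noncomputable def Sgt (n : ℕ) : PowerSeries ℤ :=
  ∑ k ∈ range (n+1), (-1:PowerSeries ℤ)^k * u^(k^2) * Bq u (2*n) (n+k)

theorem RelST (n : ℕ) : Sg u n = 2 * Sgt u n - Bq u (2*n) n := by
  unfold Sg Sgt
  rw [Finset.sum_range_succ' (fun k => (-1:PowerSeries ℤ)^k * u^(k^2) * Bq u (2*n) (n+k)) n]
  rw [mul_add, Finset.mul_sum]
  have h0 : (-1:PowerSeries ℤ)^0 * u^(0^2) * Bq u (2*n) (n+0) = Bq u (2*n) n := by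
    norm_num
  rw [h0]
  have hc : ∀ k ∈ range n, (-1:PowerSeries ℤ)^(k+1) * 2 * u^((k+1)^2) * Bq u (2*n) (n+k+1)
      = 2 * ((-1:PowerSeries ℤ)^(k+1) * u^((k+1)^2) * Bq u (2*n) (n+(k+1))) := by
    intro k _
    have : n+(k+1) = n+k+1 := by omega
    rw [this]; ring
  rw [Finset.sum_congr rfl hc]
  ring

theorem sum_shift2 (t : ℕ → PowerSeries ℤ) (n : ℕ) (h1 : t (n+1) = 0) (h2 : t (n+2) = 0) :
    ∑ k ∈ range (n+1), t (k+2) = (∑ k ∈ range (n+1), t k) - t 0 - t 1 := by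
  have e1 : ∑ k ∈ range (n+3), t k = (∑ k ∈ range (n+2), t (k+1)) + t 0 :=
    Finset.sum_range_succ' t (n+2)
  have e2 : ∑ k ∈ range (n+2), t (k+1) = (∑ k ∈ range (n+1), t (k+2)) + t 1 :=
    Finset.sum_range_succ' (fun k => t (k+1)) (n+1)
  have e3 : ∑ k ∈ range (n+3), t k = ((∑ k ∈ range (n+1), t k) + t (n+1)) + t (n+2) := by
    rw [Finset.sum_range_succ, Finset.sum_range_succ]
  rw [e2] at e1
  rw [h1, h2] at e3
  linear_combination e3 - e1

theorem Sg_succ (hu : constantCoeff (R := ℤ) u = 0) (n : ℕ) :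
    Sg u (n+1) = Sg u n * (1 - u^(2*n+1))^2 := by
  have unf : Sg u (n+1) = Bq u (2*n+2) (n+1)
      + ∑ k ∈ range (n+1), (-1:PowerSeries ℤ)^(k+1) * 2 * u^((k+1)^2) * Bq u (2*n+2) (n+k+2) := by
    unfold Sg
    rw [show 2*(n+1) = 2*n+2 from by omega]
    congr 1
    refine Finset.sum_congr rfl fun k _ => ?_
    rw [show n+1+k+1 = n+k+2 from by omega]
  have expand : ∑ k ∈ range (n+1), (-1:PowerSeries ℤ)^(k+1) * 2 * u^((k+1)^2) * Bq u (2*n+2) (n+k+2)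
      = (∑ k ∈ range (n+1), (-1:PowerSeries ℤ)^(k+1) * 2 * u^((k+1)^2) * Bq u (2*n) (n+k+1))
          * (1 + u^(4*n+2))
        + (-(2*u^(2*n+1))) * (∑ k ∈ range (n+1), (-1:PowerSeries ℤ)^k * u^(k^2) * Bq u (2*n) (n+k))
        + (-(2*u^(2*n+1))) * (∑ k ∈ range (n+1),
            (-1:PowerSeries ℤ)^(k+2) * u^((k+2)^2) * Bq u (2*n) (n+(k+2))) := by
    rw [Finset.sum_mul, Finset.mul_sum, Finset.mul_sum, ← Finset.sum_add_distrib,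
      ← Finset.sum_add_distrib]
    refine Finset.sum_congr rfl fun k hk => ?_
    have hkn : k ≤ n := by have := mem_range.1 hk; omega
    rw [star u hu hkn]
    have p1 : (u^2)^(2*n+1) = u^(4*n+2) := by
      rw [← pow_mul]; exact pow_congr u (by omega)
    obtain ⟨d, rfl⟩ : ∃ d, n = k + d := ⟨n-k, by omega⟩
    have p2 : u^((k+1)^2) * (u^2)^(k+d-k) = u^(k^2) * u^(2*(k+d)+1) := by
      rw [← pow_mul, ← pow_add, ← pow_add]
      exact pow_congr u (by rw [show k+d-k = d from by omega]; ring)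
    have p3 : u^((k+1)^2) * (u^2)^(k+d+k+2) = u^((k+2)^2) * u^(2*(k+d)+1) := by
      rw [← pow_mul, ← pow_add, ← pow_add]
      exact pow_congr u (by ring)
    have hidx : (k+d)+(k+2) = k+d+k+2 := by omega
    rw [hidx, p1]
    linear_combination ((-1:PowerSeries ℤ)^(k+1) * 2 * Bq u (2*(k+d)) (k+d+k)) * p2
      + ((-1:PowerSeries ℤ)^(k+1) * 2 * Bq u (2*(k+d)) (k+d+k+2)) * p3
  have hA : ∑ k ∈ range (n+1), (-1:PowerSeries ℤ)^(k+1) * 2 * u^((k+1)^2) * Bq u (2*n) (n+k+1)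
      = Sg u n - Bq u (2*n) n := by
    rw [Finset.sum_range_succ, Bq_zero u (show 2*n < n+n+1 from by omega)]
    unfold Sg
    ring
  have hC : ∑ k ∈ range (n+1), (-1:PowerSeries ℤ)^(k+2) * u^((k+2)^2) * Bq u (2*n) (n+(k+2))
      = Sgt u n - (-1:PowerSeries ℤ)^0 * u^(0^2) * Bq u (2*n) (n+0)
          - (-1:PowerSeries ℤ)^1 * u^(1^2) * Bq u (2*n) (n+1) := by
    exact sum_shift2 (fun j => (-1:PowerSeries ℤ)^j * u^(j^2) * Bq u (2*n) (n+j)) n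
      (by show (-1:PowerSeries ℤ)^(n+1) * u^((n+1)^2) * Bq u (2*n) (n+(n+1)) = 0
          rw [Bq_zero u (show 2*n < n+(n+1) from by omega)]; ring)
      (by show (-1:PowerSeries ℤ)^(n+2) * u^((n+2)^2) * Bq u (2*n) (n+(n+2)) = 0
          rw [Bq_zero u (show 2*n < n+(n+2) from by omega)]; ring)
  have hB : ∑ k ∈ range (n+1), (-1:PowerSeries ℤ)^k * u^(k^2) * Bq u (2*n) (n+k) = Sgt u n := rfl
  rw [unf, expand, star0 u hu n, hA, hC, hB, RelST]
  have q1 : (u^2)^(2*n+1) = u^(2*n+1) * u^(2*n+1) := by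
    rw [← pow_mul, ← pow_add]; exact pow_congr u (by omega)
  have q2 : (u^2)^(n+1) = u^(2*n+1) * u^1 := by
    rw [← pow_mul, ← pow_add]; exact pow_congr u (by omega)
  have q3 : u^(4*n+2) = u^(2*n+1) * u^(2*n+1) := by
    rw [← pow_add]; exact pow_congr u (by omega)
  have q4 : (n+0) = n := by omega
  rw [q1, q2, q3, q4]
  ring

/-- finite Jacobi triple product, specialized at `z = -1` -/
theorem JTP (hu : constantCoeff (R := ℤ) u = 0) (n : ℕ) :
    (∏ j ∈ range n, (1 - u^(2*j+1)))^2 = Sg u n := by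
  induction n with
  | zero =>
      unfold Sg
      simp [Bq_self u hu 0]
  | succ n ih =>
      rw [Finset.prod_range_succ, mul_pow, ih, Sg_succ u hu n, mul_comm]

end SgSec
section GaussSec
open PowerSeries Finset
variable (u : PowerSeries ℤ)

theorem E_split_odd (n : ℕ) :
    E u (2*n) = (∏ j ∈ range n, (1 - u^(2*j+1))) * E (u^2) n := by
  induction n with
  | zero => simp [E]
  | succ n ih =>
      have a1 : E u (2*n+2) = E u (2*n+1) * (1 - u^(2*n+2)) := E_succ' u (by omega)
      have a2 : E u (2*n+1) = E u (2*n) * (1 - u^(2*n+1)) := E_succ' u (by omega)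
      have e1 : E u (2*(n+1)) = E u (2*n) * (1 - u^(2*n+1)) * (1 - u^(2*n+2)) := by
        rw [show 2*(n+1) = 2*n+2 from by omega, a1, a2]
      have e2 : (u^2)^(n+1) = u^(2*n+2) := by
        rw [← pow_mul]; exact pow_congr u (by omega)
      rw [e1, ih, Finset.prod_range_succ, E_succ (u^2) n, e2]
      ring

theorem BqE_md (hu : constantCoeff (R := ℤ) u = 0) (hX : (X : PowerSeries ℤ) ∣ u)
    {M n j : ℕ} (hnj : M + j ≤ n) :
    Md M (Bq u (2*n) (n+j) * E (u^2) n) 1 := by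
  have hX2 : (X : PowerSeries ℤ) ∣ u^2 := by
    exact hX.trans (dvd_pow_self u (by omega))
  have b := Bq_mul u hu (m := 2*n) (r := n+j) (by omega)
  rw [show 2*n - (n+j) = n-j from by omega] at b
  have s1 := E_split (u^2) (show n-j ≤ n+j from by omega)
  have s2 := E_split (u^2) (show n-j ≤ n from by omega)
  have s3 := E_split (u^2) (show n-j ≤ 2*n from by omega)
  set S1 := ∏ k ∈ Finset.Ico (n-j) (n+j), (1 - (u^2)^(k+1)) with hS1
  set S2 := ∏ k ∈ Finset.Ico (n-j) n, (1 - (u^2)^(k+1)) with hS2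
  set S3 := ∏ k ∈ Finset.Ico (n-j) (2*n), (1 - (u^2)^(k+1)) with hS3
  have key : Bq u (2*n) (n+j) * E (u^2) (n-j) * S1 = S3 := by
    apply E_cancel u hu (j := n-j)
    rw [s1, s3] at b
    linear_combination b
  have m1 : Md M S1 1 := prod_one_sub_md hX2 _ (fun k hk => by
    have := (Finset.mem_Ico.1 hk).1; omega)
  have m2 : Md M S2 1 := prod_one_sub_md hX2 _ (fun k hk => by
    have := (Finset.mem_Ico.1 hk).1; omega)
  have m3 : Md M S3 1 := prod_one_sub_md hX2 _ (fun k hk => by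
    have := (Finset.mem_Ico.1 hk).1; omega)
  have e : Bq u (2*n) (n+j) * E (u^2) n * S1 = S3 * S2 := by
    rw [s2]
    linear_combination S2 * key
  have step1 : Md M (Bq u (2*n) (n+j) * E (u^2) n)
      (Bq u (2*n) (n+j) * E (u^2) n * S1) := by
    have := (Md.refl (Bq u (2*n) (n+j) * E (u^2) n)).mul m1.symm
    simpa using this
  have step2 : Md M (S3 * S2) 1 := by
    have := m3.mul m2
    simpa using this
  rw [e] at step1
  exact step1.trans step2

/-- truncated theta series `1 + 2 ∑_{1 ≤ k ≤ M} (-1)^k q^(h k²)` -/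
noncomputable def ThP (h M : ℕ) : PowerSeries ℤ :=
  1 + 2 * ∑ k ∈ range M, (-1:PowerSeries ℤ)^(k+1) * X^(h*(k+1)^2)

/-- Gauss' identity `(q^h;q^h)² = (q^{2h};q^{2h}) · φ(-q^h)`, as a congruence mod `X^M`. -/
theorem gauss_md (h : ℕ) (hh : 1 ≤ h) (M : ℕ) :
    Md M ((qPochInf ℤ h)^2) (qPochInf ℤ (2*h) * ThP h M) := by
  set u := (X : PowerSeries ℤ)^h with hudef
  have hu : constantCoeff (R := ℤ) u = 0 := constantCoeff_X_pow_eq_zero hh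
  have hX : (X : PowerSeries ℤ) ∣ u := dvd_pow_self _ (by omega)
  set n := 2*M with hn
  have h1 : Md M (qPochInf ℤ h) (E u (2*n)) := qPochInf_md h hh (by omega)
  have h2 : Md M ((qPochInf ℤ h)^2) ((E u (2*n))^2) := h1.pow 2
  have h3 : (E u (2*n))^2 = E (u^2) n * (Sg u n * E (u^2) n) := by
    rw [E_split_odd, mul_pow, JTP u hu]
    ring
  have husq : u^2 = (X : PowerSeries ℤ)^(2*h) := by
    rw [hudef, ← pow_mul]; exact pow_congr X (by omega)
  have h5 : Md M (E (u^2) n) (qPochInf ℤ (2*h)) := by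
    rw [husq]
    exact (qPochInf_md (2*h) (by omega) (by omega)).symm
  -- core step
  have h4 : Md M (Sg u n * E (u^2) n) (ThP h M) := by
    unfold Sg
    rw [add_mul, Finset.sum_mul]
    have hhead : Md M (Bq u (2*n) n * E (u^2) n) 1 := by
      have := BqE_md u hu hX (M := M) (n := n) (j := 0) (by omega)
      simpa using this
    have hsum : Md M
        (∑ k ∈ range n, (-1:PowerSeries ℤ)^(k+1) * 2 * u^((k+1)^2) * Bq u (2*n) (n+k+1)
          * E (u^2) n)
        (∑ k ∈ range n, if k < M then (-1:PowerSeries ℤ)^(k+1) * 2 * X^(h*(k+1)^2) else 0) := by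
      apply Md.sum
      intro k hk
      by_cases hkM : k < M
      · rw [if_pos hkM]
        have mm : Md M (Bq u (2*n) (n+k+1) * E (u^2) n) 1 :=
          BqE_md u hu hX (j := k+1) (by omega)
        have pe : u^((k+1)^2) = (X : PowerSeries ℤ)^(h*(k+1)^2) := by
          rw [hudef, ← pow_mul]
        have := (Md.refl ((-1:PowerSeries ℤ)^(k+1) * 2 * u^((k+1)^2))).mul mm
        rw [mul_one] at this
        have sh : (-1:PowerSeries ℤ)^(k+1) * 2 * u^((k+1)^2) * Bq u (2*n) (n+k+1) * E (u^2) n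
            = (-1:PowerSeries ℤ)^(k+1) * 2 * u^((k+1)^2) * (Bq u (2*n) (n+k+1) * E (u^2) n) := by
          ring
        rw [sh, ← pe]
        exact this
      · rw [if_neg hkM]
        apply Md.of_dvd
        have d1 : (X : PowerSeries ℤ)^M ∣ u^((k+1)^2) := by
          rw [hudef, ← pow_mul]
          have h1' : M ≤ (k+1)^2 := le_trans (by omega) (Nat.le_self_pow two_ne_zero (k+1))
          have h2' : (k+1)^2 ≤ h*(k+1)^2 := Nat.le_mul_of_pos_left _ (by omega)
          exact pow_dvd_pow X (by omega)
        exact dvd_mul_of_dvd_left (dvd_mul_of_dvd_left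
          (dvd_mul_of_dvd_right d1 _) _) _
    have hsplit : (∑ k ∈ range n, if k < M then (-1:PowerSeries ℤ)^(k+1) * 2 * X^(h*(k+1)^2) else 0)
        = ∑ k ∈ range M, (-1:PowerSeries ℤ)^(k+1) * 2 * X^(h*(k+1)^2) := by
      rw [← Finset.sum_subset (Finset.range_subset_range.2 (show M ≤ n from by omega))
        (fun x _ hxn => by rw [if_neg (by simpa using hxn)])]
      exact Finset.sum_congr rfl fun k hk => by rw [if_pos (by simpa using hk)]
    have hcomb := Md.add hhead hsum
    rw [hsplit] at hcomb
    have eq2 : (1 : PowerSeries ℤ)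
        + ∑ k ∈ range M, (-1:PowerSeries ℤ)^(k+1) * 2 * X^(h*(k+1)^2) = ThP h M := by
      unfold ThP
      rw [Finset.mul_sum]
      congr 1
      exact Finset.sum_congr rfl fun k _ => by ring
    rw [eq2] at hcomb
    exact hcomb
  have hfin := h5.mul h4
  rw [← h3] at hfin
  exact h2.trans hfin
end GaussSec

section FinalSec
open PowerSeries Finset

theorem Md.cancel {A : Type*} [CommRing A] {M : ℕ} {U x y : PowerSeries A}
    (hU : constantCoeff (R := A) U = 1) (h : Md M (U*x) (U*y)) : Md M x y := by
  obtain ⟨d, hd⟩ := h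
  refine ⟨PowerSeries.invOfUnit U 1 * d, ?_⟩
  have hmul : U * PowerSeries.invOfUnit U 1 = 1 := PowerSeries.mul_invOfUnit U 1 (by rw [hU]; rfl)
  calc x - y = (U * PowerSeries.invOfUnit U 1) * (x - y) := by rw [hmul]; ring
    _ = PowerSeries.invOfUnit U 1 * (U*x - U*y) := by ring
    _ = PowerSeries.invOfUnit U 1 * (X^M * d) := by rw [hd]
    _ = X^M * (PowerSeries.invOfUnit U 1 * d) := by ring

theorem eight_zero : (8 : PowerSeries (ZMod 8)) = 0 := by
  rw [← map_ofNat (C (R := ZMod 8)) 8, show (8 : ZMod 8) = 0 from rfl, map_zero]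

theorem sixteen_zero : (16 : PowerSeries (ZMod 8)) = 0 := by
  rw [← map_ofNat (C (R := ZMod 8)) 16, show (16 : ZMod 8) = 0 from rfl, map_zero]

theorem pow4_lemma (Y : PowerSeries (ZMod 8)) (m : ℕ) :
    (1 + 4*Y)^m = 1 + 4*(m : PowerSeries (ZMod 8))*Y := by
  induction m with
  | zero => simp
  | succ m ih =>
      rw [pow_succ, ih]
      have e : (1 + 4*(m : PowerSeries (ZMod 8))*Y) * (1 + 4*Y)
          = 1 + 4*((m : PowerSeries (ZMod 8))+1)*Y + 16*((m : PowerSeries (ZMod 8))*Y^2) := by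
        ring
      rw [e, sixteen_zero]
      push_cast
      ring

theorem sq_mod8 (a : ℕ) : a^2 % 8 = 0 ∨ a^2 % 8 = 1 ∨ a^2 % 8 = 4 := by
  rw [Nat.pow_mod]
  have h : a % 8 < 8 := Nat.mod_lt _ (by norm_num)
  set r := a % 8 with hr
  interval_cases r <;> decide

theorem not_sq (n a : ℕ) : 8*n+7 ≠ a^2 := by
  intro h
  have h2 := sq_mod8 a
  rw [← h] at h2
  omega

theorem not_2sq (n a : ℕ) : 8*n+7 ≠ 2*a^2 := by
  intro h
  have h2 := sq_mod8 a
  generalize hb : a^2 = b at h h2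
  omega

theorem not_ssq (n a b : ℕ) : 8*n+7 ≠ a^2 + b^2 := by
  intro h
  have h2 := sq_mod8 a
  have h3 := sq_mod8 b
  generalize hx : a^2 = x at h h2
  generalize hy : b^2 = y at h h3
  omega

theorem not_s2sq (n a b : ℕ) : 8*n+7 ≠ a^2 + 2*b^2 := by
  intro h
  have h2 := sq_mod8 a
  have h3 := sq_mod8 b
  generalize hx : a^2 = x at h h2
  generalize hy : b^2 = y at h h3
  omega

theorem not_2s2sq (n a b : ℕ) : 8*n+7 ≠ 2*a^2 + 2*b^2 := by
  intro h
  have h2 := sq_mod8 a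
  have h3 := sq_mod8 b
  generalize hx : a^2 = x at h h2
  generalize hy : b^2 = y at h h3
  omega

theorem coeff_monomial_zero {N e : ℕ} (hne : N ≠ e) (c : ZMod 8) :
    coeff (R := ZMod 8) N (C (R := ZMod 8) c * X^e) = 0 := by
  rw [coeff_C_mul, coeff_X_pow, if_neg hne, mul_zero]

/-- the key coefficient computation: the inverse-theta product has vanishing
coefficient at `8n+7` modulo 8. -/
theorem coeff_Gi_zero (M m n : ℕ) :
    coeff (R := ZMod 8) (8*n+7)
      ((1 - 2*(∑ k ∈ range M, (-1 : PowerSeries (ZMod 8))^(k+1) * X^((k+1)^2))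
          + 4*(∑ k ∈ range M, (-1 : PowerSeries (ZMod 8))^(k+1) * X^((k+1)^2))^2)
        * (1 - 2*(∑ k ∈ range M, (-1 : PowerSeries (ZMod 8))^(k+1) * X^(2*(k+1)^2))
          + 4*(∑ k ∈ range M, (-1 : PowerSeries (ZMod 8))^(k+1) * X^(2*(k+1)^2))^2)
        * (1 - 4*(m : PowerSeries (ZMod 8))
            * ((∑ k ∈ range M, (-1 : PowerSeries (ZMod 8))^(k+1) * X^(2*(k+1)^2))
              + (∑ k ∈ range M, (-1 : PowerSeries (ZMod 8))^(k+1) * X^(2*(k+1)^2))^2))) = 0 := by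
  set N := 8*n+7 with hN
  set t1 := ∑ k ∈ range M, (-1 : PowerSeries (ZMod 8))^(k+1) * X^((k+1)^2) with ht1
  set t2 := ∑ k ∈ range M, (-1 : PowerSeries (ZMod 8))^(k+1) * X^(2*(k+1)^2) with ht2
  set μ := (m : PowerSeries (ZMod 8)) with hμ
  -- zero coefficient facts
  have z1 : coeff (R := ZMod 8) N t1 = 0 := by
    rw [ht1, map_sum]
    refine Finset.sum_eq_zero fun k _ => ?_
    have hc : ((-1 : PowerSeries (ZMod 8)))^(k+1) * X^((k+1)^2)
        = C (R := ZMod 8) ((-1)^(k+1)) * X^((k+1)^2) := by rw [map_pow, map_neg, map_one]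
    rw [hc]
    exact coeff_monomial_zero (not_sq n (k+1)) _
  have z2 : coeff (R := ZMod 8) N t2 = 0 := by
    rw [ht2, map_sum]
    refine Finset.sum_eq_zero fun k _ => ?_
    have hc : ((-1 : PowerSeries (ZMod 8)))^(k+1) * X^(2*(k+1)^2)
        = C (R := ZMod 8) ((-1)^(k+1)) * X^(2*(k+1)^2) := by rw [map_pow, map_neg, map_one]
    rw [hc]
    exact coeff_monomial_zero (not_2sq n (k+1)) _
  have z11 : coeff (R := ZMod 8) N (t1*t1) = 0 := by
    rw [ht1, Finset.sum_mul_sum, map_sum]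
    refine Finset.sum_eq_zero fun k _ => ?_
    rw [map_sum]
    refine Finset.sum_eq_zero fun l _ => ?_
    have hc : ((-1 : PowerSeries (ZMod 8))^(k+1) * X^((k+1)^2))
          * ((-1 : PowerSeries (ZMod 8))^(l+1) * X^((l+1)^2))
        = C (R := ZMod 8) ((-1)^(k+1) * (-1)^(l+1)) * X^((k+1)^2 + (l+1)^2) := by
      rw [map_mul, map_pow, map_pow, map_neg, map_one, pow_add]; ring
    rw [hc]
    exact coeff_monomial_zero (not_ssq n (k+1) (l+1)) _
  have z12 : coeff (R := ZMod 8) N (t1*t2) = 0 := by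
    rw [ht1, ht2, Finset.sum_mul_sum, map_sum]
    refine Finset.sum_eq_zero fun k _ => ?_
    rw [map_sum]
    refine Finset.sum_eq_zero fun l _ => ?_
    have hc : ((-1 : PowerSeries (ZMod 8))^(k+1) * X^((k+1)^2))
          * ((-1 : PowerSeries (ZMod 8))^(l+1) * X^(2*(l+1)^2))
        = C (R := ZMod 8) ((-1)^(k+1) * (-1)^(l+1)) * X^((k+1)^2 + 2*(l+1)^2) := by
      rw [map_mul, map_pow, map_pow, map_neg, map_one, pow_add]; ring
    rw [hc]
    exact coeff_monomial_zero (not_s2sq n (k+1) (l+1)) _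
  have z22 : coeff (R := ZMod 8) N (t2*t2) = 0 := by
    rw [ht2, Finset.sum_mul_sum, map_sum]
    refine Finset.sum_eq_zero fun k _ => ?_
    rw [map_sum]
    refine Finset.sum_eq_zero fun l _ => ?_
    have hc : ((-1 : PowerSeries (ZMod 8))^(k+1) * X^(2*(k+1)^2))
          * ((-1 : PowerSeries (ZMod 8))^(l+1) * X^(2*(l+1)^2))
        = C (R := ZMod 8) ((-1)^(k+1) * (-1)^(l+1)) * X^(2*(k+1)^2 + 2*(l+1)^2) := by
      rw [map_mul, map_pow, map_pow, map_neg, map_one, pow_add]; ring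
    rw [hc]
    exact coeff_monomial_zero (not_2s2sq n (k+1) (l+1)) _
  -- expansion modulo 8
  have hexp : (1 - 2*t1 + 4*t1^2) * (1 - 2*t2 + 4*t2^2) * (1 - 4*μ*(t2+t2^2))
      = 1 - 2*t1 - 2*t2 + 4*(t1*t1) + 4*(t2*t2) + 4*(t1*t2) - 4*(μ*t2) - 4*(μ*(t2*t2))
        + 8*( μ*t2^2 - μ*t2^3 - 2*μ*t2^4 + μ*t1*t2 - t1*t2^2 - μ*t1*t2^2 + 2*μ*t1*t2^3
            + 4*μ*t1*t2^4 - t1^2*t2 - 2*μ*t1^2*t2 + 2*t1^2*t2^2 + 2*μ*t1^2*t2^2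
            - 4*μ*t1^2*t2^3 - 8*μ*t1^2*t2^4) := by
    ring
  rw [hexp, eight_zero, zero_mul, add_zero]
  have c2 : (2 : PowerSeries (ZMod 8)) = C (R := ZMod 8) 2 := (map_ofNat (C (R := ZMod 8)) 2).symm
  have c4 : (4 : PowerSeries (ZMod 8)) = C (R := ZMod 8) 4 := (map_ofNat (C (R := ZMod 8)) 4).symm
  have cμ : μ = C (R := ZMod 8) (m : ZMod 8) := by rw [hμ]; exact (map_natCast (C (R := ZMod 8)) m).symm
  rw [c2, c4, cμ]
  simp only [map_add, map_sub, coeff_C_mul, z1, z2, z11, z12, z22, mul_zero]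
  rw [PowerSeries.coeff_one, if_neg (show ¬ N = 0 from by omega)]
  ring

end FinalSec

section MainSec
open PowerSeries Finset

theorem final_zmod (abar : ℕ → ℕ → ℕ) (habar : IsGenOvercubic abar) (m n : ℕ) :
    ((abar (2*m+2) (8*n+7) : ℕ) : ZMod 8) = 0 := by
  classical
  set N := 8*n+7 with hN
  set M := N+1 with hM
  set π : ℤ →+* ZMod 8 := Int.castRingHom (ZMod 8) with hπ
  have g1 : Md M ((qPochInf ℤ 1)^2) (qPochInf ℤ 2 * ThP 1 M) := by
    have h := gauss_md 1 le_rfl M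
    rwa [show 2*1 = 2 from rfl] at h
  have g2 : Md M ((qPochInf ℤ 2)^2) (qPochInf ℤ 4 * ThP 2 M) := by
    have h := gauss_md 2 (by norm_num) M
    rwa [show 2*2 = 4 from rfl] at h
  set f1 := PowerSeries.map π (qPochInf ℤ 1) with hf1
  set f2 := PowerSeries.map π (qPochInf ℤ 2) with hf2
  set f4 := PowerSeries.map π (qPochInf ℤ 4) with hf4
  set t1 := ∑ k ∈ range M, (-1 : PowerSeries (ZMod 8))^(k+1) * X^((k+1)^2) with ht1
  set t2 := ∑ k ∈ range M, (-1 : PowerSeries (ZMod 8))^(k+1) * X^(2*(k+1)^2) with ht2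
  have hmap1 : PowerSeries.map π (ThP 1 M) = 1 + 2*t1 := by
    unfold ThP
    rw [ht1]
    simp only [map_add, map_one, map_mul, map_ofNat, map_sum, map_pow, map_neg,
      PowerSeries.map_X, one_mul]
  have hmap2 : PowerSeries.map π (ThP 2 M) = 1 + 2*t2 := by
    unfold ThP
    rw [ht2]
    simp only [map_add, map_one, map_mul, map_ofNat, map_sum, map_pow, map_neg,
      PowerSeries.map_X]
  have G1 : Md M (f1^2) (f2 * (1+2*t1)) := by
    have h := g1.map π
    rwa [map_pow, map_mul, hmap1] at h
  have G2 : Md M (f2^2) (f4 * (1+2*t2)) := by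
    have h := g2.map π
    rwa [map_pow, map_mul, hmap2] at h
  set Mz := PowerSeries.map π (PowerSeries.mk fun j => (abar (2*m+2) j : ℤ)) with hMz
  have e0 : Mz * f1^2 * f2^(2*(2*m+2)) = f4^(2*m+2-1) * f2^3 := by
    have h := congrArg (PowerSeries.map π) (habar (2*m+2) (by omega))
    simp only [map_mul, map_pow] at h
    exact h
  have hc2 : constantCoeff (R := ZMod 8) f2 = 1 := by
    rw [hf2, ← coeff_zero_eq_constantCoeff_apply, PowerSeries.coeff_map,
      coeff_zero_eq_constantCoeff_apply, constantCoeff_qPochInf 2 (by norm_num)]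
    simp
  have hc4 : constantCoeff (R := ZMod 8) f4 = 1 := by
    rw [hf4, ← coeff_zero_eq_constantCoeff_apply, PowerSeries.coeff_map,
      coeff_zero_eq_constantCoeff_apply, constantCoeff_qPochInf 4 (by norm_num)]
    simp
  have step1 : Md M (f4^(2*m+1) * f2^3) (Mz * (f2*(1+2*t1)) * f2^(2*(2*m+2))) := by
    have h := ((Md.refl Mz).mul G1).mul (Md.refl (f2^(2*(2*m+2))))
    rw [e0, show 2*m+2-1 = 2*m+1 from by omega] at h
    exact h
  have step2 : Md M ((f2^2)^(2*m+2)) ((f4*(1+2*t2))^(2*m+2)) := G2.pow _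
  have hpow : f2^(2*(2*m+2)) = (f2^2)^(2*m+2) := by rw [← pow_mul]
  have step3 : Md M (Mz*(f2*(1+2*t1)) * f2^(2*(2*m+2)))
      (Mz*(f2*(1+2*t1)) * (f4*(1+2*t2))^(2*m+2)) := by
    rw [hpow]; exact (Md.refl _).mul step2
  have L1 : Md M (f4^(2*m+1) * f2^3) (f4^(2*m+1) * (f2 * (f4*(1+2*t2)))) := by
    have h := (Md.refl (f4^(2*m+1))).mul ((Md.refl f2).mul G2)
    rw [show f4^(2*m+1)*(f2*f2^2) = f4^(2*m+1)*f2^3 from by ring] at h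
    exact h
  have X2 : Md M (f4^(2*m+1) * (f2 * (f4*(1+2*t2))))
      (Mz*(f2*(1+2*t1)) * (f4*(1+2*t2))^(2*m+2)) :=
    L1.symm.trans (step1.trans step3)
  have hcU : constantCoeff (R := ZMod 8) (f2 * f4^(2*m+2)) = 1 := by
    rw [map_mul, map_pow, hc2, hc4]; simp
  have lhsR : f4^(2*m+1) * (f2 * (f4*(1+2*t2))) = (f2 * f4^(2*m+2)) * (1+2*t2) := by ring
  have rhsR : Mz*(f2*(1+2*t1)) * (f4*(1+2*t2))^(2*m+2)
      = (f2 * f4^(2*m+2)) * (Mz*(1+2*t1)*(1+2*t2)^(2*m+2)) := by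
    rw [mul_pow]; ring
  rw [lhsR, rhsR] at X2
  have X3 : Md M (1+2*t2) (Mz*(1+2*t1)*(1+2*t2)^(2*m+2)) := Md.cancel hcU X2
  have hB : (1+2*t2) * (1-2*t2+4*t2^2) = 1 := by
    have e : (1+2*t2) * (1-2*t2+4*t2^2) = 1 + 8*t2^3 := by ring
    rw [e, eight_zero]; ring
  have X4 := (Md.refl (1-2*t2+4*t2^2)).mul X3
  have l4 : (1-2*t2+4*t2^2)*(1+2*t2) = 1 := by rw [mul_comm]; exact hB
  have r4 : (1-2*t2+4*t2^2)*(Mz*(1+2*t1)*(1+2*t2)^(2*m+2))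
      = Mz*(1+2*t1)*(1+2*t2)^(2*m+1) := by
    have e : (1+2*t2)^(2*m+2) = (1+2*t2)^(2*m+1) * (1+2*t2) := by rw [← pow_succ]
    rw [e]
    calc (1-2*t2+4*t2^2)*(Mz*(1+2*t1)*((1+2*t2)^(2*m+1)*(1+2*t2)))
        = Mz*(1+2*t1)*(1+2*t2)^(2*m+1) * ((1+2*t2)*(1-2*t2+4*t2^2)) := by ring
      _ = Mz*(1+2*t1)*(1+2*t2)^(2*m+1) := by rw [hB, mul_one]
  rw [l4, r4] at X4
  have hp : (1+2*t2)^(2*m+1)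
      = (1+2*t2) * (1 + 4*(m : PowerSeries (ZMod 8))*(t2+t2^2)) := by
    have e1 : (1+2*t2)^(2*m+1) = ((1+2*t2)^2)^m * (1+2*t2) := by
      rw [← pow_mul, ← pow_succ]
    have e2 : (1+2*t2)^2 = 1 + 4*(t2+t2^2) := by ring
    rw [e1, e2, pow4_lemma]
    ring
  rw [hp] at X4
  have hA : (1+2*t1) * (1-2*t1+4*t1^2) = 1 := by
    have e : (1+2*t1)*(1-2*t1+4*t1^2) = 1+8*t1^3 := by ring
    rw [e, eight_zero]; ring
  have hY : (1 + 4*(m : PowerSeries (ZMod 8))*(t2+t2^2))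
      * (1 - 4*(m : PowerSeries (ZMod 8))*(t2+t2^2)) = 1 := by
    have e : (1 + 4*(m : PowerSeries (ZMod 8))*(t2+t2^2))
        * (1 - 4*(m : PowerSeries (ZMod 8))*(t2+t2^2))
        = 1 - 16*((m : PowerSeries (ZMod 8))*(t2+t2^2))^2 := by ring
    rw [e, sixteen_zero]; ring
  have X5 := (Md.refl ((1-2*t1+4*t1^2)*(1-2*t2+4*t2^2)
      *(1 - 4*(m : PowerSeries (ZMod 8))*(t2+t2^2)))).mul X4
  have r5 : (1-2*t1+4*t1^2)*(1-2*t2+4*t2^2)*(1 - 4*(m : PowerSeries (ZMod 8))*(t2+t2^2))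
      * (Mz*(1+2*t1)*((1+2*t2) * (1 + 4*(m : PowerSeries (ZMod 8))*(t2+t2^2)))) = Mz := by
    calc (1-2*t1+4*t1^2)*(1-2*t2+4*t2^2)*(1 - 4*(m : PowerSeries (ZMod 8))*(t2+t2^2))
        * (Mz*(1+2*t1)*((1+2*t2) * (1 + 4*(m : PowerSeries (ZMod 8))*(t2+t2^2))))
        = Mz * (((1+2*t1)*(1-2*t1+4*t1^2)) * (((1+2*t2)*(1-2*t2+4*t2^2))
            * ((1 + 4*(m : PowerSeries (ZMod 8))*(t2+t2^2))
              * (1 - 4*(m : PowerSeries (ZMod 8))*(t2+t2^2))))) := by ring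
      _ = Mz := by rw [hA, hB, hY]; ring
  rw [mul_one, r5] at X5
  have hco := X5.coeff_eq (show N < M from by omega)
  have hGiz : coeff (R := ZMod 8) N ((1-2*t1+4*t1^2)*(1-2*t2+4*t2^2)
      *(1 - 4*(m : PowerSeries (ZMod 8))*(t2+t2^2))) = 0 := by
    rw [ht1, ht2]
    exact coeff_Gi_zero M m n
  have hMzc : coeff (R := ZMod 8) N Mz = ((abar (2*m+2) N : ℤ) : ZMod 8) := by
    rw [hMz, PowerSeries.coeff_map, PowerSeries.coeff_mk]
    rfl
  have hfin : ((abar (2*m+2) N : ℤ) : ZMod 8) = 0 := by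
    rw [← hMzc, ← hco, hGiz]
  rw [hN] at hfin
  push_cast at hfin
  exact_mod_cast hfin

end MainSec
end OCaux

/-- For all `m, n ≥ 0`, `a̅_{2m+2}(8n + 7) ≡ 0 (mod 8)`. -/
theorem overcubic_even_vanish_eight_n_seven (abar : ℕ → ℕ → ℕ)
    (habar : IsGenOvercubic abar) (m n : ℕ) :
    abar (2 * m + 2) (8 * n + 7) ≡ 0 [MOD 8] := by
  
  have key := OCaux.final_zmod abar habar m n
  rw [Nat.modEq_zero_iff_dvd]
  exact (ZMod.natCast_eq_zero_iff _ 8).1 key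
end

section
/- Let p ≥ 3 be any prime. Then for all integers m ≥ 0, α ≥ 0 and n ≥ 0, the generalized overcubic partition function satisfies a̅_{8m+3}(8·p^{2α} n + p^{2α}) ≡ 2·t(n) (mod 16), where t(n) is the coefficient of q^n in Ramanujan's theta function ψ(q) = Σ_{ν≥0} q^{ν(ν+1)/2}; that is, t(n) = 1 if n is a triangular number and t(n) = 0 otherwise. -/
open scoped Classical

open PowerSeries Finset

namespace Oc

variable {R : Type*} [CommRing R]

/-- truncated pochhammer product -/
noncomputable def poch (R : Type*) [CommRing R] (h M : ℕ) : PowerSeries R :=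
  ∏ k ∈ range M, (1 - X ^ (h * (k + 1)))

/-- coefficients agree below N -/
def EqB (N : ℕ) (f g : PowerSeries R) : Prop := ∀ i, i < N → coeff (R := R) i f = coeff (R := R) i g

theorem EqB.refl {N : ℕ} (f : PowerSeries R) : EqB N f f := fun _ _ => rfl

theorem EqB.symm {N : ℕ} {f g : PowerSeries R} (h : EqB N f g) : EqB N g f :=
  fun i hi => (h i hi).symm

theorem EqB.trans {N : ℕ} {f g k : PowerSeries R} (h : EqB N f g) (h' : EqB N g k) :
    EqB N f k := fun i hi => (h i hi).trans (h' i hi)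

theorem EqB_of_eq {N : ℕ} {f g : PowerSeries R} (h : f = g) : EqB N f g := h ▸ EqB.refl f

theorem eq_of_forall_eqB {f g : PowerSeries R} (h : ∀ N, EqB N f g) : f = g :=
  PowerSeries.ext fun n => h (n + 1) n (Nat.lt_succ_self n)

theorem EqB.sub_zero {N : ℕ} {f g : PowerSeries R} (h : EqB N f g) :
    ∀ i, i < N → coeff (R := R) i (f - g) = 0 := by
  intro i hi; rw [map_sub, h i hi, sub_self]

theorem EqB_of_sub_zero {N : ℕ} {f g : PowerSeries R}
    (h : ∀ i, i < N → coeff (R := R) i (f - g) = 0) : EqB N f g := by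
  intro i hi; have := h i hi; rw [map_sub, sub_eq_zero] at this; exact this

theorem coeff_mul_eq_zero_left {N : ℕ} {f : PowerSeries R} (x : PowerSeries R)
    (h : ∀ i, i < N → coeff (R := R) i f = 0) : ∀ i, i < N → coeff (R := R) i (f * x) = 0 := by
  intro i hi
  rw [coeff_mul]
  apply Finset.sum_eq_zero
  intro p hp
  rw [Finset.HasAntidiagonal.mem_antidiagonal] at hp
  have : p.1 < N := lt_of_le_of_lt (hp ▸ Nat.le_add_right _ _) hi
  rw [h p.1 this, zero_mul]

theorem EqB.mul {N : ℕ} {f g f' g' : PowerSeries R} (h : EqB N f g) (h' : EqB N f' g') :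
    EqB N (f * f') (g * g') := by
  apply EqB_of_sub_zero
  have : f * f' - g * g' = (f - g) * f' + (g' - f') * (-g) := by ring
  rw [this]
  intro i hi
  rw [map_add]
  rw [coeff_mul_eq_zero_left _ h.sub_zero i hi,
    coeff_mul_eq_zero_left _ (fun j hj => h'.symm.sub_zero j hj) i hi, add_zero]

theorem EqB.mul_left {N : ℕ} (x : PowerSeries R) {f g : PowerSeries R} (h : EqB N f g) :
    EqB N (x * f) (x * g) := (EqB.refl x).mul h

theorem EqB.pow {N : ℕ} {f g : PowerSeries R} (h : EqB N f g) (k : ℕ) :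
    EqB N (f ^ k) (g ^ k) := by
  induction k with
  | zero => simpa using EqB.refl 1
  | succ k ih => rw [pow_succ, pow_succ]; exact ih.mul h

/-- inverses of units that agree below N agree below N -/
theorem EqB.inv {N : ℕ} {f g f' g' : PowerSeries R} (hf : f * f' = 1) (hg : g * g' = 1)
    (h : EqB N f g) : EqB N f' g' := by
  apply EqB_of_sub_zero
  have key : f' - g' = (g - f) * (f' * g') := by
    have : (g - f) * (f' * g') = (g * g') * f' - (f * f') * g' := by ring
    rw [this, hf, hg, one_mul, one_mul]
  rw [key]
  exact coeff_mul_eq_zero_left _ (fun j hj => h.symm.sub_zero j hj)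

theorem coeff_one_sub_X_pow_mul (f : PowerSeries R) (e i : ℕ) (hie : i < e) :
    coeff (R := R) i ((1 - X ^ e) * f) = coeff (R := R) i f := by
  rw [sub_mul, one_mul, map_sub]
  have : coeff (R := R) i (X ^ e * f) = 0 := by
    rw [coeff_mul]
    apply Finset.sum_eq_zero
    intro p hp
    rw [Finset.HasAntidiagonal.mem_antidiagonal] at hp
    rw [coeff_X_pow]
    have : p.1 ≠ e := by omega
    rw [if_neg this, zero_mul]
  rw [this, sub_zero]

theorem poch_succ (h M : ℕ) : poch R h (M + 1) = poch R h M * (1 - X ^ (h * (M + 1))) :=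
  Finset.prod_range_succ _ _

/-- stability: poch агree below N for M ≥ N -/
theorem EqB_poch_poch {h : ℕ} (hh : 1 ≤ h) {N M M' : ℕ} (hM : N ≤ M) (hM' : N ≤ M') :
    EqB N (poch R h M) (poch R h M') := by
  -- reduce to: EqB N (poch h N) (poch h M) for N ≤ M
  suffices key : ∀ M, N ≤ M → EqB N (poch R h N) (poch R h M) by
    exact (key M hM).symm.trans (key M' hM')
  intro M hM
  induction M with
  | zero => have : N = 0 := Nat.le_zero.mp hM; subst this; exact EqB.refl _
  | succ M ih =>
    rcases Nat.lt_or_ge N (M + 1) with hlt | hge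
    · have hNM : N ≤ M := Nat.lt_succ_iff.mp hlt
      refine (ih hNM).trans ?_
      intro i hi
      rw [poch_succ, mul_comm]
      rw [coeff_one_sub_X_pow_mul]
      calc i < N := hi
        _ ≤ M + 1 := Nat.le_succ_of_le hNM
        _ ≤ h * (M + 1) := Nat.le_mul_of_pos_left _ hh
    · have : N = M + 1 := le_antisymm hM hge
      subst this; exact EqB.refl _

theorem coeff_qPochInf (h n : ℕ) :
    coeff (R := R) n (qPochInf R h) = coeff (R := R) n (poch R h (n + 1)) := coeff_mk _ _

theorem EqB_qPochInf {h : ℕ} (hh : 1 ≤ h) {N M : ℕ} (hM : N ≤ M) :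
    EqB N (qPochInf R h) (poch R h M) := by
  intro i hi
  rw [coeff_qPochInf]
  exact EqB_poch_poch hh (le_refl (i+1)) (by omega : i + 1 ≤ M) i (Nat.lt_succ_self i)

@[simp] theorem constantCoeff_poch (h M : ℕ) (hh : 1 ≤ h) :
    constantCoeff (R := R) (poch R h M) = 1 := by
  unfold poch
  rw [map_prod]
  apply Finset.prod_eq_one
  intro k _
  rw [map_sub, map_one, map_pow, constantCoeff_X, zero_pow (by positivity), sub_zero]

theorem constantCoeff_qPochInf (h : ℕ) (hh : 1 ≤ h) :
    constantCoeff (R := R) (qPochInf R h) = 1 := by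
  have : constantCoeff (R := R) (qPochInf R h) = coeff (R := R) 0 (qPochInf R h) := by
    rw [coeff_zero_eq_constantCoeff]
  rw [this, coeff_qPochInf]
  rw [coeff_zero_eq_constantCoeff, constantCoeff_poch _ _ hh]

theorem map_poch {S : Type*} [CommRing S] (φ : R →+* S) (h M : ℕ) :
    PowerSeries.map φ (poch R h M) = poch S h M := by
  unfold poch
  rw [map_prod]
  apply Finset.prod_congr rfl
  intro k _
  rw [map_sub, map_one, map_pow, PowerSeries.map_X]

theorem map_qPochInf {S : Type*} [CommRing S] (φ : R →+* S) (h : ℕ) :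
    PowerSeries.map φ (qPochInf R h) = qPochInf S h := by
  apply PowerSeries.ext
  intro n
  rw [PowerSeries.coeff_map, coeff_qPochInf, coeff_qPochInf, ← PowerSeries.coeff_map,
    map_poch]

@[simp] theorem poch_zero {R : Type*} [CommRing R] (h : ℕ) : poch R h 0 = 1 :=
  Finset.prod_range_zero _

/-- Gaussian binomial with base X^h, as power series over ℤ. -/
noncomputable def gb (h : ℕ) : ℕ → ℕ → PowerSeries ℤ
  | 0, 0 => 1
  | 0, _ + 1 => 0
  | _ + 1, 0 => 1
  | n + 1, k + 1 => gb h n k + X ^ (h * (k + 1)) * gb h n (k + 1)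

@[simp] theorem gb_zero_right (h n : ℕ) : gb h n 0 = 1 := by cases n <;> rfl

theorem gb_succ_succ (h n k : ℕ) :
    gb h (n+1) (k+1) = gb h n k + X ^ (h * (k + 1)) * gb h n (k + 1) := rfl

theorem gb_eq_zero (h : ℕ) : ∀ n k, n < k → gb h n k = 0 := by
  intro n
  induction n with
  | zero => intro k hk; match k, hk with | k+1, _ => rfl
  | succ n ih =>
    intro k hk
    match k, hk with
    | k+1, hk =>
      rw [gb_succ_succ, ih k (by omega), ih (k+1) (by omega), mul_zero, add_zero]

@[simp] theorem gb_self (h : ℕ) : ∀ n, gb h n n = 1 := by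
  intro n
  induction n with
  | zero => rfl
  | succ n ih => rw [gb_succ_succ, ih, gb_eq_zero h n (n+1) (by omega), mul_zero, add_zero]

theorem gb_one (h : ℕ) : ∀ n, gb h n 1 = ∑ i ∈ range n, (X : PowerSeries ℤ) ^ (h * i) := by
  intro n
  induction n with
  | zero => simpa using gb_eq_zero h 0 1 (by omega)
  | succ n ih =>
    rw [show (1:ℕ) = 0 + 1 from rfl, gb_succ_succ, gb_zero_right, ih,
      Finset.sum_range_succ' (fun i => (X : PowerSeries ℤ) ^ (h * i)) n]
    rw [Finset.mul_sum]
    simp only [← pow_add, mul_zero, pow_zero]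
    rw [add_comm]
    congr 1
    apply Finset.sum_congr rfl
    intro i _
    congr 1
    ring

theorem gb_pascal2 (h : ℕ) : ∀ n k, k ≤ n →
    gb h (n+1) (k+1) = X ^ (h * (n - k)) * gb h n k + gb h n (k+1) := by
  intro n
  induction n with
  | zero =>
    intro k hk
    interval_cases k
    simp [gb_succ_succ, gb_eq_zero h 0 1 (by omega)]
  | succ n ih =>
    intro k hk
    match k with
    | 0 =>
      rw [gb_zero_right, mul_one, Nat.sub_zero]
      rw [show (0+1 : ℕ) = 1 from rfl, gb_one, gb_one, Finset.sum_range_succ, add_comm]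
    | k' + 1 =>
      rcases Nat.lt_or_ge k' n with hk' | hk'
      · have hkn : k' + 1 ≤ n := hk'
        rw [gb_succ_succ h n k', gb_succ_succ h n (k'+1),
          gb_succ_succ h (n+1) (k'+1), ih k' (by omega), ih (k'+1) hkn]
        have e1 : n + 1 - (k' + 1) = n - k' := by omega
        rw [e1]
        have hX : (X : PowerSeries ℤ)^(h*(k'+1+1)) * X^(h*(n-(k'+1)))
            = X^(h*(n-k')) * X^(h*(k'+1)) := by
          rw [← pow_add, ← pow_add, ← Nat.mul_add, ← Nat.mul_add]
          congr 2
          omega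
        linear_combination gb h n (k'+1) * hX
      · have : k' = n := by omega
        subst this
        rw [gb_self, gb_self, gb_eq_zero h (k'+1) (k'+2) (by omega)]
        simp

theorem gb_poch (h : ℕ) : ∀ n k, k ≤ n →
    gb h n k * poch ℤ h k * poch ℤ h (n - k) = poch ℤ h n := by
  intro n
  induction n with
  | zero => intro k hk; interval_cases k; simp
  | succ n ih =>
    intro k hk
    match k with
    | 0 => simp
    | k' + 1 =>
      rcases Nat.lt_or_ge k' n with hk' | hk'
      · have hkn : k' + 1 ≤ n := hk'
        have ih1 := ih k' (by omega)
        have ih2 := ih (k'+1) hkn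
        have e1 : n - k' = (n - (k'+1)) + 1 := by omega
        have e2 : n + 1 - (k'+1) = (n - (k'+1)) + 1 := by omega
        rw [gb_succ_succ, e2, poch_succ h k', poch_succ h (n - (k'+1))]
        rw [e1, poch_succ] at ih1
        have e3 : h * (k' + 1) + h * (n - (k'+1) + 1) = h * (n + 1) := by
          rw [← Nat.mul_add]; congr 1; omega
        calc (gb h n k' + X ^ (h * (k' + 1)) * gb h n (k' + 1)) *
              (poch ℤ h k' * (1 - X ^ (h * (k' + 1)))) *
              (poch ℤ h (n - (k' + 1)) * (1 - X ^ (h * (n - (k' + 1) + 1))))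
            = (gb h n k' * poch ℤ h k' * (poch ℤ h (n - (k'+1)) * (1 - X ^ (h * (n - (k'+1) + 1))))) * (1 - X ^ (h * (k' + 1)))
              + X ^ (h * (k' + 1)) * (gb h n (k'+1) * (poch ℤ h k' * (1 - X ^ (h * (k' + 1)))) * poch ℤ h (n - (k'+1))) * (1 - X ^ (h * (n - (k' + 1) + 1))) := by ring
          _ = poch ℤ h n * (1 - X ^ (h * (k' + 1)))
              + X ^ (h * (k' + 1)) * poch ℤ h n * (1 - X ^ (h * (n - (k' + 1) + 1))) := by
              rw [ih1, ← poch_succ h k', ih2]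
          _ = poch ℤ h n * (1 - X ^ (h * (k' + 1)) * X ^ (h * (n - (k' + 1) + 1))) := by ring
          _ = poch ℤ h (n+1) := by rw [← pow_add, e3, poch_succ]
      · have : k' = n := by omega
        subst this
        simp [poch_succ]

/-- odd-index truncated product ∏_{j<n} (1 - X^{h(2j+1)}) -/
noncomputable def pochOdd (h n : ℕ) : PowerSeries ℤ :=
  ∏ j ∈ range n, (1 - X ^ (h * (2*j+1)))

theorem pochOdd_succ (h n : ℕ) :
    pochOdd h (n+1) = pochOdd h n * (1 - X ^ (h * (2*n+1))) := Finset.prod_range_succ _ _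

/-- the finite theta-like sum -/
noncomputable def Tsum (h n : ℕ) : PowerSeries ℤ :=
  ∑ i ∈ range (2*n+1), (-1 : PowerSeries ℤ)^(i+n) * X ^ (h * (Nat.dist i n)^2) * gb (2*h) (2*n) i

noncomputable def Asum (h n : ℕ) : PowerSeries ℤ :=
  ∑ j ∈ range (2*n+2), (-1 : PowerSeries ℤ)^(j+n) * X ^ (h * (Nat.dist j n)^2) * gb (2*h) (2*n+1) j

theorem hd1 (h l n : ℕ) :
    h * (Nat.dist l (n+1))^2 + 2*h*l = h * (2*n+1) + h * (Nat.dist l n)^2 := by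
  rcases le_total l n with hl | hl
  · rw [Nat.dist_eq_sub_of_le (by omega : l ≤ n + 1), Nat.dist_eq_sub_of_le hl]
    zify [hl, (by omega : l ≤ n + 1)]
    ring
  · rcases le_or_gt l (n+1) with h2 | h2
    · have hln : l = n ∨ l = n + 1 := by omega
      have d1 : Nat.dist n (n+1) = 1 := by
        rw [Nat.dist_eq_sub_of_le (Nat.le_succ n)]; omega
      have d2 : Nat.dist (n+1) n = 1 := by
        rw [Nat.dist_eq_sub_of_le_right (Nat.le_succ n)]; omega
      rcases hln with rfl | rfl
      · rw [d1, Nat.dist_self]; ring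
      · rw [d2, Nat.dist_self]; ring
    · rw [Nat.dist_eq_sub_of_le_right (by omega : n + 1 ≤ l),
        Nat.dist_eq_sub_of_le_right (by omega : n ≤ l)]
      zify [(by omega : n + 1 ≤ l), (by omega : n ≤ l)]
      ring

theorem hd2 (h j n : ℕ) (hj : j ≤ 2*n) :
    h * (Nat.dist (j+1) n)^2 + 2*h*(2*n - j) = h * (2*n+1) + h * (Nat.dist j n)^2 := by
  rcases le_or_gt (j+1) n with hl | hl
  · rw [Nat.dist_eq_sub_of_le hl, Nat.dist_eq_sub_of_le (by omega : j ≤ n)]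
    zify [hl, (by omega : j ≤ n), hj]
    ring
  · rw [Nat.dist_eq_sub_of_le_right (by omega : n ≤ j + 1),
      Nat.dist_eq_sub_of_le_right (by omega : n ≤ j)]
    zify [(by omega : n ≤ j + 1), (by omega : n ≤ j), hj]
    ring

theorem neg_one_pow_add_two (a : ℕ) : (-1 : PowerSeries ℤ)^(a+2) = (-1)^a := by
  rw [pow_add, neg_one_sq, mul_one]

theorem step1 (h n : ℕ) : Tsum h (n+1) = (1 - X ^ (h * (2*n+1))) * Asum h n := by
  have key : Tsum h (n+1)
      = Asum h n + (∑ l ∈ range (2*n+2),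
          (-1 : PowerSeries ℤ)^(l+n+1) * X ^ (h * (Nat.dist l (n+1))^2 + 2*h*l) * gb (2*h) (2*n+1) l) := by
    rw [Tsum, show 2*(n+1)+1 = (2*n+2)+1 by ring]
    rw [Finset.sum_range_succ'
      (fun i => (-1 : PowerSeries ℤ)^(i+(n+1)) * X ^ (h * (Nat.dist i (n+1))^2) * gb (2*h) (2*(n+1)) i)
      (2*n+2)]
    have expand : ∀ j ∈ range (2*n+2),
        (-1 : PowerSeries ℤ)^(j+1+(n+1)) * X ^ (h * (Nat.dist (j+1) (n+1))^2) * gb (2*h) (2*(n+1)) (j+1)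
        = (-1 : PowerSeries ℤ)^(j+n) * X ^ (h * (Nat.dist j n)^2) * gb (2*h) (2*n+1) j
          + (-1 : PowerSeries ℤ)^(j+1+n+1) * X ^ (h * (Nat.dist (j+1) (n+1))^2 + 2*h*(j+1)) * gb (2*h) (2*n+1) (j+1) := by
      intro j hj
      rw [show 2*(n+1) = (2*n+1)+1 by ring, gb_succ_succ (2*h) (2*n+1) j,
        Nat.dist_succ_succ,
        show j+1+(n+1) = (j+n)+2 by omega,
        show j+1+n+1 = (j+n)+2 by omega,
        neg_one_pow_add_two,
        pow_add (X : PowerSeries ℤ) (h*(Nat.dist j n)^2) (2*h*(j+1))]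
      ring
    rw [Finset.sum_congr rfl expand, Finset.sum_add_distrib]
    -- now: Sum1 + Sum2 + f 0 = Asum + (range(2n+2) sum of G)
    -- Sum1 over range(2n+2) = Asum h n exactly
    rw [Asum]
    -- handle Sum2 + f0 = range(2n+2) sum of G l
    -- f 0 = (-1)^(0+(n+1)) X^(h*dist 0 (n+1)^2) * gb (2h) (2(n+1)) 0 = G 0
    -- ∑_{j∈range(2n+2)} G (j+1) + G 0 = ∑_{l ∈ range (2n+3)} G l = ∑_{l∈range(2n+2)} G l  (top term zero)
    have : (∑ j ∈ range (2*n+2),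
        (-1 : PowerSeries ℤ)^(j+1+n+1) * X ^ (h * (Nat.dist (j+1) (n+1))^2 + 2*h*(j+1)) * gb (2*h) (2*n+1) (j+1))
        + (-1 : PowerSeries ℤ)^(0+(n+1)) * X ^ (h * (Nat.dist 0 (n+1))^2) * gb (2*h) (2*(n+1)) 0
        = ∑ l ∈ range (2*n+2),
          (-1 : PowerSeries ℤ)^(l+n+1) * X ^ (h * (Nat.dist l (n+1))^2 + 2*h*l) * gb (2*h) (2*n+1) l := by
      have e0 : ((-1 : PowerSeries ℤ)^(0+(n+1)) * X ^ (h * (Nat.dist 0 (n+1))^2) * gb (2*h) (2*(n+1)) 0)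
          = (-1 : PowerSeries ℤ)^(0+n+1) * X ^ (h * (Nat.dist 0 (n+1))^2 + 2*h*0) * gb (2*h) (2*n+1) 0 := by
        simp [gb_zero_right]
      rw [e0, ← Finset.sum_range_succ'
        (fun l => (-1 : PowerSeries ℤ)^(l+n+1) * X ^ (h * (Nat.dist l (n+1))^2 + 2*h*l) * gb (2*h) (2*n+1) l)
        (2*n+2)]
      rw [Finset.sum_range_succ]
      rw [gb_eq_zero (2*h) (2*n+1) (2*n+2) (by omega), mul_zero, add_zero]
    linear_combination this
  rw [key]
  have : (∑ l ∈ range (2*n+2),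
      (-1 : PowerSeries ℤ)^(l+n+1) * X ^ (h * (Nat.dist l (n+1))^2 + 2*h*l) * gb (2*h) (2*n+1) l)
      = - (X ^ (h * (2*n+1)) * Asum h n) := by
    rw [Asum, Finset.mul_sum, ← Finset.sum_neg_distrib]
    apply Finset.sum_congr rfl
    intro l _
    rw [hd1 h l n, pow_add, pow_succ]
    ring
  rw [this]
  ring

theorem step2 (h n : ℕ) : Asum h n = (1 - X ^ (h * (2*n+1))) * Tsum h n := by
  have key : Asum h n
      = Tsum h n + (∑ j ∈ range (2*n+1),
          (-1 : PowerSeries ℤ)^(j+n+1) * X ^ (h * (Nat.dist (j+1) n)^2 + 2*h*(2*n-j)) * gb (2*h) (2*n) j) := by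
    rw [Asum]
    rw [Finset.sum_range_succ'
      (fun j => (-1 : PowerSeries ℤ)^(j+n) * X ^ (h * (Nat.dist j n)^2) * gb (2*h) (2*n+1) j)
      (2*n+1)]
    have expand : ∀ j ∈ range (2*n+1),
        (-1 : PowerSeries ℤ)^(j+1+n) * X ^ (h * (Nat.dist (j+1) n)^2) * gb (2*h) (2*n+1) (j+1)
        = (-1 : PowerSeries ℤ)^(j+n+1) * X ^ (h * (Nat.dist (j+1) n)^2 + 2*h*(2*n-j)) * gb (2*h) (2*n) j
          + (-1 : PowerSeries ℤ)^(j+1+n) * X ^ (h * (Nat.dist (j+1) n)^2) * gb (2*h) (2*n) (j+1) := by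
      intro j hj
      rw [Finset.mem_range] at hj
      rw [gb_pascal2 (2*h) (2*n) j (by omega),
        show j+1+n = j+n+1 by omega,
        pow_add (X : PowerSeries ℤ) (h*(Nat.dist (j+1) n)^2) (2*h*(2*n-j))]
      ring
    rw [Finset.sum_congr rfl expand, Finset.sum_add_distrib]
    -- ∑_{j∈range(2n+1)} Gβ (j+1) + Gβ 0 = Tsum h n via sum_range_succ' reversed
    have : (∑ j ∈ range (2*n+1),
        (-1 : PowerSeries ℤ)^(j+1+n) * X ^ (h * (Nat.dist (j+1) n)^2) * gb (2*h) (2*n) (j+1))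
        + (-1 : PowerSeries ℤ)^(0+n) * X ^ (h * (Nat.dist 0 n)^2) * gb (2*h) (2*n+1) 0
        = Tsum h n := by
      have e0 : ((-1 : PowerSeries ℤ)^(0+n) * X ^ (h * (Nat.dist 0 n)^2) * gb (2*h) (2*n+1) 0)
          = (-1 : PowerSeries ℤ)^(0+n) * X ^ (h * (Nat.dist 0 n)^2) * gb (2*h) (2*n) 0 := by
        simp [gb_zero_right]
      rw [e0, ← Finset.sum_range_succ'
        (fun l => (-1 : PowerSeries ℤ)^(l+n) * X ^ (h * (Nat.dist l n)^2) * gb (2*h) (2*n) l)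
        (2*n+1)]
      rw [Tsum, Finset.sum_range_succ]
      rw [gb_eq_zero (2*h) (2*n) (2*n+1) (by omega), mul_zero, add_zero]
    linear_combination this
  rw [key]
  have : (∑ j ∈ range (2*n+1),
      (-1 : PowerSeries ℤ)^(j+n+1) * X ^ (h * (Nat.dist (j+1) n)^2 + 2*h*(2*n-j)) * gb (2*h) (2*n) j)
      = - (X ^ (h * (2*n+1)) * Tsum h n) := by
    rw [Tsum, Finset.mul_sum, ← Finset.sum_neg_distrib]
    apply Finset.sum_congr rfl
    intro j hj
    rw [Finset.mem_range] at hj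
    rw [hd2 h j n (by omega), pow_add, pow_succ]
    ring
  rw [this]
  ring

theorem jtp (h n : ℕ) : Tsum h n = (pochOdd h n)^2 := by
  induction n with
  | zero => simp [Tsum, pochOdd]
  | succ n ih =>
    rw [step1, step2, ih, pochOdd_succ]
    ring

/-- indicator series of exponents h·(2t)², t ≥ 1 -/
noncomputable def Dser (h : ℕ) : PowerSeries ℤ :=
  PowerSeries.mk fun n => if ∃ t : ℕ, 0 < t ∧ n = h * (2*t)^2 then 1 else 0

/-- indicator series of exponents h·(2s+1)² -/
noncomputable def Tser (h : ℕ) : PowerSeries ℤ :=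
  PowerSeries.mk fun n => if ∃ s : ℕ, n = h * (2*s+1)^2 then 1 else 0

/-- the theta series φ(-q^h) = 1 + 2∑_{k even ≥ 2} q^{hk²} - 2∑_{k odd} q^{hk²} -/
noncomputable def Phi (h : ℕ) : PowerSeries ℤ := 1 + 2 * Dser h - 2 * Tser h

/-- truncated theta sum -/
noncomputable def Theta (h n : ℕ) : PowerSeries ℤ :=
  ∑ i ∈ range (2*n+1), (-1 : PowerSeries ℤ)^(i+n) * X ^ (h * (Nat.dist i n)^2)

theorem coeff_two_mul {R : Type*} [CommRing R] (j : ℕ) (f : PowerSeries R) :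
    coeff (R := R) j (2 * f) = 2 * coeff (R := R) j f := by
  rw [two_mul, map_add, two_mul]

theorem coeff_neg_one_pow_mul_X_pow (m e j : ℕ) :
    coeff (R := ℤ) j ((-1 : PowerSeries ℤ)^m * X ^ e) = (-1 : ℤ)^m * (if j = e then 1 else 0) := by
  have : ((-1 : PowerSeries ℤ))^m = C (R := ℤ) ((-1 : ℤ)^m) := by
    rw [map_pow, map_neg, map_one]
  rw [this, coeff_C_mul, coeff_X_pow]

theorem sq_pos_ne {h j t : ℕ} (hh : 1 ≤ h) (ht : 0 < t) : j = h * t^2 → j ≠ 0 := by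
  intro hj
  have : 0 < h * t^2 := Nat.mul_pos hh (by positivity)
  omega

/-- truncation: below N, `Theta h n` agrees with `Phi h` whenever `n ≥ N`. -/
theorem EqB_Phi_Theta {h : ℕ} (hh : 1 ≤ h) {N n : ℕ} (hn : N ≤ n) :
    EqB N (Phi h) (Theta h n) := by
  intro j hj
  have hjn : j < n := lt_of_lt_of_le hj hn
  rw [Theta, map_sum]
  simp only [coeff_neg_one_pow_mul_X_pow]
  rw [Phi]
  rw [map_sub, map_add, coeff_two_mul, coeff_two_mul, Dser, Tser, coeff_mk, coeff_mk,
    PowerSeries.coeff_one]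
  by_cases hsq : ∃ k : ℕ, 0 < k ∧ j = h * k^2
  · obtain ⟨k, hk, hjk⟩ := hsq
    have hj0 : j ≠ 0 := sq_pos_ne hh hk hjk
    have hkn : k < n := by
      have h1 : k ≤ k^2 := Nat.le_self_pow (by omega) k
      have h2 : k^2 ≤ h * k^2 := Nat.le_mul_of_pos_left _ hh
      omega
    -- the sum has exactly two nonzero terms, i = n-k and i = n+k
    have hcond : ∀ i, (j = h * (Nat.dist i n)^2) ↔ (i = n - k ∨ i = n + k) := by
      intro i
      constructor
      · intro he
        have : (Nat.dist i n)^2 = k^2 := by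
          have h5 := he.symm.trans hjk
          exact Nat.eq_of_mul_eq_mul_left (by omega) h5
        have : Nat.dist i n = k := Nat.pow_left_injective (by omega) this
        rcases le_total i n with hin | hin
        · left
          rw [Nat.dist_eq_sub_of_le hin] at this
          omega
        · right
          rw [Nat.dist_eq_sub_of_le_right hin] at this
          omega
      · rintro (rfl | rfl)
        · rw [Nat.dist_eq_sub_of_le (by omega), hjk]
          congr 2
          omega
        · rw [Nat.dist_eq_sub_of_le_right (by omega), hjk]
          congr 2
          omega
    have hsub : ({n - k, n + k} : Finset ℕ) ⊆ range (2*n+1) := by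
      intro x hx
      rw [Finset.mem_insert, Finset.mem_singleton] at hx
      rw [Finset.mem_range]
      rcases hx with rfl | rfl <;> omega
    have hvanish : ∀ x ∈ range (2*n+1), x ∉ ({n - k, n + k} : Finset ℕ) →
        (-1 : ℤ)^(x+n) * (if j = h * (Nat.dist x n)^2 then 1 else 0) = 0 := by
      intro x _ hx
      rw [Finset.mem_insert, Finset.mem_singleton] at hx
      push_neg at hx
      rw [if_neg, mul_zero]
      rw [hcond x]
      omega
    rw [← Finset.sum_subset hsub hvanish]
    rw [Finset.sum_pair (by omega : n - k ≠ n + k)]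
    rw [if_pos ((hcond (n-k)).mpr (Or.inl rfl)), if_pos ((hcond (n+k)).mpr (Or.inr rfl))]
    have hsign : (-1 : ℤ)^(n + k + n) = (-1 : ℤ)^(n - k + n) := by
      have h2k : (-1 : ℤ)^(2*k) = 1 := by rw [pow_mul, neg_one_sq, one_pow]
      have e : (-1 : ℤ)^(n + k + n) = (-1 : ℤ)^((n - k + n) + 2*k) := by congr 1; omega
      rw [e, pow_add, h2k, mul_one]
    rw [mul_one, mul_one, hsign, if_neg hj0]
    -- case on parity of k
    have hval : ((-1 : ℤ))^(n - k + n) = (-1)^k := by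
      have hkk : (-1 : ℤ)^k * (-1 : ℤ)^k = 1 := by
        rw [← pow_add]; exact Even.neg_one_pow ⟨k, rfl⟩
      have h2n : (-1 : ℤ)^(n - k + n + k) = 1 := by
        have e : n - k + n + k = 2*n := by omega
        rw [e, pow_mul, neg_one_sq, one_pow]
      calc (-1 : ℤ)^(n - k + n) = (-1 : ℤ)^(n - k + n) * ((-1 : ℤ)^k * (-1 : ℤ)^k) := by
            rw [hkk, mul_one]
        _ = ((-1 : ℤ)^(n - k + n) * (-1 : ℤ)^k) * (-1 : ℤ)^k := by rw [mul_assoc]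
        _ = (-1 : ℤ)^(n - k + n + k) * (-1 : ℤ)^k := by rw [← pow_add]
        _ = (-1 : ℤ)^k := by rw [h2n, one_mul]
    rw [hval]
    rcases Nat.even_or_odd k with ⟨t, rfl⟩ | ⟨t, rfl⟩
    · have ht : 0 < t := by omega
      rw [if_pos ⟨t, ht, by rw [hjk]; ring⟩]
      rw [if_neg]
      · have e1 : (-1 : ℤ)^(t + t) = 1 := Even.neg_one_pow ⟨t, rfl⟩
        rw [e1]
        ring
      · rintro ⟨s, hs⟩
        rw [hjk] at hs
        have : (t + t)^2 = (2*s+1)^2 := Nat.eq_of_mul_eq_mul_left (by omega) hs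
        have := Nat.pow_left_injective (by omega : 2 ≠ 0) this
        omega
    · rw [if_neg, if_pos ⟨t, hjk⟩]
      · have e1 : (-1 : ℤ)^(2*t+1) = -1 := Odd.neg_one_pow ⟨t, by ring⟩
        rw [e1]
        ring
      · rintro ⟨s, hs, hs2⟩
        rw [hjk] at hs2
        have : (2*t + 1)^2 = (2*s)^2 := Nat.eq_of_mul_eq_mul_left (by omega) hs2
        have := Nat.pow_left_injective (by omega : 2 ≠ 0) this
        omega
  · -- no representation
    by_cases hj0 : j = 0
    · subst hj0
      have hmem : n ∈ range (2*n+1) := by rw [Finset.mem_range]; omega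
      have hvan : ∀ i ∈ range (2*n+1), i ≠ n →
          (-1 : ℤ)^(i+n) * (if (0:ℕ) = h * (Nat.dist i n)^2 then 1 else 0) = 0 := by
        intro i _ hin
        rw [if_neg, mul_zero]
        intro he
        have hd2 : h * (Nat.dist i n)^2 = 0 := he.symm
        rcases Nat.mul_eq_zero.mp hd2 with h' | h'
        · omega
        · have : Nat.dist i n = 0 := by
            have := Nat.pow_eq_zero.mp h'
            tauto
          exact hin (Nat.eq_of_dist_eq_zero this)
      rw [Finset.sum_eq_single_of_mem n hmem hvan, Nat.dist_self]
      have h00 : (0 : ℕ) = h * 0^2 := by ring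
      rw [if_pos h00, mul_one, if_pos rfl, if_neg, if_neg]
      · have : (-1 : ℤ)^(n+n) = 1 := Even.neg_one_pow ⟨n, rfl⟩
        rw [this]
        ring
      · rintro ⟨s, hs⟩
        exact (sq_pos_ne hh (by omega : 0 < 2*s+1) hs) rfl
      · rintro ⟨t, ht, hs⟩
        exact (sq_pos_ne hh (by omega : 0 < 2*t) hs) rfl
    · rw [if_neg hj0, if_neg, if_neg]
      · rw [Finset.sum_eq_zero]
        · ring
        intro i _
        rw [if_neg, mul_zero]
        intro he
        have hd : 0 < Nat.dist i n := by
          rcases Nat.eq_zero_or_pos (Nat.dist i n) with h0 | h0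
          · rw [h0] at he
            simp at he
            omega
          · exact h0
        exact hsq ⟨Nat.dist i n, hd, he⟩
      · rintro ⟨s, hs⟩
        exact hsq ⟨2*s+1, by omega, hs⟩
      · rintro ⟨t, ht, hs⟩
        exact hsq ⟨2*t, by omega, hs⟩

theorem poch_split (h : ℕ) : ∀ n, poch ℤ h (2*n) = pochOdd h n * poch ℤ (2*h) n := by
  intro n
  induction n with
  | zero => simp [poch_zero, pochOdd]
  | succ n ih =>
    rw [show 2*(n+1) = (2*n+1)+1 by ring, poch_succ, show 2*n+1 = (2*n)+1 from rfl, poch_succ,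
      ih, pochOdd_succ, poch_succ]
    rw [show h * (2*n+1+1) = 2*h*(n+1) by ring]
    ring

theorem coeff_X_pow_mul_of_lt {R : Type*} [CommRing R] (f : PowerSeries R) (e m : ℕ)
    (hm : m < e) : coeff (R := R) m (X ^ e * f) = 0 := by
  rw [coeff_mul]
  apply Finset.sum_eq_zero
  intro p hp
  rw [Finset.HasAntidiagonal.mem_antidiagonal] at hp
  rw [coeff_X_pow, if_neg (by omega), zero_mul]

theorem EqB.sum {R : Type*} [CommRing R] {N : ℕ} {s : Finset ℕ} {f g : ℕ → PowerSeries R}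
    (h : ∀ i ∈ s, EqB N (f i) (g i)) : EqB N (∑ i ∈ s, f i) (∑ i ∈ s, g i) := by
  intro j hj
  rw [map_sum, map_sum]
  exact Finset.sum_congr rfl fun i hi => h i hi j hj

theorem EqB_unit_cancel {N : ℕ} {A B P Q P' Q' : PowerSeries ℤ} (hP : P * P' = 1)
    (hQ : Q * Q' = 1) (h1 : EqB N (A * P) (B * Q)) (h2 : EqB N P Q) : EqB N A B := by
  have hinv := EqB.inv hP hQ h2
  have h3 := h1.mul hinv
  have eA : A * P * P' = A := by rw [mul_assoc, hP, mul_one]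
  have eB : B * Q * Q' = B := by rw [mul_assoc, hQ, mul_one]
  rwa [eA, eB] at h3

/-- The Gauss identity: φ(-q^h) · (q^{2h};q^{2h})_∞ = (q^h;q^h)_∞². -/
theorem gauss (h : ℕ) (hh : 1 ≤ h) :
    Phi h * qPochInf ℤ (2*h) = (qPochInf ℤ h)^2 := by
  have h2h : 1 ≤ 2*h := by omega
  apply PowerSeries.ext
  intro d
  suffices key : ∀ N, EqB N (Phi h * qPochInf ℤ (2*h)) ((qPochInf ℤ h)^2) by
    exact key (d+1) d (Nat.lt_succ_self d)
  intro N
  rcases Nat.eq_zero_or_pos N with rfl | hN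
  · intro i hi; omega
  set n := 2*N with hn
  set F := qPochInf ℤ (2*h) with hF
  have hFu : F * PowerSeries.invOfUnit F 1 = 1 := by
    apply PowerSeries.mul_invOfUnit
    rw [hF, constantCoeff_qPochInf _ h2h, Units.val_one]
  set F' := PowerSeries.invOfUnit F 1 with hF'
  -- step A : (qPochInf h)^2 ≈ Tsum h n * poch (2h) n ^ 2
  have stepA : EqB N ((qPochInf ℤ h)^2) (Tsum h n * poch ℤ (2*h) n ^ 2) := by
    have e1 : EqB N (qPochInf ℤ h) (poch ℤ h (2*n)) := EqB_qPochInf hh (by omega)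
    have e2 := e1.mul e1
    have : (poch ℤ h (2*n)) * (poch ℤ h (2*n)) = Tsum h n * poch ℤ (2*h) n ^ 2 := by
      rw [poch_split, jtp]
      ring
    rw [pow_two]
    exact this ▸ e2
  -- step B : termwise
  have stepB : EqB N (Tsum h n * poch ℤ (2*h) n ^ 2) (Theta h n * F) := by
    rw [Tsum, Theta, Finset.sum_mul, Finset.sum_mul]
    apply EqB.sum
    intro i hi
    rw [Finset.mem_range] at hi
    have hi2n : i ≤ 2*n := by omega
    -- rearrange
    have eL : (-1 : PowerSeries ℤ)^(i+n) * X ^ (h * (Nat.dist i n)^2) * gb (2*h) (2*n) i * poch ℤ (2*h) n ^ 2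
        = (-1 : PowerSeries ℤ)^(i+n) * (X ^ (h * (Nat.dist i n)^2) * (gb (2*h) (2*n) i * poch ℤ (2*h) n ^ 2)) := by ring
    have eR : (-1 : PowerSeries ℤ)^(i+n) * X ^ (h * (Nat.dist i n)^2) * F
        = (-1 : PowerSeries ℤ)^(i+n) * (X ^ (h * (Nat.dist i n)^2) * F) := by ring
    rw [eL, eR]
    apply EqB.mul (@EqB.refl _ _ N _)
    by_cases he : h * (Nat.dist i n)^2 < N
    · -- the important case: i and 2n - i are ≥ N
      apply EqB.mul (@EqB.refl _ _ N _)
      have hdist : Nat.dist i n < N := by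
        by_contra hge
        push_neg at hge
        have h1 : N ≤ (Nat.dist i n)^2 := le_trans (Nat.le_self_pow (by omega) N)
          (Nat.pow_le_pow_left hge 2)
        have h2 : (Nat.dist i n)^2 ≤ h * (Nat.dist i n)^2 := Nat.le_mul_of_pos_left _ hh
        omega
      have hiN : N < i := by
        rcases le_total i n with hin | hin
        · rw [Nat.dist_eq_sub_of_le hin] at hdist; omega
        · omega
      have h2niN : N < 2*n - i := by
        rcases le_total i n with hin | hin
        · omega
        · rw [Nat.dist_eq_sub_of_le_right hin] at hdist; omega
      -- gb * poch i * poch (2n-i) = poch (2n)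
      have hgb := gb_poch (2*h) (2*n) i hi2n
      set Pi := poch ℤ (2*h) i with hPi
      set Pj := poch ℤ (2*h) (2*n - i) with hPj
      have hPiu : Pi * PowerSeries.invOfUnit Pi 1 = 1 := by
        apply PowerSeries.mul_invOfUnit
        rw [hPi, constantCoeff_poch _ _ h2h, Units.val_one]
      have hPju : Pj * PowerSeries.invOfUnit Pj 1 = 1 := by
        apply PowerSeries.mul_invOfUnit
        rw [hPj, constantCoeff_poch _ _ h2h, Units.val_one]
      apply EqB_unit_cancel (P := Pi * Pj) (Q := F * F)
        (P' := PowerSeries.invOfUnit Pi 1 * PowerSeries.invOfUnit Pj 1)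
        (Q' := F' * F')
      · calc Pi * Pj * (PowerSeries.invOfUnit Pi 1 * PowerSeries.invOfUnit Pj 1)
            = (Pi * PowerSeries.invOfUnit Pi 1) * (Pj * PowerSeries.invOfUnit Pj 1) := by ring
          _ = 1 := by rw [hPiu, hPju, mul_one]
      · calc F * F * (F' * F') = (F * F') * (F * F') := by ring
          _ = 1 := by rw [hFu, mul_one]
      · have eL2 : gb (2*h) (2*n) i * poch ℤ (2*h) n ^ 2 * (Pi * Pj)
            = (gb (2*h) (2*n) i * Pi * Pj) * poch ℤ (2*h) n ^ 2 := by ring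
        rw [eL2, hgb]
        -- poch (2n) * poch n ^2 ≈ F * (F * F)
        have g1 : EqB N (poch ℤ (2*h) (2*n)) F := (EqB_qPochInf h2h (by omega)).symm
        have g2 : EqB N (poch ℤ (2*h) n) F := (EqB_qPochInf h2h (by omega)).symm
        have : EqB N (poch ℤ (2*h) (2*n) * (poch ℤ (2*h) n * poch ℤ (2*h) n)) (F * (F * F)) :=
          g1.mul (g2.mul g2)
        rw [pow_two]
        exact this
      · have g3 : EqB N Pi F := (EqB_qPochInf h2h (by omega)).symm
        have g4 : EqB N Pj F := (EqB_qPochInf h2h (by omega)).symm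
        exact g3.mul g4
    · -- exponent too big: both sides vanish below N
      push_neg at he
      intro m hm
      rw [coeff_X_pow_mul_of_lt _ _ _ (by omega), coeff_X_pow_mul_of_lt _ _ _ (by omega)]
  -- step C : Theta * F ≈ Phi * F
  have stepC : EqB N (Theta h n * F) (Phi h * F) :=
    ((EqB_Phi_Theta hh (by omega : N ≤ n)).symm).mul (@EqB.refl _ _ N F)
  exact ((stepA.trans stepB).trans stepC).symm

abbrev R16 := ZMod 16

section SupMachinery
variable {S : Type*} [CommRing S]

/-- support of a power series is contained in exponents satisfying P -/
def Sup (f : PowerSeries S) (P : ℕ → Prop) : Prop := ∀ n, coeff (R := S) n f ≠ 0 → P n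

theorem Sup.mul {f g : PowerSeries S} {P Q : ℕ → Prop} (hf : Sup f P) (hg : Sup g Q) :
    Sup (f * g) (fun n => ∃ a b : ℕ, P a ∧ Q b ∧ a + b = n) := by
  intro n hn
  rw [coeff_mul] at hn
  obtain ⟨p, hp, hne⟩ := Finset.exists_ne_zero_of_sum_ne_zero hn
  rw [Finset.HasAntidiagonal.mem_antidiagonal] at hp
  refine ⟨p.1, p.2, hf p.1 ?_, hg p.2 ?_, hp⟩
  · intro h0; rw [h0, zero_mul] at hne; exact hne rfl
  · intro h0; rw [h0, mul_zero] at hne; exact hne rfl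

theorem Sup.coeff_eq_zero {f : PowerSeries S} {P : ℕ → Prop} (hf : Sup f P) {N : ℕ}
    (hN : ¬ P N) : coeff (R := S) N f = 0 := by
  by_contra h
  exact hN (hf N h)

theorem coeff_map_Dser (φ : ℤ →+* S) (h n : ℕ) :
    coeff (R := S) n (PowerSeries.map φ (Dser h)) =
      if ∃ t : ℕ, 0 < t ∧ n = h * (2*t)^2 then 1 else 0 := by
  rw [PowerSeries.coeff_map, Dser, coeff_mk, apply_ite φ, map_one, map_zero]

theorem coeff_map_Tser (φ : ℤ →+* S) (h n : ℕ) :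
    coeff (R := S) n (PowerSeries.map φ (Tser h)) =
      if ∃ s : ℕ, n = h * (2*s+1)^2 then 1 else 0 := by
  rw [PowerSeries.coeff_map, Tser, coeff_mk, apply_ite φ, map_one, map_zero]

-- congruence classes mod 8
theorem cls_d1 {n t : ℕ} (e : n = 1 * (2*t)^2) : n % 8 = 0 ∨ n % 8 = 4 := by
  rcases Nat.even_or_odd t with ⟨q, rfl⟩ | ⟨q, rfl⟩
  · have : n = 16 * q^2 := by rw [e]; ring
    omega
  · have : n = 16 * (q^2 + q) + 4 := by rw [e]; ring
    omega

theorem cls_t1 {n s : ℕ} (e : n = 1 * (2*s+1)^2) : n % 8 = 1 := by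
  rcases Nat.even_or_odd s with ⟨q, rfl⟩ | ⟨q, rfl⟩
  · have : n = 8 * (2 * q^2 + q) + 1 := by rw [e]; ring
    omega
  · have : n = 8 * (2 * q^2 + 3 * q + 1) + 1 := by rw [e]; ring
    omega

theorem cls_d2 {n u : ℕ} (e : n = 2 * (2*u)^2) : n % 8 = 0 := by
  have : n = 8 * u^2 := by rw [e]; ring
  omega

theorem cls_t2 {n s : ℕ} (e : n = 2 * (2*s+1)^2) : n % 8 = 2 := by
  have : n = 8 * (s^2 + s) + 2 := by rw [e]; ring
  omega

theorem sup_D1 (φ : ℤ →+* S) :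
    Sup (PowerSeries.map φ (Dser 1)) (fun n => n % 8 = 0 ∨ n % 8 = 4) := by
  intro n hn
  rw [coeff_map_Dser] at hn
  by_cases hc : ∃ t : ℕ, 0 < t ∧ n = 1 * (2*t)^2
  · obtain ⟨t, _, e⟩ := hc
    exact cls_d1 e
  · rw [if_neg hc] at hn; exact absurd rfl hn

theorem sup_T1 (φ : ℤ →+* S) :
    Sup (PowerSeries.map φ (Tser 1)) (fun n => n % 8 = 1) := by
  intro n hn
  rw [coeff_map_Tser] at hn
  by_cases hc : ∃ s : ℕ, n = 1 * (2*s+1)^2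
  · obtain ⟨s, e⟩ := hc
    exact cls_t1 e
  · rw [if_neg hc] at hn; exact absurd rfl hn

theorem sup_D2 (φ : ℤ →+* S) :
    Sup (PowerSeries.map φ (Dser 2)) (fun n => n % 8 = 0) := by
  intro n hn
  rw [coeff_map_Dser] at hn
  by_cases hc : ∃ t : ℕ, 0 < t ∧ n = 2 * (2*t)^2
  · obtain ⟨t, _, e⟩ := hc
    exact cls_d2 e
  · rw [if_neg hc] at hn; exact absurd rfl hn

theorem sup_T2 (φ : ℤ →+* S) :
    Sup (PowerSeries.map φ (Tser 2)) (fun n => n % 8 = 2) := by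
  intro n hn
  rw [coeff_map_Tser] at hn
  by_cases hc : ∃ s : ℕ, n = 2 * (2*s+1)^2
  · obtain ⟨s, e⟩ := hc
    exact cls_t2 e
  · rw [if_neg hc] at hn; exact absurd rfl hn

end SupMachinery

-- char-2 square coefficient lemma
theorem coeff_sq_char2 (f : PowerSeries (ZMod 2)) (c : ℕ) :
    coeff (R := (ZMod 2)) (2*c) (f * f) = coeff (R := (ZMod 2)) c f * coeff (R := (ZMod 2)) c f := by
  rw [coeff_mul]
  have hmem : ((c, c) : ℕ × ℕ) ∈ Finset.HasAntidiagonal.antidiagonal (2*c) := by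
    rw [Finset.HasAntidiagonal.mem_antidiagonal]; omega
  rw [← Finset.sum_erase_add _ _ hmem]
  have : (∑ p ∈ (Finset.HasAntidiagonal.antidiagonal (2*c)).erase (c, c),
      coeff (R := (ZMod 2)) p.1 f * coeff (R := (ZMod 2)) p.2 f) = 0 := by
    apply Finset.sum_involution (fun p _ => (p.2, p.1))
    · intro p _
      rw [mul_comm]
      exact CharTwo.add_self_eq_zero _
    · intro p hp _
      intro heq
      have h1 : p.1 = p.2 := congrArg Prod.snd heq
      rw [Finset.mem_erase, Finset.HasAntidiagonal.mem_antidiagonal] at hp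
      apply hp.1
      have : p.1 = c := by omega
      have h2 : p.2 = c := by omega
      rw [Prod.ext_iff]
      exact ⟨this, h2⟩
    · intro p hp
      rw [Finset.mem_erase, Finset.HasAntidiagonal.mem_antidiagonal] at hp ⊢
      constructor
      · intro heq
        apply hp.1
        have h1 : p.2 = c := congrArg Prod.fst heq
        have h2 : p.1 = c := by
          have := hp.2; omega
        rw [Prod.ext_iff]
        exact ⟨h2, h1⟩
      · simp only [Prod.fst, Prod.snd]
        omega
    · intro p _
      rfl
  rw [this, zero_add]

noncomputable def cD1 : PowerSeries (ZMod 2) := PowerSeries.map (Int.castRingHom (ZMod 2)) (Dser 1)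
noncomputable def cT1 : PowerSeries (ZMod 2) := PowerSeries.map (Int.castRingHom (ZMod 2)) (Tser 1)
noncomputable def cD2 : PowerSeries (ZMod 2) := PowerSeries.map (Int.castRingHom (ZMod 2)) (Dser 2)
noncomputable def cT2 : PowerSeries (ZMod 2) := PowerSeries.map (Int.castRingHom (ZMod 2)) (Tser 2)

noncomputable def Rser : PowerSeries (ZMod 2) := cD1 + cD2 + cD1*cD1 + cD2*cD2 + cT2*cT2

theorem mul_self_zmod2 : ∀ x : ZMod 2, x * x = x := by decide

/-- THE combinatorial claim: R has no exponents ≡ 0 mod 8. -/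
theorem claimR {b : ℕ} (hb : b % 8 = 0) : coeff (R := (ZMod 2)) b Rser = 0 := by
  obtain ⟨m, rfl⟩ : ∃ m, b = 8*m := ⟨b/8, by omega⟩
  have e2 : (8*m : ℕ) = 2*(4*m) := by ring
  -- squares
  have sq1 : coeff (R := (ZMod 2)) (8*m) (cD1*cD1) = coeff (R := (ZMod 2)) (4*m) cD1 := by
    rw [e2, coeff_sq_char2, mul_self_zmod2]
  have sq2 : coeff (R := (ZMod 2)) (8*m) (cD2*cD2) = coeff (R := (ZMod 2)) (4*m) cD2 := by
    rw [e2, coeff_sq_char2, mul_self_zmod2]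
  have sq3 : coeff (R := (ZMod 2)) (8*m) (cT2*cT2) = coeff (R := (ZMod 2)) (4*m) cT2 := by
    rw [e2, coeff_sq_char2, mul_self_zmod2]
  -- identifications
  have id1 : coeff (R := (ZMod 2)) (4*m) cD1 = coeff (R := (ZMod 2)) (8*m) cD2 := by
    rw [cD1, cD2, coeff_map_Dser, coeff_map_Dser]
    apply if_congr _ rfl rfl
    constructor
    · rintro ⟨t, ht, e⟩
      exact ⟨t, ht, by omega⟩
    · rintro ⟨t, ht, e⟩
      exact ⟨t, ht, by omega⟩
  have id2 : coeff (R := (ZMod 2)) (4*m) cD2 = coeff (R := (ZMod 2)) (8*m) cD1 := by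
    rw [cD1, cD2, coeff_map_Dser, coeff_map_Dser]
    apply if_congr _ rfl rfl
    constructor
    · rintro ⟨u, hu, e⟩
      refine ⟨2*u, by omega, ?_⟩
      have h4 : (2*(2*(2*u)))^2 = 16 * (2*u)^2 := by ring
      have h5 : (2*(2*u))^2 = 4*(2*u)^2 := by ring
      omega
    · rintro ⟨t, ht, e⟩
      have htsq : t^2 = 2*m := by
        have : (2*t)^2 = 4*t^2 := by ring
        omega
      have hev : Even t := by
        have : Even (t^2) := ⟨m, by omega⟩
        exact (Nat.even_pow.mp this).1
      obtain ⟨q, rfl⟩ := hev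
      refine ⟨q, by omega, ?_⟩
      have h1 : (2*(q+q))^2 = 4 * (2*q)^2 := by ring
      have h2 : (2*q)^2 = 4*q^2 := by ring
      have h3 : (q+q)^2 = 4*q^2 := by ring
      omega
  have id3 : coeff (R := (ZMod 2)) (4*m) cT2 = 0 := by
    rw [cT2, coeff_map_Tser, if_neg]
    rintro ⟨s, hs⟩
    have : (2*s+1)^2 = 4*(s^2+s)+1 := by ring
    omega
  rw [Rser, map_add, map_add, map_add, map_add, sq1, sq2, sq3, id1, id2, id3]
  set x := coeff (R := (ZMod 2)) (8*m) cD1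
  set y := coeff (R := (ZMod 2)) (8*m) cD2
  have : ∀ a c : ZMod 2, a + c + c + a + 0 = 0 := by decide
  exact this x y

/-- coefficient of T1 * Rser vanishes at exponents ≡ 1 mod 8 -/
theorem coeff_T1_Rser {N : ℕ} (hN : N % 8 = 1) : coeff (R := (ZMod 2)) N (cT1 * Rser) = 0 := by
  rw [coeff_mul]
  apply Finset.sum_eq_zero
  intro p hp
  rw [Finset.HasAntidiagonal.mem_antidiagonal] at hp
  rcases eq_or_ne (coeff (R := (ZMod 2)) p.1 cT1) 0 with h1 | h1
  · rw [h1, zero_mul]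
  · have ha : p.1 % 8 = 1 := sup_T1 _ p.1 h1
    have hb : p.2 % 8 = 0 := by omega
    rw [claimR hb, mul_zero]

theorem map_comp_ps {R S T : Type*} [CommRing R] [CommRing S] [CommRing T]
    (f : R →+* S) (g : S →+* T) (φ : PowerSeries R) :
    PowerSeries.map g (PowerSeries.map f φ) = PowerSeries.map (g.comp f) φ := by
  apply PowerSeries.ext
  intro n
  simp [PowerSeries.coeff_map]

/-- 16 = 0 in power series over ZMod 16 -/
theorem sixteen_eq_zero : (16 : PowerSeries R16) = 0 := by
  have h1 : (16 : PowerSeries R16) = C (R := R16) 16 := (map_ofNat (C (R := R16)) 16).symm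
  rw [h1, show (16 : R16) = 0 from by decide, map_zero]

theorem pow8_one (g : PowerSeries R16) : (1 + 2*g)^8 = 1 := by
  have key : (1 + 2*g)^8 = 1 + 16*(g + 7*g^2 + 28*g^3 + 70*g^4 + 112*g^5 + 112*g^6
      + 64*g^7 + 16*g^8) := by ring
  rw [key, sixteen_eq_zero, zero_mul, add_zero]

noncomputable def ρ16 : R16 →+* ZMod 2 := ZMod.castHom (by norm_num : (2:ℕ) ∣ 16) (ZMod 2)

theorem eight_mul_of : ∀ x : R16, ρ16 x = 0 → (8 : R16) * x = 0 := by decide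

-- over ℤ: derive A * Phi 1 * (Phi 2)^(8m+2) = 1
theorem overZ (abar : ℕ → ℕ → ℕ) (habar : IsGenOvercubic abar) (m : ℕ) :
    (PowerSeries.mk fun n => (abar (8*m+3) n : ℤ)) * Phi 1 * (Phi 2)^(8*m+2) = 1 := by
  have hab := habar (8*m+3) (by omega)
  set A := (PowerSeries.mk fun n => (abar (8*m+3) n : ℤ)) with hA
  set f1 := qPochInf ℤ 1
  set f2 := qPochInf ℤ 2
  set f4 := qPochInf ℤ 4
  have g1 : Phi 1 * f2 = f1^2 := by
    have := gauss 1 (by omega)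
    rw [show 2*1 = 2 from rfl] at this
    exact this
  have g2 : Phi 2 * f4 = f2^2 := by
    have := gauss 2 (by omega)
    rw [show 2*2 = 4 from rfl] at this
    exact this
  have hU : (f4^(8*m+2) * f2^4) ≠ 0 := by
    intro h0
    have : constantCoeff (R := ℤ) (f4^(8*m+2) * f2^4) = 1 := by
      rw [map_mul, map_pow, map_pow, constantCoeff_qPochInf 4 (by omega),
        constantCoeff_qPochInf 2 (by omega), one_pow, one_pow, one_mul]
    rw [h0, map_zero] at this
    exact absurd this (by norm_num)
  apply mul_right_cancel₀ hU
  have e1 : (8*m+3) - 1 = 8*m+2 := by omega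
  rw [e1] at hab
  calc A * Phi 1 * Phi 2 ^ (8*m+2) * (f4^(8*m+2) * f2^4)
      = A * (Phi 1 * f2) * ((Phi 2 * f4)^(8*m+2)) * f2^3 := by
        rw [mul_pow]; ring
    _ = A * f1^2 * ((f2^2)^(8*m+2)) * f2^3 := by rw [g1, g2]
    _ = (A * f1^2 * f2^(2*(8*m+3))) * f2 := by
        rw [← pow_mul]
        rw [show 2*(8*m+3) = 2*(8*m+2) + 2 from by ring]
        rw [pow_add]
        ring
    _ = (f4^(8*m+2) * f2^3) * f2 := by rw [hab]
    _ = 1 * (f4^(8*m+2) * f2^4) := by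
        rw [show (4:ℕ) = 3 + 1 from rfl, pow_add]
        ring

-- the R16 series
noncomputable def pi16 : ℤ →+* R16 := Int.castRingHom R16
noncomputable def bD1 : PowerSeries R16 := PowerSeries.map pi16 (Dser 1)
noncomputable def bT1 : PowerSeries R16 := PowerSeries.map pi16 (Tser 1)
noncomputable def bD2 : PowerSeries R16 := PowerSeries.map pi16 (Dser 2)
noncomputable def bT2 : PowerSeries R16 := PowerSeries.map pi16 (Tser 2)

theorem map_Phi1 : PowerSeries.map pi16 (Phi 1) = 1 + 2*(bD1 - bT1) := by
  rw [Phi, map_sub, map_add, map_mul, map_mul, map_one, map_ofNat, bD1, bT1]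
  ring

theorem map_Phi2 : PowerSeries.map pi16 (Phi 2) = 1 + 2*(bD2 - bT2) := by
  rw [Phi, map_sub, map_add, map_mul, map_mul, map_one, map_ofNat, bD2, bT2]
  ring

/-- key extraction lemma: `(abar (8m+3) N : R16) = 2·[N odd square]` for N ≡ 1 mod 8. -/
theorem main_coeff (abar : ℕ → ℕ → ℕ) (habar : IsGenOvercubic abar) (m N : ℕ)
    (hN : N % 8 = 1) :
    ((abar (8*m+3) N : ℤ) : R16) =
      2 * (if ∃ s : ℕ, N = 1 * (2*s+1)^2 then 1 else 0) := by
  -- map the ℤ identity into R16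
  have hZ := overZ abar habar m
  have h16 := congrArg (PowerSeries.map pi16) hZ
  rw [map_one, map_mul, map_mul, map_pow, map_Phi1, map_Phi2] at h16
  set β := bD1 - bT1 with hβ
  set γ := bD2 - bT2 with hγ
  set Abar := PowerSeries.map pi16 (PowerSeries.mk fun n => (abar (8*m+3) n : ℤ)) with hAbar
  -- kill the power : (1+2γ)^(8m+2) = (1+2γ)^2
  have hpow : (1 + 2*γ)^(8*m+2) = (1 + 2*γ)^2 := by
    rw [show 8*m+2 = 8*m + 2 from rfl, pow_add, pow_mul, pow8_one, one_pow, one_mul]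
  rw [hpow] at h16
  -- inverses
  have inv1 : (1 + 2*β) * (1 - 2*β + 4*β^2 - 8*β^3) = 1 := by
    have : (1 + 2*β) * (1 - 2*β + 4*β^2 - 8*β^3) = 1 - 16*β^4 := by ring
    rw [this, sixteen_eq_zero, zero_mul, sub_zero]
  have inv2 : (1 + 2*γ)^2 * (1 - 4*γ + 12*γ^2) = 1 := by
    have : (1 + 2*γ)^2 * (1 - 4*γ + 12*γ^2) = 1 + 16*(2*γ^3 + 3*γ^4) := by ring
    rw [this, sixteen_eq_zero, zero_mul, add_zero]
  have hAeq : Abar = (1 - 2*β + 4*β^2 - 8*β^3) * (1 - 4*γ + 12*γ^2) := by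
    calc Abar = Abar * ((1 + 2*β) * (1 - 2*β + 4*β^2 - 8*β^3))
        * ((1 + 2*γ)^2 * (1 - 4*γ + 12*γ^2)) := by rw [inv1, inv2]; ring
      _ = (Abar * (1 + 2*β) * (1 + 2*γ)^2)
          * ((1 - 2*β + 4*β^2 - 8*β^3) * (1 - 4*γ + 12*γ^2)) := by ring
      _ = (1 - 2*β + 4*β^2 - 8*β^3) * (1 - 4*γ + 12*γ^2) := by rw [h16]; ring
  -- expansion
  have hexp : Abar = 1 - 2*β - 4*γ + 4*β^2 + 8*(β*γ) + 12*γ^2 - 8*β^3 - 24*(β*γ^2)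
      + 16*(-(β^2*γ) + 3*(β^2*γ^2) + 2*(β^3*γ) - 6*(β^3*γ^2)) := by
    rw [hAeq]; ring
  rw [sixteen_eq_zero, zero_mul, add_zero] at hexp
  -- now take coefficients at N
  have hcoeff := congrArg (coeff (R := R16) N) hexp
  -- helpers for constants
  have hC2 : (2 : PowerSeries R16) = C (R := R16) 2 := (map_ofNat (C (R := R16)) 2).symm
  have hC4 : (4 : PowerSeries R16) = C (R := R16) 4 := (map_ofNat (C (R := R16)) 4).symm
  have hC8 : (8 : PowerSeries R16) = C (R := R16) 8 := (map_ofNat (C (R := R16)) 8).symm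
  have hC12 : (12 : PowerSeries R16) = C (R := R16) 12 := (map_ofNat (C (R := R16)) 12).symm
  have hC24 : (24 : PowerSeries R16) = C (R := R16) 24 := (map_ofNat (C (R := R16)) 24).symm
  simp only [map_sub, map_add] at hcoeff
  rw [hC2, hC4, hC8, hC12, hC24] at hcoeff
  rw [coeff_C_mul, coeff_C_mul, coeff_C_mul, coeff_C_mul, coeff_C_mul, coeff_C_mul,
    coeff_C_mul] at hcoeff
  -- vanishing lemmas
  have hN0 : N ≠ 0 := by omega
  have cone : coeff (R := R16) N (1 : PowerSeries R16) = 0 := by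
    rw [PowerSeries.coeff_one, if_neg hN0]
  have cD1z : coeff (R := R16) N bD1 = 0 :=
    Sup.coeff_eq_zero (sup_D1 pi16) (by omega)
  have cD2z : coeff (R := R16) N bD2 = 0 :=
    Sup.coeff_eq_zero (sup_D2 pi16) (by omega)
  have cT2z : coeff (R := R16) N bT2 = 0 :=
    Sup.coeff_eq_zero (sup_T2 pi16) (by omega)
  have cγ : coeff (R := R16) N γ = 0 := by
    rw [hγ, map_sub, cD2z, cT2z, sub_zero]
  have cγ2 : coeff (R := R16) N (γ^2) = 0 := by
    have hexpγ : γ^2 = bD2*bD2 - 2*(bD2*bT2) + bT2*bT2 := by rw [hγ]; ring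
    have z1 : coeff (R := R16) N (bD2*bD2) = 0 := Sup.coeff_eq_zero (N := N)
      ((sup_D2 pi16).mul (sup_D2 pi16)) (by rintro ⟨a,b,ha,hb,hab⟩; omega)
    have z2 : coeff (R := R16) N (bD2*bT2) = 0 := Sup.coeff_eq_zero (N := N)
      ((sup_D2 pi16).mul (sup_T2 pi16)) (by rintro ⟨a,b,ha,hb,hab⟩; omega)
    have z3 : coeff (R := R16) N (bT2*bT2) = 0 := Sup.coeff_eq_zero (N := N)
      ((sup_T2 pi16).mul (sup_T2 pi16)) (by rintro ⟨a,b,ha,hb,hab⟩; omega)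
    rw [hexpγ, map_add, map_sub, hC2, coeff_C_mul, z1, z2, z3]
    ring
  have cβ : coeff (R := R16) N β = - coeff (R := R16) N bT1 := by
    rw [hβ, map_sub, cD1z, zero_sub]
  have cβ2 : coeff (R := R16) N (β^2) = -2 * coeff (R := R16) N (bD1*bT1) := by
    have hexpβ : β^2 = bD1*bD1 - 2*(bD1*bT1) + bT1*bT1 := by rw [hβ]; ring
    have z1 : coeff (R := R16) N (bD1*bD1) = 0 := Sup.coeff_eq_zero (N := N)
      ((sup_D1 pi16).mul (sup_D1 pi16)) (by rintro ⟨a,b,ha,hb,hab⟩; omega)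
    have z2 : coeff (R := R16) N (bT1*bT1) = 0 := Sup.coeff_eq_zero (N := N)
      ((sup_T1 pi16).mul (sup_T1 pi16)) (by rintro ⟨a,b,ha,hb,hab⟩; omega)
    rw [hexpβ, map_add, map_sub, hC2, coeff_C_mul, z1, z2]
    ring
  -- the 8·x = 0 part
  set G : PowerSeries R16 := -(bD1*bT1) + β*γ - β^3 - 3*(β*γ^2) with hG
  have hGcoeff : coeff (R := R16) N G =
      -coeff (R := R16) N (bD1*bT1) + coeff (R := R16) N (β*γ) - coeff (R := R16) N (β^3)
        - 3 * coeff (R := R16) N (β*γ^2) := by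
    rw [hG]
    have hC3 : (3 : PowerSeries R16) = C (R := R16) 3 := (map_ofNat (C (R := R16)) 3).symm
    rw [map_sub, map_sub, map_add, map_neg, hC3, coeff_C_mul]
  have h8G : (8 : R16) * coeff (R := R16) N G = 0 := by
    apply eight_mul_of
    have hmapped : ρ16 (coeff (R := R16) N G) = coeff (R := (ZMod 2)) N (PowerSeries.map ρ16 G) := by
      rw [PowerSeries.coeff_map]
    rw [hmapped]
    -- identify map ρ G with char-2 series
    have comp1 : PowerSeries.map ρ16 bD1 = cD1 := by
      rw [bD1, cD1, map_comp_ps, show ρ16.comp pi16 = Int.castRingHom (ZMod 2) from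
        RingHom.ext_int _ _]
    have comp2 : PowerSeries.map ρ16 bT1 = cT1 := by
      rw [bT1, cT1, map_comp_ps, show ρ16.comp pi16 = Int.castRingHom (ZMod 2) from
        RingHom.ext_int _ _]
    have comp3 : PowerSeries.map ρ16 bD2 = cD2 := by
      rw [bD2, cD2, map_comp_ps, show ρ16.comp pi16 = Int.castRingHom (ZMod 2) from
        RingHom.ext_int _ _]
    have comp4 : PowerSeries.map ρ16 bT2 = cT2 := by
      rw [bT2, cT2, map_comp_ps, show ρ16.comp pi16 = Int.castRingHom (ZMod 2) from
        RingHom.ext_int _ _]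
    have hmapG : PowerSeries.map ρ16 G =
        -(cD1*cT1) + (cD1 - cT1)*(cD2 - cT2) - (cD1 - cT1)^3
          - 3*((cD1 - cT1)*(cD2 - cT2)^2) := by
      rw [hG, hβ, hγ]
      simp only [map_sub, map_add, map_neg, map_mul, map_pow, map_ofNat,
        comp1, comp2, comp3, comp4]
    rw [hmapG]
    -- split: = cT1 * Rser + V + 2*H
    have h2z : (2 : PowerSeries (ZMod 2)) = 0 := by
      have h1 : (2 : PowerSeries (ZMod 2)) = C (R := (ZMod 2)) 2 := (map_ofNat (C (R := (ZMod 2))) 2).symm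
      rw [h1, show (2 : ZMod 2) = 0 from by decide, map_zero]
    set V : PowerSeries (ZMod 2) := cD1*cD2 + cD1*cT2 + cT1*cT2 + cD1*(cD2*cD2)
      + cD1*(cT2*cT2) + cD1*(cD1*cD1) + cD1*(cT1*cT1) + cT1*(cT1*cT1) with hV
    have hsplit : -(cD1*cT1) + (cD1 - cT1)*(cD2 - cT2) - (cD1 - cT1)^3
          - 3*((cD1 - cT1)*(cD2 - cT2)^2)
        = cT1 * Rser + V := by
      rw [Rser, hV]
      linear_combination (cT1*cT2^2 - cT1*cD2 - 3*cT1*cD2*cT2 + cT1*cD2^2 - cD1*cT2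
        - 2*cD1*cT2^2 + 3*cD1*cD2*cT2 - 2*cD1*cD2^2 - cD1*cT1 - 2*cD1*cT1^2
        + cD1^2*cT1 - cD1^3) * h2z
    rw [hsplit, map_add, coeff_T1_Rser hN]
    -- V vanishes at N
    have hVz : coeff (R := (ZMod 2)) N V = 0 := by
      have φ2 := Int.castRingHom (ZMod 2)
      have w1 : coeff (R := (ZMod 2)) N (cD1*cD2) = 0 := Sup.coeff_eq_zero (N := N)
        ((sup_D1 _).mul (sup_D2 _)) (by rintro ⟨a,b,ha,hb,hab⟩; omega)
      have w2 : coeff (R := (ZMod 2)) N (cD1*cT2) = 0 := Sup.coeff_eq_zero (N := N)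
        ((sup_D1 _).mul (sup_T2 _)) (by rintro ⟨a,b,ha,hb,hab⟩; omega)
      have w3 : coeff (R := (ZMod 2)) N (cT1*cT2) = 0 := Sup.coeff_eq_zero (N := N)
        ((sup_T1 _).mul (sup_T2 _)) (by rintro ⟨a,b,ha,hb,hab⟩; omega)
      have w4 : coeff (R := (ZMod 2)) N (cD1*(cD2*cD2)) = 0 := Sup.coeff_eq_zero (N := N)
        ((sup_D1 _).mul ((sup_D2 _).mul (sup_D2 _)))
        (by rintro ⟨a,b,ha,⟨x,y,hx,hy,hxy⟩,hab⟩; omega)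
      have w5 : coeff (R := (ZMod 2)) N (cD1*(cT2*cT2)) = 0 := Sup.coeff_eq_zero (N := N)
        ((sup_D1 _).mul ((sup_T2 _).mul (sup_T2 _)))
        (by rintro ⟨a,b,ha,⟨x,y,hx,hy,hxy⟩,hab⟩; omega)
      have w6 : coeff (R := (ZMod 2)) N (cD1*(cD1*cD1)) = 0 := Sup.coeff_eq_zero (N := N)
        ((sup_D1 _).mul ((sup_D1 _).mul (sup_D1 _)))
        (by rintro ⟨a,b,ha,⟨x,y,hx,hy,hxy⟩,hab⟩; omega)
      have w7 : coeff (R := (ZMod 2)) N (cD1*(cT1*cT1)) = 0 := Sup.coeff_eq_zero (N := N)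
        ((sup_D1 _).mul ((sup_T1 _).mul (sup_T1 _)))
        (by rintro ⟨a,b,ha,⟨x,y,hx,hy,hxy⟩,hab⟩; omega)
      have w8 : coeff (R := (ZMod 2)) N (cT1*(cT1*cT1)) = 0 := Sup.coeff_eq_zero (N := N)
        ((sup_T1 _).mul ((sup_T1 _).mul (sup_T1 _)))
        (by rintro ⟨a,b,ha,⟨x,y,hx,hy,hxy⟩,hab⟩; omega)
      rw [hV, map_add, map_add, map_add, map_add, map_add, map_add, map_add,
        w1, w2, w3, w4, w5, w6, w7, w8]
      ring
    rw [hVz, add_zero]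
  -- assemble
  have hAcoeffN : coeff (R := R16) N Abar = ((abar (8*m+3) N : ℤ) : R16) := by
    rw [hAbar, PowerSeries.coeff_map, coeff_mk]
    rfl
  rw [hAcoeffN] at hcoeff
  rw [cone, cγ, cγ2, cβ, cβ2] at hcoeff
  -- hcoeff : (abar : R16) = 0 - 2*(-coeff bT1) - 4*0 + 4*(-2*coeff(bD1*bT1)) + 8*coeff(βγ)
  --          + 12*0 - 8*coeff β³ - 24*coeff(βγ²)
  rw [hcoeff]
  have final : (0 : R16) - 2*(-(coeff (R := R16) N bT1)) - 4*0 + 4*(-2*coeff (R := R16) N (bD1*bT1))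
      + 8*(coeff (R := R16) N (β*γ)) + 12*0 - 8*(coeff (R := R16) N (β^3)) - 24*(coeff (R := R16) N (β*γ^2))
      = 2 * coeff (R := R16) N bT1 + 8 * coeff (R := R16) N G := by
    rw [hGcoeff]
    ring
  rw [final, h8G, add_zero]
  rw [bT1, coeff_map_Tser]

end Oc

/-- Let `p ≥ 3` be a prime.  Then for all `m, α, n ≥ 0`,
`a̅_{8m+3}(8 p^(2α) n + p^(2α)) ≡ 2 t(n) (mod 16)`, where `t(n)` is the coefficient
of `qⁿ` in Ramanujan's theta function `ψ(q) = ∑_{ν≥0} q^{ν(ν+1)/2}`, i.e. `t(n) = 1`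
if `n` is a triangular number (`∃ k, k(k+1)/2 = n`, equivalently `k(k+1) = 2n`) and
`t(n) = 0` otherwise. -/
theorem overcubic_eight_congr_psi (abar : ℕ → ℕ → ℕ) (habar : IsGenOvercubic abar)
    (p : ℕ) (hp : p.Prime) (hp3 : 3 ≤ p) (m α n : ℕ) :
    (abar (8 * m + 3) (8 * p ^ (2 * α) * n + p ^ (2 * α)) : ℤ) ≡
      2 * (if ∃ k : ℕ, k * (k + 1) = 2 * n then 1 else 0) [ZMOD 16] := by
  have hoddp : Odd p := hp.odd_of_ne_two (by omega)
  have hodda : Odd (p ^ α) := hoddp.pow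
  obtain ⟨q, hq⟩ := hodda
  set d := p ^ α with hd
  have hd1 : 1 ≤ d := Nat.one_le_pow _ _ (by omega)
  have hsq : p ^ (2*α) = d^2 := by
    rw [hd, ← pow_mul, Nat.mul_comm α 2]
  have hP8 : p ^ (2*α) % 8 = 1 := by
    rw [hsq, hq]
    have e : (2*q+1)^2 = 4*(q*(q+1)) + 1 := by ring
    obtain ⟨r, hr⟩ := Nat.even_mul_succ_self q
    omega
  set N := 8 * p ^ (2*α) * n + p ^ (2*α) with hNdef
  have hN8 : N % 8 = 1 := by
    obtain ⟨r, hr⟩ : ∃ r, p ^ (2*α) = 8*r+1 := ⟨p ^ (2*α) / 8, by omega⟩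
    have : N = 8*((8*r+1)*n + r) + 1 := by rw [hNdef, hr]; ring
    omega
  have hNfac : N = d^2 * (8*n+1) := by
    rw [hNdef, hsq]; ring
  -- square transfer
  have hiff : (∃ s : ℕ, N = 1 * (2*s+1)^2) ↔ (∃ k : ℕ, k * (k + 1) = 2 * n) := by
    constructor
    · rintro ⟨s, hs⟩
      rw [one_mul] at hs
      have hdvd : d ∣ 2*s+1 := by
        have h2 : d^2 ∣ (2*s+1)^2 := ⟨8*n+1, by rw [← hs, hNfac]⟩
        exact (Nat.pow_dvd_pow_iff (by omega : 2 ≠ 0)).mp h2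
      obtain ⟨w, hw⟩ := hdvd
      have hw2 : w^2 = 8*n+1 := by
        have h3 : d^2 * w^2 = d^2 * (8*n+1) := by
          rw [← mul_pow, ← hw, ← hs, hNfac]
        exact Nat.eq_of_mul_eq_mul_left (by positivity) h3
      have hwodd : w % 2 = 1 := by
        rcases Nat.even_or_odd w with ⟨u, rfl⟩ | hwo
        · exfalso
          have e : (u+u)^2 = 4*u^2 := by ring
          omega
        · exact Nat.odd_iff.mp hwo
      obtain ⟨k, hk⟩ : ∃ k, w = 2*k+1 := ⟨w/2, by omega⟩
      refine ⟨k, ?_⟩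
      rw [hk] at hw2
      have e : (2*k+1)^2 = 4*(k*(k+1)) + 1 := by ring
      omega
    · rintro ⟨k, hk⟩
      have h81 : 8*n+1 = (2*k+1)^2 := by
        have e : (2*k+1)^2 = 4*(k*(k+1)) + 1 := by ring
        omega
      have hodddk : Odd (d * (2*k+1)) := by
        refine (hoddp.pow).mul ?_
        exact ⟨k, by omega⟩
      obtain ⟨s, hs⟩ := hodddk
      refine ⟨s, ?_⟩
      rw [one_mul, ← hs, hNfac, h81, mul_pow]
  -- conclude
  have hmc := Oc.main_coeff abar habar m N hN8
  refine (ZMod.intCast_eq_intCast_iff _ _ 16).mp ?_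
  have hgoal : (((2 * (if ∃ k : ℕ, k * (k + 1) = 2 * n then (1:ℤ) else 0)) : ℤ) : Oc.R16)
      = 2 * (if ∃ s : ℕ, N = 1 * (2*s+1)^2 then (1 : Oc.R16) else 0) := by
    rw [Int.cast_mul, apply_ite (fun z : ℤ => (z : Oc.R16)), if_congr hiff.symm rfl rfl]
    norm_num
  exact hmc.trans hgoal.symm
end
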